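/- arXiv:0710.5562 — 9 statements merged into one kernel-verified Lean document; each statement's English description precedes it below -/
import Mathlib

section
/- Let K be a non-archimedean local field with normalized Haar measure μ, X ⊆ K open, and f : X → K strictly differentiable on X with f(X) ⊆ X. If the transformation f : X → X preserves the restriction of Haar measure μ to X, then |f'(a)| ≥ 1 for every a ∈ X. -/
open Filter Metric MeasureTheory

/-- If `f` is strictly differentiable on an open subset `X` of a
non-archimedean local field, maps `X` into `X`, and preserves the restriction of the
normalized Haar measure to `X`, then `‖f'(a)‖ ≥ 1` for every `a ∈ X`. -/
theorem stmt1 {K : Type*} [NontriviallyNormedField K] [IsUltrametricDist K]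
    [CompleteSpace K] [ProperSpace K]
    [MeasurableSpace K] [BorelSpace K] (μ : Measure K) [μ.IsAddHaarMeasure]
    (hμ1 : μ (closedBall (0 : K) 1) = 1)
    (X : Set K) (hX : IsOpen X) (f : K → K) (hf : Set.MapsTo f X X)
    (D : K → K)
    (hD : ∀ a ∈ X, Filter.Tendsto (fun q : K × K => (f q.1 - f q.2) / (q.1 - q.2))
      ((nhds a ×ˢ nhds a) ⊓ Filter.principal {q : K × K | q.1 ≠ q.2}) (nhds (D a)))
    (hmp : ∀ S ⊆ X, MeasurableSet S → μ (X ∩ f ⁻¹' S) = μ S) :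
    ∀ a ∈ X, 1 ≤ ‖D a‖ := by
  intro a ha
  by_contra hlt
  push_neg at hlt
  set c : ℝ := (1 + ‖D a‖) / 2 with hc
  have hDa0 : (0:ℝ) ≤ ‖D a‖ := norm_nonneg _
  have hc0 : 0 < c := by rw [hc]; linarith
  have hc1 : c < 1 := by rw [hc]; linarith
  have hcd : ‖D a‖ < c := by rw [hc]; linarith
  have εpos : 0 < c - ‖D a‖ := by linarith
  -- eventual bound on difference quotients
  have h1 : ∀ᶠ q : K × K in nhds (a, a),
      q.1 ≠ q.2 → ‖(f q.1 - f q.2) / (q.1 - q.2) - D a‖ < c - ‖D a‖ := by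
    have h2 := (hD a ha) (Metric.ball_mem_nhds (D a) εpos)
    rw [Filter.mem_map, Filter.mem_inf_principal] at h2
    rw [nhds_prod_eq]
    filter_upwards [h2] with q hq hne
    have := hq hne
    simpa [Metric.mem_ball, dist_eq_norm] using this
  rw [Metric.eventually_nhds_iff] at h1
  obtain ⟨δ, hδ0, hδ⟩ := h1
  -- Lipschitz-type bound at a
  have key : ∀ x : K, dist x a < δ → ‖f x - f a‖ ≤ c * ‖x - a‖ := by
    intro x hx
    rcases eq_or_ne x a with rfl | hne
    · simp
    · have hd' : dist ((x, a) : K × K) (a, a) < δ := by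
        simp [Prod.dist_eq, hx, dist_self, hδ0]
      have hq := hδ hd' hne
      have hnorm : ‖(f x - f a) / (x - a)‖ < c := by
        have := norm_add_le ((f x - f a) / (x - a) - D a) (D a)
        simp only [sub_add_cancel] at this
        linarith
      have heq : f x - f a = ((f x - f a) / (x - a)) * (x - a) :=
        (div_mul_cancel₀ _ (sub_ne_zero.mpr hne)).symm
      rw [heq, norm_mul]
      exact mul_le_mul_of_nonneg_right hnorm.le (norm_nonneg _)
  -- choose a radius ρ
  obtain ⟨r1, hr1, hr1X⟩ := Metric.isOpen_iff.mp hX a ha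
  obtain ⟨r2, hr2, hr2X⟩ := Metric.isOpen_iff.mp hX (f a) (hf ha)
  set ρ : ℝ := min (min r1 r2) δ / 2 with hρ
  have hρ0 : 0 < ρ := by positivity
  have hρr1 : ρ < r1 := by
    have : min (min r1 r2) δ ≤ r1 := le_trans (min_le_left _ _) (min_le_left _ _)
    rw [hρ]; linarith
  have hρr2 : ρ < r2 := by
    have : min (min r1 r2) δ ≤ r2 := le_trans (min_le_left _ _) (min_le_right _ _)
    rw [hρ]; linarith
  have hρδ : ρ < δ := by
    have : min (min r1 r2) δ ≤ δ := min_le_right _ _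
    rw [hρ]; linarith
  -- choose x₀ of small positive norm
  obtain ⟨x₀, hx₀0, hx₀ρ⟩ := NormedField.exists_norm_lt K hρ0
  set r' : ℝ := ‖x₀‖ with hr'
  have hcr' : c * r' < r' := by
    nlinarith
  have hcr'0 : 0 < c * r' := by positivity
  -- the target small ball
  set S : Set K := closedBall (f a) (c * r') with hS
  have hSX : S ⊆ X := fun z hz => hr2X (by
    rw [Metric.mem_ball]
    calc dist z (f a) ≤ c * r' := hz
      _ < r' := hcr'
      _ < ρ := hx₀ρ
      _ < r2 := hρr2)
  have hsub : closedBall a r' ⊆ X ∩ f ⁻¹' S := by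
    intro x hx
    have hxa : dist x a ≤ r' := hx
    have hxδ : dist x a < δ := lt_of_le_of_lt hxa (lt_trans hx₀ρ hρδ)
    constructor
    · exact hr1X (by rw [Metric.mem_ball]; exact lt_of_le_of_lt hxa (lt_trans hx₀ρ hρr1))
    · show f x ∈ S
      rw [hS, Metric.mem_closedBall, dist_eq_norm]
      calc ‖f x - f a‖ ≤ c * ‖x - a‖ := key x hxδ
        _ ≤ c * r' := by
            have : ‖x - a‖ ≤ r' := by rwa [← dist_eq_norm]
            nlinarith
  -- measure chain
  have hchain : μ (closedBall a r') ≤ μ S := by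
    calc μ (closedBall a r') ≤ μ (X ∩ f ⁻¹' S) := measure_mono hsub
      _ = μ S := hmp S hSX measurableSet_closedBall
  -- translation invariance
  have trans : ∀ (b : K) (t : ℝ), μ (closedBall b t) = μ (closedBall (0:K) t) := by
    intro b t
    have hpre : (fun h : K => b + h) ⁻¹' closedBall b t = closedBall (0:K) t := by
      ext z
      simp [Metric.mem_closedBall, dist_eq_norm]
    rw [← hpre, measure_preimage_add]
  have t1 : μ (closedBall a r') = μ (closedBall (0:K) r') := trans a r'
  have t2 : μ S = μ (closedBall (0:K) (c * r')) := trans (f a) (c * r')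
  have t3 : μ (closedBall x₀ (c * r')) = μ (closedBall (0:K) (c * r')) := trans x₀ (c * r')
  set B : Set K := closedBall (0:K) (c * r') with hB
  set B' : Set K := closedBall x₀ (c * r') with hB'
  have hdisj : Disjoint B B' := by
    rw [Set.disjoint_left]
    intro z hz hz'
    rw [hB] at hz
    rw [hB'] at hz'
    have h1 : ‖z‖ ≤ c * r' := by simpa [Metric.mem_closedBall, dist_eq_norm] using hz
    have h2 : ‖z - x₀‖ ≤ c * r' := by simpa [Metric.mem_closedBall, dist_eq_norm] using hz'
    have h3 : ‖x₀‖ ≤ max ‖z‖ ‖x₀ - z‖ := by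
      simpa using IsUltrametricDist.norm_add_le_max z (x₀ - z)
    rw [norm_sub_rev] at h3
    have : r' ≤ c * r' := le_trans h3 (max_le h1 h2)
    linarith
  have hBsub : B ∪ B' ⊆ closedBall (0:K) r' := by
    intro z hz
    rcases hz with hz | hz
    · rw [hB] at hz
      have h1 : ‖z‖ ≤ c * r' := by simpa [Metric.mem_closedBall, dist_eq_norm] using hz
      simp only [Metric.mem_closedBall, dist_eq_norm, sub_zero]
      linarith
    · rw [hB'] at hz
      have h2 : ‖z - x₀‖ ≤ c * r' := by simpa [Metric.mem_closedBall, dist_eq_norm] using hz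
      have : ‖z‖ ≤ max ‖z - x₀‖ ‖x₀‖ := by
        have := IsUltrametricDist.norm_add_le_max (z - x₀) x₀
        simpa using this
      simp only [Metric.mem_closedBall, dist_eq_norm, sub_zero]
      exact le_trans this (max_le (le_of_lt (lt_of_le_of_lt h2 hcr')) le_rfl)
  have hBpos : 0 < μ B := lt_of_lt_of_le (measure_ball_pos μ 0 hcr'0)
    (measure_mono Metric.ball_subset_closedBall)
  have hBfin : μ B ≠ ⊤ := (isCompact_closedBall 0 (c * r')).measure_lt_top.ne
  have htwo : μ B + μ B ≤ μ B := by
    calc μ B + μ B = μ B + μ B' := by rw [t3]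
      _ = μ (B ∪ B') := (measure_union hdisj measurableSet_closedBall).symm
      _ ≤ μ (closedBall (0:K) r') := measure_mono hBsub
      _ = μ (closedBall a r') := t1.symm
      _ ≤ μ S := hchain
      _ = μ B := t2
  have : μ B ≤ 0 := by
    have h := htwo
    rw [show μ B = μ B + 0 by simp] at h
    nth_rewrite 1 [show (μ B + 0 : ENNReal) + (μ B + 0) = (μ B + 0) + μ B by simp] at h
    exact (ENNReal.add_le_add_iff_left (by simpa using hBfin)).mp (by simpa using htwo)
  exact absurd (le_antisymm this zero_le) (ne_of_gt hBpos)
end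

section
/- Let K be a non-archimedean local field, X ⊆ K compact-open, and T : X → X a locally scaling transformation for radius r with scaling function C (i.e., X is a finite union of r-balls and |T(x)−T(y)| = C(x)·|x−y| whenever |x−y| ≤ r, with C(x) ≥ 1). Then for every a ∈ X and every r' ≤ r in the value group, the restriction of T to B_{r'}(a) is a bijection from B_{r'}(a) onto B_{r'·C(a)}(T(a)). -/
open Metric

/-- An isometry of a compact set into itself is surjective onto the set. -/
lemma isometryOn_surjOn {α : Type*} [MetricSpace α] {s : Set α} (hs : IsCompact s)
    {f : α → α} (hmap : Set.MapsTo f s s)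
    (hiso : ∀ x ∈ s, ∀ y ∈ s, dist (f x) (f y) = dist x y) :
    Set.SurjOn f s s := by
  intro b hb
  have hit : ∀ n, f^[n] b ∈ s := fun n => Set.MapsTo.iterate hmap n hb
  have hisoIt : ∀ n, ∀ x ∈ s, ∀ y ∈ s, dist (f^[n] x) (f^[n] y) = dist x y := by
    intro n
    induction n with
    | zero => simp
    | succ n ih =>
      intro x hx y hy
      rw [Function.iterate_succ', Function.comp_apply, Function.comp_apply,
        hiso _ (Set.MapsTo.iterate hmap n hx) _ (Set.MapsTo.iterate hmap n hy), ih x hx y hy]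
  have hcont : ContinuousOn f s := by
    rw [Metric.continuousOn_iff]
    intro x hx ε hε
    exact ⟨ε, hε, fun y hy hd => by rwa [hiso y hy x hx]⟩
  have hcl : IsClosed (f '' s) := (hs.image_of_continuousOn hcont).isClosed
  have hmem : b ∈ closure (f '' s) := by
    rw [Metric.mem_closure_iff]
    intro ε hε
    obtain ⟨x, hx, φ, hφ, hconv⟩ := hs.tendsto_subseq hit
    rw [Metric.tendsto_atTop] at hconv
    obtain ⟨N, hN⟩ := hconv (ε / 2) (by linarith)
    have h1 := hN N le_rfl
    have h2 := hN (N + 1) (by omega)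
    have hlt : φ N < φ (N + 1) := hφ (Nat.lt_succ_self N)
    obtain ⟨k, hk⟩ : ∃ k, φ (N + 1) = φ N + (k + 1) := ⟨φ (N + 1) - φ N - 1, by omega⟩
    refine ⟨f^[k + 1] b, ⟨f^[k] b, hit _, (Function.iterate_succ_apply' f k b).symm⟩, ?_⟩
    have key : dist b (f^[k + 1] b) = dist (f^[φ N] b) (f^[φ (N + 1)] b) := by
      rw [hk, Function.iterate_add_apply f (φ N) (k + 1) b]
      exact (hisoIt (φ N) b hb _ (hit _)).symm
    have h1' : dist (f^[φ N] b) x < ε / 2 := by simpa using h1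
    have h2' : dist (f^[φ (N + 1)] b) x < ε / 2 := by simpa using h2
    calc dist b (f^[k + 1] b)
        = dist (f^[φ N] b) (f^[φ (N + 1)] b) := key
      _ ≤ dist (f^[φ N] b) x + dist x (f^[φ (N + 1)] b) := dist_triangle _ _ _
      _ < ε := by rw [dist_comm x]; linarith
  rw [hcl.closure_eq] at hmem
  obtain ⟨x, hxs, hxe⟩ := hmem
  exact ⟨x, hxs, hxe⟩

/-- A locally scaling transformation `T` (for radius `r`, with scaling
function `C ≥ 1`) on a compact-open subset `X` of a non-archimedean local field maps
each ball `B_{r'}(a)` (`r' ≤ r` in the value group) bijectively onto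
`B_{r'·C(a)}(T(a))`. -/
theorem stmt3 {K : Type*} [NontriviallyNormedField K] [IsUltrametricDist K]
    [CompleteSpace K] [ProperSpace K]
    (X : Set K) (hXc : IsCompact X) (hXo : IsOpen X)
    (r : ℝ) (hr : ∃ z : K, z ≠ 0 ∧ ‖z‖ = r)
    (hXr : ∀ x ∈ X, closedBall x r ⊆ X)
    (T : K → K) (hT : Set.MapsTo T X X)
    (C : K → ℝ) (hC1 : ∀ x ∈ X, 1 ≤ C x)
    (hscal : ∀ x ∈ X, ∀ y ∈ X, ‖x - y‖ ≤ r → ‖T x - T y‖ = C x * ‖x - y‖) :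
    ∀ a ∈ X, ∀ r' : ℝ, (∃ z : K, z ≠ 0 ∧ ‖z‖ = r') → r' ≤ r →
      Set.BijOn T (closedBall a r') (closedBall (T a) (r' * C a)) := by
  intro a ha r' hr' hr'r
  obtain ⟨z', hz'ne, hz'⟩ := hr'
  have hr'pos : 0 < r' := hz' ▸ norm_pos_iff.mpr hz'ne
  have hCa1 : (1 : ℝ) ≤ C a := hC1 a ha
  have hCapos : 0 < C a := lt_of_lt_of_le one_pos hCa1
  set B := closedBall a r' with hB
  have hBX : B ⊆ X := fun x hx =>
    hXr a ha (closedBall_subset_closedBall hr'r hx)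
  have hdist : ∀ x ∈ B, ∀ y ∈ B, ‖x - y‖ ≤ r' := by
    intro x hx y hy
    rw [← dist_eq_norm]
    calc dist x y ≤ max (dist x a) (dist a y) := IsUltrametricDist.dist_triangle_max x a y
      _ ≤ r' := max_le (mem_closedBall.mp hx) (by rw [dist_comm]; exact mem_closedBall.mp hy)
  have hCa : ∀ x ∈ B, ‖T x - T a‖ = C a * ‖x - a‖ := by
    intro x hx
    rw [norm_sub_rev, norm_sub_rev x a]
    exact hscal a ha x (hBX hx) (by rw [norm_sub_rev]; exact le_trans (hdist x hx a (mem_closedBall_self hr'pos.le)) hr'r)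
  have hCx : ∀ x ∈ B, x ≠ a → C x = C a := by
    intro x hx hxa
    have h1 := hCa x hx
    have h2 := hscal x (hBX hx) a ha (le_trans (hdist x hx a (mem_closedBall_self hr'pos.le)) hr'r)
    have hne : ‖x - a‖ ≠ 0 := by
      simp only [ne_eq, norm_eq_zero, sub_eq_zero]
      exact hxa
    rw [h2] at h1
    exact mul_right_cancel₀ hne h1
  have hkey : ∀ x ∈ B, ∀ y ∈ B, ‖T x - T y‖ = C a * ‖x - y‖ := by
    intro x hx y hy
    by_cases hxa : x = a
    · subst hxa
      exact hscal x (hBX hx) y (hBX hy) (le_trans (hdist x hx y hy) hr'r)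
    · rw [hscal x (hBX hx) y (hBX hy) (le_trans (hdist x hx y hy) hr'r), hCx x hx hxa]
  have hmapsB : Set.MapsTo T B (closedBall (T a) (r' * C a)) := by
    intro x hx
    rw [mem_closedBall, dist_eq_norm, hkey x hx a (mem_closedBall_self hr'pos.le), mul_comm]
    have := mem_closedBall.mp hx
    rw [dist_eq_norm] at this
    exact mul_le_mul_of_nonneg_right this hCapos.le
  have hinjB : Set.InjOn T B := by
    intro x hx y hy hxy
    have h := hkey x hx y hy
    rw [hxy, sub_self, norm_zero] at h
    have : ‖x - y‖ = 0 := by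
      rcases mul_eq_zero.mp h.symm with h' | h'
      · exact absurd h' hCapos.ne'
      · exact h'
    rwa [norm_eq_zero, sub_eq_zero] at this
  -- construct the scaling element z0 with ‖z0‖ = C a
  have hx1 : a + z' ∈ B := by
    rw [mem_closedBall, dist_eq_norm]
    simp [hz']
  have hw : ‖T (a + z') - T a‖ = C a * r' := by
    rw [hCa _ hx1]
    simp [hz']
  have hwne : T (a + z') - T a ≠ 0 := by
    intro h
    rw [h, norm_zero] at hw
    exact absurd hw.symm (by positivity)
  set z0 : K := (T (a + z') - T a) / z' with hz0
  have hz0norm : ‖z0‖ = C a := by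
    rw [hz0, norm_div, hw, hz']
    field_simp
  have hz0ne : z0 ≠ 0 := by
    intro h
    rw [h, norm_zero] at hz0norm
    exact absurd hz0norm.symm hCapos.ne'
  -- the auxiliary isometry g
  set g : K → K := fun x => a + z0⁻¹ * (T x - T a) with hg
  have hgmap : Set.MapsTo g B B := by
    intro x hx
    rw [mem_closedBall, dist_eq_norm]
    have : g x - a = z0⁻¹ * (T x - T a) := by rw [hg]; ring
    rw [this, norm_mul, norm_inv, hz0norm, hCa x hx]
    rw [← mul_assoc, inv_mul_cancel₀ hCapos.ne', one_mul]
    have := mem_closedBall.mp hx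
    rwa [dist_eq_norm] at this
  have hgiso : ∀ x ∈ B, ∀ y ∈ B, dist (g x) (g y) = dist x y := by
    intro x hx y hy
    rw [dist_eq_norm, dist_eq_norm]
    have : g x - g y = z0⁻¹ * (T x - T y) := by rw [hg]; ring
    rw [this, norm_mul, norm_inv, hz0norm, hkey x hx y hy, ← mul_assoc,
      inv_mul_cancel₀ hCapos.ne', one_mul]
  have hgsurj : Set.SurjOn g B B :=
    isometryOn_surjOn (isCompact_closedBall a r') hgmap hgiso
  refine ⟨hmapsB, hinjB, ?_⟩
  intro b hb
  have hβ : a + z0⁻¹ * (b - T a) ∈ B := by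
    rw [mem_closedBall, dist_eq_norm]
    have : a + z0⁻¹ * (b - T a) - a = z0⁻¹ * (b - T a) := by ring
    rw [this, norm_mul, norm_inv, hz0norm]
    have hbd : ‖b - T a‖ ≤ r' * C a := by
      have := mem_closedBall.mp hb
      rwa [dist_eq_norm] at this
    calc (C a)⁻¹ * ‖b - T a‖ ≤ (C a)⁻¹ * (r' * C a) :=
          mul_le_mul_of_nonneg_left hbd (by positivity)
      _ = r' := by field_simp
  obtain ⟨x, hxB, hgx⟩ := hgsurj hβ
  refine ⟨x, hxB, ?_⟩
  have : z0⁻¹ * (T x - T a) = z0⁻¹ * (b - T a) := by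
    have := hgx
    rw [hg] at this
    simpa using this
  have h2 := mul_left_cancel₀ (inv_ne_zero hz0ne) this
  have : T x = b := by linear_combination h2
  exact this
end

section
/- Let K be a non-archimedean local field, X ⊆ K compact-open, and T : X → X locally scaling for radius r with scaling function C. Let H = X/B_r(0) be the set of r-ball cosets contained in X. For i, j ∈ H, a ∈ j, and r' ≤ r in the value group, the set i ∩ T^{-1}(B_{r'}(a)) is empty if i ∩ T^{-1}(j) is empty, and otherwise is a ball of radius r'/C(i). -/
open Metric

/-- An isometry of a compact metric space into itself is surjective. -/
theorem isometry_surj_of_compact {α : Type*} [MetricSpace α] [CompactSpace α]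
    {f : α → α} (hf : Isometry f) : Function.Surjective f := by
  intro a
  by_contra ha
  have hiter : ∀ k : ℕ, Isometry (f^[k]) := by
    intro k
    induction k with
    | zero => simpa using isometry_id
    | succ n ih => rw [Function.iterate_succ]; exact ih.comp hf
  have hrc : IsCompact (Set.range f) := isCompact_range hf.continuous
  have hne : (Set.range f).Nonempty := ⟨f a, ⟨a, rfl⟩⟩
  have hpos : 0 < infDist a (Set.range f) :=
    (hrc.isClosed.notMem_iff_infDist_pos hne).mp (fun h => ha h)
  set ε := infDist a (Set.range f) with hε
  obtain ⟨L, _, φ, hφ, hlim⟩ := IsCompact.tendsto_subseq (x := fun n => f^[n] a)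
    (s := Set.univ) isCompact_univ (fun n => Set.mem_univ _)
  obtain ⟨N, hN⟩ := (Metric.tendsto_atTop.mp hlim) (ε / 2) (by linarith)
  have h1 := hN N le_rfl
  have h2 := hN (N + 1) (by omega)
  have hd : dist (f^[φ N] a) (f^[φ (N + 1)] a) < ε :=
    calc dist (f^[φ N] a) (f^[φ (N + 1)] a)
        ≤ dist (f^[φ N] a) L + dist L (f^[φ (N + 1)] a) := dist_triangle _ _ _
      _ < ε / 2 + ε / 2 := by rw [dist_comm L]; exact add_lt_add h1 h2
      _ = ε := by ring
  have hmn : φ N < φ (N + 1) := hφ (by omega)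
  set k := φ (N + 1) - φ N with hk
  have hk1 : 1 ≤ k := by omega
  have heq : f^[φ (N + 1)] a = f^[φ N] (f^[k] a) := by
    rw [← Function.iterate_add_apply]
    congr 1
    omega
  have hda : dist a (f^[k] a) < ε := by
    have := (hiter (φ N)).dist_eq a (f^[k] a)
    rw [heq] at hd
    rw [← this]
    exact hd
  have hmem : f^[k] a ∈ Set.range f := by
    obtain ⟨m, hm⟩ : ∃ m, k = m + 1 := ⟨k - 1, by omega⟩
    exact ⟨f^[m] a, by rw [hm, Function.iterate_succ_apply']⟩
  exact absurd (infDist_le_dist_of_mem hmem) (by rw [← hε]; linarith)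

/-- For a locally scaling transformation `T` for radius `r` with scaling
function `C`, and `r`-ball cosets `i = B_r(b)`, `j = B_r(c)` contained in `X`, a point
`a ∈ j`, and `r' ≤ r` in the value group: the set `i ∩ T⁻¹(B_{r'}(a))` is empty when
`i ∩ T⁻¹(j)` is empty, and otherwise is a ball of radius `r'/C(i)`. -/
theorem stmt4 {K : Type*} [NontriviallyNormedField K] [IsUltrametricDist K]
    [CompleteSpace K] [ProperSpace K]
    (X : Set K) (hXc : IsCompact X) (hXo : IsOpen X)
    (r : ℝ) (hr : ∃ z : K, z ≠ 0 ∧ ‖z‖ = r)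
    (hXr : ∀ x ∈ X, closedBall x r ⊆ X)
    (T : K → K) (hT : Set.MapsTo T X X)
    (C : K → ℝ) (hC1 : ∀ x ∈ X, 1 ≤ C x)
    (hscal : ∀ x ∈ X, ∀ y ∈ X, ‖x - y‖ ≤ r → ‖T x - T y‖ = C x * ‖x - y‖) :
    ∀ b ∈ X, ∀ c ∈ X, ∀ a ∈ closedBall c r, ∀ r' : ℝ,
      (∃ z : K, z ≠ 0 ∧ ‖z‖ = r') → r' ≤ r →
      (closedBall b r ∩ T ⁻¹' (closedBall c r) = ∅ →
        closedBall b r ∩ T ⁻¹' (closedBall a r') = ∅) ∧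
      (closedBall b r ∩ T ⁻¹' (closedBall c r) ≠ ∅ →
        ∃ y : K, closedBall b r ∩ T ⁻¹' (closedBall a r') = closedBall y (r' / C b)) := by
  intro b hb c hc a ha r' hr' hr'r
  obtain ⟨z, hz0, hzr⟩ := hr
  obtain ⟨z', hz'0, hz'r'⟩ := hr'
  have hrpos : 0 < r := hzr ▸ norm_pos_iff.mpr hz0
  have hr'pos : 0 < r' := hz'r' ▸ norm_pos_iff.mpr hz'0
  have hball : closedBall b r ⊆ X := hXr b hb
  have hmemn : ∀ (x y : K) (s : ℝ), x ∈ closedBall y s ↔ ‖x - y‖ ≤ s := by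
    intro x y s; rw [mem_closedBall, dist_eq_norm]
  -- C is constant on the ball around b
  have hCc : ∀ x ∈ closedBall b r, C x = C b := by
    intro x hx
    rcases eq_or_ne x b with rfl | hne
    · rfl
    · have hxX : x ∈ X := hball hx
      have hxb : ‖x - b‖ ≤ r := (hmemn x b r).mp hx
      have h1 := hscal x hxX b hb hxb
      have h2 := hscal b hb x hxX (by rwa [norm_sub_rev])
      rw [norm_sub_rev (T b), norm_sub_rev b] at h2
      have h3 : C x * ‖x - b‖ = C b * ‖x - b‖ := by rw [← h1, h2]
      have hne' : ‖x - b‖ ≠ 0 := by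
        simpa [sub_eq_zero] using hne
      exact mul_right_cancel₀ hne' h3
  constructor
  · intro h
    have hsub : closedBall a r' ⊆ closedBall c r := by
      intro u hu
      have h1 : dist u a ≤ r' := mem_closedBall.mp hu
      have h2 : dist a c ≤ r := mem_closedBall.mp ha
      exact mem_closedBall.mpr ((dist_triangle_max u a c).trans (max_le (h1.trans hr'r) h2))
    apply Set.eq_empty_of_subset_empty
    rw [← h]
    exact Set.inter_subset_inter_right _ (Set.preimage_mono hsub)
  · intro h
    obtain ⟨x₀, hx₀b, hx₀T⟩ := Set.nonempty_iff_ne_empty.mpr h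
    rw [Set.mem_preimage] at hx₀T
    have hCb1 : 1 ≤ C b := hC1 b hb
    have hCbpos : 0 < C b := lt_of_lt_of_le zero_lt_one hCb1
    -- an element w of norm C b
    have hy0 : b + z ∈ closedBall b r := by
      rw [hmemn]; simp [hzr]
    have hbz : ‖b - (b + z)‖ = r := by
      simpa using hzr
    have hTbz := hscal b hb (b + z) (hball hy0) (le_of_eq hbz)
    set w : K := (T b - T (b + z)) / z with hw
    have hwnorm : ‖w‖ = C b := by
      rw [hw, norm_div, hTbz, hbz, hzr]
      field_simp
    have hw0 : w ≠ 0 := norm_pos_iff.mp (hwnorm ▸ hCbpos)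
    -- the target ball S and the isometry g
    set S : Set K := closedBall (T x₀) (C b * r) with hS
    haveI : CompactSpace ↥S := isCompact_iff_compactSpace.mp (isCompact_closedBall _ _)
    have hpball : ∀ v ∈ S, x₀ + (v - T x₀) / w ∈ closedBall b r := by
      intro v hv
      have h1 : ‖(v - T x₀) / w‖ ≤ r := by
        rw [norm_div, hwnorm, div_le_iff₀ hCbpos, mul_comm]
        exact (hmemn v (T x₀) _).mp hv
      have h2 : x₀ + (v - T x₀) / w ∈ closedBall x₀ r := by
        rw [hmemn]; simpa using h1
      rw [mem_closedBall] at h2 hx₀b ⊢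
      exact (dist_triangle_max _ x₀ b).trans (max_le h2 hx₀b)
    have hpdist : ∀ v ∈ S, ‖(x₀ + (v - T x₀) / w) - x₀‖ = ‖v - T x₀‖ / C b := by
      intro v hv
      simp [norm_div, hwnorm]
    have hgmem : ∀ v ∈ S, T (x₀ + (v - T x₀) / w) ∈ S := by
      intro v hv
      have hp := hpball v hv
      have hpd := hpdist v hv
      have hpr : ‖(x₀ + (v - T x₀) / w) - x₀‖ ≤ r := by
        rw [hpd, div_le_iff₀ hCbpos, mul_comm]
        exact (hmemn v (T x₀) _).mp hv
      have := hscal _ (hball hp) x₀ (hball hx₀b) hpr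
      rw [hCc _ hp] at this
      rw [hmemn, this, hpd]
      calc C b * (‖v - T x₀‖ / C b) = ‖v - T x₀‖ := by field_simp
        _ ≤ C b * r := (hmemn v (T x₀) _).mp hv
    set g : ↥S → ↥S := fun v => ⟨T (x₀ + ((v : K) - T x₀) / w), hgmem v v.2⟩ with hg
    have hgiso : Isometry g := by
      apply Isometry.of_dist_eq
      intro v v'
      have hvv' : ‖(v : K) - (v' : K)‖ ≤ C b * r := by
        have h1 : dist (v : K) (T x₀) ≤ C b * r := mem_closedBall.mp v.2
        have h2 : dist (T x₀) (v' : K) ≤ C b * r := by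
          rw [dist_comm]; exact mem_closedBall.mp v'.2
        rw [← dist_eq_norm]
        exact (dist_triangle_max _ (T x₀) _).trans (max_le h1 h2)
      have hpp' : (x₀ + ((v : K) - T x₀) / w) - (x₀ + ((v' : K) - T x₀) / w)
          = ((v : K) - (v' : K)) / w := by ring
      have hppn : ‖(x₀ + ((v : K) - T x₀) / w) - (x₀ + ((v' : K) - T x₀) / w)‖
          = ‖(v : K) - (v' : K)‖ / C b := by
        rw [hpp', norm_div, hwnorm]
      have hppr : ‖(x₀ + ((v : K) - T x₀) / w) - (x₀ + ((v' : K) - T x₀) / w)‖ ≤ r := by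
        rw [hppn, div_le_iff₀ hCbpos, mul_comm]
        exact hvv'
      have hsc := hscal _ (hball (hpball v v.2)) _ (hball (hpball v' v'.2)) hppr
      rw [hCc _ (hpball v v.2)] at hsc
      show dist (T (x₀ + ((v : K) - T x₀) / w)) (T (x₀ + ((v' : K) - T x₀) / w))
          = dist (v : K) (v' : K)
      rw [dist_eq_norm, dist_eq_norm, hsc, hppn]
      field_simp
    have hsurj := isometry_surj_of_compact hgiso
    have haS : a ∈ S := by
      rw [hS, mem_closedBall]
      have h1 : dist a c ≤ r := mem_closedBall.mp ha
      have h2 : dist c (T x₀) ≤ r := by rw [dist_comm]; exact mem_closedBall.mp hx₀T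
      have h3 : dist a (T x₀) ≤ r := (dist_triangle_max a c (T x₀)).trans (max_le h1 h2)
      exact h3.trans (le_mul_of_one_le_left hrpos.le hCb1)
    obtain ⟨v, hv⟩ := hsurj ⟨a, haS⟩
    set y : K := x₀ + ((v : K) - T x₀) / w with hy
    have hyb : y ∈ closedBall b r := hpball v v.2
    have hTy : T y = a := congrArg Subtype.val hv
    refine ⟨y, ?_⟩
    ext x
    simp only [Set.mem_inter_iff, Set.mem_preimage]
    constructor
    · rintro ⟨hxb, hxa⟩
      have hxy : ‖x - y‖ ≤ r := by
        rw [← dist_eq_norm]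
        have h1 : dist x b ≤ r := mem_closedBall.mp hxb
        have h2 : dist b y ≤ r := by rw [dist_comm]; exact mem_closedBall.mp hyb
        exact (dist_triangle_max x b y).trans (max_le h1 h2)
      have hsc := hscal x (hball hxb) y (hball hyb) hxy
      rw [hCc x hxb, hTy] at hsc
      rw [hmemn] at hxa ⊢
      rw [le_div_iff₀ hCbpos]
      calc ‖x - y‖ * C b = C b * ‖x - y‖ := mul_comm _ _
        _ = ‖T x - a‖ := hsc.symm
        _ ≤ r' := hxa
    · intro hx
      have hxy : ‖x - y‖ ≤ r' / C b := (hmemn _ _ _).mp hx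
      have hxyr : ‖x - y‖ ≤ r := hxy.trans ((div_le_self hr'pos.le hCb1).trans hr'r)
      have hxb : x ∈ closedBall b r := by
        rw [mem_closedBall]
        have h1 : dist x y ≤ r := by rwa [dist_eq_norm]
        have h2 : dist y b ≤ r := mem_closedBall.mp hyb
        exact (dist_triangle_max x y b).trans (max_le h1 h2)
      have hsc := hscal x (hball hxb) y (hball hyb) hxyr
      rw [hCc x hxb, hTy] at hsc
      refine ⟨hxb, ?_⟩
      rw [hmemn, hsc]
      calc C b * ‖x - y‖ ≤ C b * (r' / C b) := mul_le_mul_of_nonneg_left hxy hCbpos.le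
        _ = r' := by field_simp
end

section
/- Let K be a non-archimedean local field with normalized Haar measure μ, X ⊆ K compact-open, T : X → X locally scaling for radius r, H = X/B_r(0), and A : H×H → R_{≥0} the associated transition matrix defined by A(i,j) = 0 if i ∩ T^{-1}(j) = ∅ and A(i,j) = μ(B_{1/C(i)}(0)) otherwise. Then A is a stochastic matrix: for each i ∈ H, the sum over j ∈ H of A(i,j) equals 1. -/
open Metric MeasureTheory
open scoped Classical

lemma aux_haar_mul {K : Type*} [NontriviallyNormedField K] [ProperSpace K]
    [MeasurableSpace K] [BorelSpace K] (μ : Measure K) [μ.IsAddHaarMeasure]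
    (hμ1 : μ (closedBall (0 : K) 1) = 1) {a : K} (ha : a ≠ 0) (s : ℝ) :
    μ (closedBall (0 : K) (‖a‖ * s)) = μ (closedBall (0 : K) ‖a‖) * μ (closedBall (0 : K) s) := by
  let e : K ≃+ K :=
    { toFun := fun x => a⁻¹ * x
      invFun := fun x => a * x
      left_inv := fun x => by field_simp
      right_inv := fun x => by field_simp
      map_add' := fun x y => mul_add _ _ _ }
  have hinst : (μ.map (fun x : K => a⁻¹ * x)).IsAddHaarMeasure :=
    e.isAddHaarMeasure_map μ (continuous_mul_left _) (continuous_mul_left _)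
  have key : ∀ t : ℝ, (μ.map (fun x : K => a⁻¹ * x)) (closedBall (0 : K) t)
      = μ (closedBall (0 : K) (‖a‖ * t)) := by
    intro t
    rw [Measure.map_apply (measurable_const_mul _) measurableSet_closedBall]
    have hpre : (fun x : K => a⁻¹ * x) ⁻¹' closedBall (0 : K) t
        = closedBall (0 : K) (‖a‖ * t) := by
      ext x
      simp only [Set.mem_preimage, mem_closedBall, dist_zero_right, norm_mul, norm_inv]
      rw [inv_mul_le_iff₀ (norm_pos_iff.mpr ha)]
    rw [hpre]
  have huniq := Measure.isAddLeftInvariant_eq_smul (μ.map (fun x : K => a⁻¹ * x)) μ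
  have h1 := key 1
  have hs := key s
  rw [huniq] at h1 hs
  simp only [Measure.smul_apply, ENNReal.smul_def, smul_eq_mul, mul_one] at h1 hs
  rw [hμ1, mul_one] at h1
  rw [← hs, h1]

/-- The associated transition matrix of a locally scaling transformation
is a stochastic matrix: every row sums to 1.  Here `reps` is a set of representatives
for the `r`-ball cosets `H = X/B_r(0)` making up the compact-open set `X`. -/
theorem stmt5 {K : Type*} [NontriviallyNormedField K] [IsUltrametricDist K]
    [CompleteSpace K] [ProperSpace K]
    [MeasurableSpace K] [BorelSpace K] (μ : Measure K) [μ.IsAddHaarMeasure]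
    (hμ1 : μ (closedBall (0 : K) 1) = 1)
    (X : Set K) (r : ℝ) (hr : ∃ z : K, z ≠ 0 ∧ ‖z‖ = r)
    (reps : Finset K) (hcover : X = ⋃ b ∈ reps, closedBall b r)
    (hdisj : ∀ b ∈ reps, ∀ b' ∈ reps, b ≠ b' → r < ‖b - b'‖)
    (T : K → K) (hT : Set.MapsTo T X X)
    (C : K → ℝ) (hC1 : ∀ x ∈ X, 1 ≤ C x)
    (hscal : ∀ x ∈ X, ∀ y ∈ X, ‖x - y‖ ≤ r → ‖T x - T y‖ = C x * ‖x - y‖)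
    (A : K → K → ℝ)
    (hA : ∀ i j : K, A i j =
      if closedBall i r ∩ T ⁻¹' (closedBall j r) = ∅ then 0
      else (μ (closedBall (0 : K) (1 / C i))).toReal) :
    ∀ i ∈ reps, ∑ j ∈ reps, A i j = 1 := by
  intro i hi
  obtain ⟨z, hz0, hzr⟩ := hr
  have hr0 : 0 < r := hzr ▸ norm_pos_iff.mpr hz0
  have hball_sub : closedBall i r ⊆ X := by
    intro x hx
    rw [hcover]
    exact Set.mem_biUnion hi hx
  have hiX : i ∈ X := hball_sub (mem_closedBall_self hr0.le)
  set c := C i with hcdef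
  have hc1 : 1 ≤ c := hC1 i hiX
  have hc0 : 0 < c := zero_lt_one.trans_le hc1
  -- C is constant on the ball around i
  have hCx : ∀ x ∈ closedBall i r, C x = c := by
    intro x hx
    rcases eq_or_ne x i with h | h
    · rw [h]
    · have hxX := hball_sub hx
      have hd : ‖x - i‖ ≤ r := by rwa [mem_closedBall, dist_eq_norm] at hx
      have h1 := hscal x hxX i hiX hd
      have h2 := hscal i hiX x hxX (by rwa [norm_sub_rev])
      have hne : ‖x - i‖ ≠ 0 := norm_ne_zero_iff.mpr (sub_ne_zero.mpr h)
      have : C x * ‖x - i‖ = c * ‖x - i‖ := by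
        rw [← h1, norm_sub_rev (T x), h2, norm_sub_rev i]
      exact mul_right_cancel₀ hne this
  -- find a field element u with ‖u‖ = c
  have hizball : i + z ∈ closedBall i r := by
    simp [mem_closedBall, dist_eq_norm, hzr]
  have hizX := hball_sub hizball
  have hTiz := hscal i hiX (i + z) hizX (by simp [norm_sub_rev, hzr])
  have hiz : ‖i - (i + z)‖ = r := by
    rw [norm_sub_rev]; simp [hzr]
  set w := T i - T (i + z) with hwdef
  have hwnorm : ‖w‖ = c * r := by rw [hwdef, hTiz, hiz]
  have hw0 : w ≠ 0 := by
    intro h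
    rw [h, norm_zero] at hwnorm
    exact absurd hwnorm.symm (ne_of_gt (mul_pos hc0 hr0))
  set u := w / z with hudef
  have hu0 : u ≠ 0 := div_ne_zero hw0 hz0
  have hunorm : ‖u‖ = c := by
    rw [hudef, norm_div, hwnorm, hzr, mul_div_assoc, div_self hr0.ne', mul_one]
  -- the slice sets
  set S : K → Set K := fun j => closedBall i r ∩ T ⁻¹' closedBall j r with hSdef
  have hS : ∀ j, ∀ x ∈ S j, S j = closedBall x (r / c) := by
    intro j x hx
    obtain ⟨hxball, hTx⟩ := hx
    have hxX := hball_sub hxball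
    ext y
    constructor
    · rintro ⟨hyball, hTy⟩
      have hyX := hball_sub hyball
      have hxy : ‖x - y‖ ≤ r := by
        rw [← dist_eq_norm]
        exact le_trans (IsUltrametricDist.dist_triangle_max x i y)
          (max_le (mem_closedBall.mp hxball) (dist_comm i y ▸ mem_closedBall.mp hyball))
      have hsc := hscal x hxX y hyX hxy
      rw [hCx x hxball] at hsc
      have hTle : ‖T x - T y‖ ≤ r := by
        rw [← dist_eq_norm]
        exact le_trans (IsUltrametricDist.dist_triangle_max (T x) j (T y))
          (max_le (mem_closedBall.mp hTx) (dist_comm j (T y) ▸ mem_closedBall.mp hTy))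
      rw [mem_closedBall, dist_eq_norm, norm_sub_rev]
      rw [hsc] at hTle
      exact (le_div_iff₀' hc0).mpr hTle
    · intro hy
      have hyx : ‖y - x‖ ≤ r / c := by rwa [mem_closedBall, dist_eq_norm] at hy
      have hyxr : ‖y - x‖ ≤ r := le_trans hyx (div_le_self hr0.le hc1)
      have hyball : y ∈ closedBall i r := by
        rw [mem_closedBall]
        refine le_trans (IsUltrametricDist.dist_triangle_max y x i)
          (max_le ?_ (mem_closedBall.mp hxball))
        rwa [dist_eq_norm]
      have hyX := hball_sub hyball
      have hsc := hscal y hyX x hxX hyxr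
      rw [hCx y hyball] at hsc
      have hTyx : ‖T y - T x‖ ≤ r := by
        rw [hsc]
        calc c * ‖y - x‖ ≤ c * (r / c) := by
              exact mul_le_mul_of_nonneg_left hyx hc0.le
          _ = r := mul_div_cancel₀ r hc0.ne'
      refine ⟨hyball, ?_⟩
      rw [Set.mem_preimage, mem_closedBall]
      refine le_trans (IsUltrametricDist.dist_triangle_max (T y) (T x) j)
        (max_le ?_ (mem_closedBall.mp hTx))
      rwa [dist_eq_norm]
  have hSmeas : ∀ j, MeasurableSet (S j) := by
    intro j
    rcases Set.eq_empty_or_nonempty (S j) with h | ⟨x, hx⟩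
    · rw [h]; exact MeasurableSet.empty
    · rw [hS j x hx]; exact measurableSet_closedBall
  have hSdisjoint : (reps : Set K).PairwiseDisjoint S := by
    intro j hj j' hj' hne
    refine Set.disjoint_left.mpr fun y hy hy' => ?_
    have h1 : dist j (T y) ≤ r := by
      rw [dist_comm]; exact mem_closedBall.mp hy.2
    have h2 : dist (T y) j' ≤ r := mem_closedBall.mp hy'.2
    have : dist j j' ≤ r :=
      le_trans (IsUltrametricDist.dist_triangle_max j (T y) j') (max_le h1 h2)
    rw [dist_eq_norm] at this
    exact absurd this (not_le.mpr (hdisj j hj j' hj' hne))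
  have hUnion : ⋃ j ∈ reps, S j = closedBall i r := by
    apply Set.Subset.antisymm
    · exact Set.iUnion₂_subset fun j hj => Set.inter_subset_left
    · intro x hx
      have hTx : T x ∈ X := hT (hball_sub hx)
      rw [hcover] at hTx
      obtain ⟨j, hj, hxj⟩ := Set.mem_iUnion₂.mp hTx
      exact Set.mem_iUnion₂.mpr ⟨j, hj, hx, hxj⟩
  have hsum : ∑ j ∈ reps, μ (S j) = μ (closedBall (0 : K) r) := by
    rw [← measure_biUnion_finset hSdisjoint (fun j _ => hSmeas j), hUnion,
      μ.addHaar_closedBall_center]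
  -- count the nonempty slices
  set N := (reps.filter fun j => S j ≠ ∅).card with hNdef
  have hSmeasure : ∀ j, μ (S j) = if S j = ∅ then 0 else μ (closedBall (0 : K) (r / c)) := by
    intro j
    split_ifs with h
    · rw [h]; exact measure_empty
    · obtain ⟨x, hx⟩ := Set.nonempty_iff_ne_empty.mpr h
      rw [hS j x hx, μ.addHaar_closedBall_center]
  have hsumN : (N : ENNReal) * μ (closedBall (0 : K) (r / c)) = μ (closedBall (0 : K) r) := by
    rw [← hsum]
    rw [Finset.sum_congr rfl fun j _ => hSmeasure j]
    rw [Finset.sum_ite, Finset.sum_const_zero, zero_add, Finset.sum_const, nsmul_eq_mul]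
  -- multiplicativity of ball measures
  have hmul : μ (closedBall (0 : K) (r / c))
      = μ (closedBall (0 : K) r) * μ (closedBall (0 : K) (1 / c)) := by
    have h := aux_haar_mul μ hμ1 hz0 (1 / c)
    rw [hzr] at h
    have : r / c = r * (1 / c) := by ring
    rw [this, h]
  have hrne : μ (closedBall (0 : K) r) ≠ 0 :=
    (measure_closedBall_pos μ (0 : K) hr0).ne'
  have hrfin : μ (closedBall (0 : K) r) ≠ ⊤ :=
    (isCompact_closedBall (0 : K) r).measure_lt_top.ne
  have hkey : (N : ENNReal) * μ (closedBall (0 : K) (1 / c)) = 1 := by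
    have := hsumN
    rw [hmul] at this
    have h2 : μ (closedBall (0 : K) r) * ((N : ENNReal) * μ (closedBall (0 : K) (1 / c)))
        = μ (closedBall (0 : K) r) * 1 := by
      calc μ (closedBall (0 : K) r) * ((N : ENNReal) * μ (closedBall (0 : K) (1 / c)))
          = (N : ENNReal) * (μ (closedBall (0 : K) r) * μ (closedBall (0 : K) (1 / c))) := by
            ring
        _ = μ (closedBall (0 : K) r) := this
        _ = μ (closedBall (0 : K) r) * 1 := (mul_one _).symm
    exact (ENNReal.mul_right_inj hrne hrfin).mp h2
  -- conclude
  have hArw : ∀ j, A i j = if S j = ∅ then 0 else (μ (closedBall (0 : K) (1 / c))).toReal := by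
    intro j
    rw [hA i j]
  have hsumA : ∑ j ∈ reps, A i j = (N : ℝ) * (μ (closedBall (0 : K) (1 / c))).toReal := by
    rw [Finset.sum_congr rfl fun j _ => hArw j]
    rw [Finset.sum_ite, Finset.sum_const_zero, zero_add, Finset.sum_const, nsmul_eq_mul]
  rw [hsumA]
  have hfin : μ (closedBall (0 : K) (1 / c)) ≠ ⊤ :=
    (isCompact_closedBall (0 : K) (1 / c)).measure_lt_top.ne
  have : ((N : ENNReal) * μ (closedBall (0 : K) (1 / c))).toReal = 1 := by
    rw [hkey]; simp
  rw [ENNReal.toReal_mul, ENNReal.toReal_natCast] at this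
  exact this
end

section
/- Let K, X, T, r, H, A be as follows: T : X → X a locally scaling transformation for radius r on compact-open X ⊆ K with associated transition matrix A on H = X/B_r(0). Then T is measure-preserving (for the restriction of Haar measure to X) if and only if every column of A sums to 1, i.e., for each j ∈ H, the sum over i ∈ H of A(i,j) equals 1. -/
set_option linter.unusedSectionVars false

open Metric MeasureTheory Filter Set
open scoped ENNReal NNReal

section Aux
variable {K : Type*} [NontriviallyNormedField K] [IsUltrametricDist K]
    [CompleteSpace K] [ProperSpace K]
    [MeasurableSpace K] [BorelSpace K] (μ : Measure K) [μ.IsAddHaarMeasure]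

theorem stmt6_ball_translate (a : K) (t : ℝ) :
    μ (closedBall a t) = μ (closedBall (0 : K) t) := by
  have h : (fun x => a + x) ⁻¹' (closedBall a t) = closedBall (0 : K) t := by
    ext x; simp [dist_eq_norm]
  rw [← h, measure_preimage_add]

theorem stmt6_haar_scale (hμ1 : μ (closedBall (0 : K) 1) = 1)
    (u : K) (hu : u ≠ 0) (E : Set K) (hE : MeasurableSet E) :
    μ ((fun x => u * x) ⁻¹' E) = μ (closedBall (0 : K) ‖u‖⁻¹) * μ E := by
  classical
  set e : K ≃+ K := AddAut.mulLeft (Units.mk0 u hu)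
  have he : ⇑e = fun x => u * x := rfl
  have hcont : Continuous e := by rw [he]; exact continuous_const.mul continuous_id
  have hcont' : Continuous e.symm := by
    have : ⇑e.symm = fun x => u⁻¹ * x := rfl
    rw [this]; exact continuous_const.mul continuous_id
  set ν : Measure K := μ.map e with hν
  have hHaar : ν.IsAddHaarMeasure := e.isAddHaarMeasure_map μ hcont hcont'
  have huniq : ν = ν.addHaarScalarFactor μ • μ :=
    MeasureTheory.Measure.isAddLeftInvariant_eq_smul ν μ
  have hemeas : Measurable e := hcont.measurable
  have happ : ∀ F : Set K, MeasurableSet F → ν F = μ ((fun x => u * x) ⁻¹' F) := by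
    intro F hF
    rw [hν, Measure.map_apply hemeas hF, he]
  have hBpre : (fun x => u * x) ⁻¹' (closedBall (0:K) 1) = closedBall (0:K) ‖u‖⁻¹ := by
    ext x
    simp only [mem_preimage, mem_closedBall, dist_zero_right, norm_mul]
    rw [← le_div_iff₀' (norm_pos_iff.mpr hu), one_div]
  have hc : (ν.addHaarScalarFactor μ : ℝ≥0∞) = μ (closedBall (0:K) ‖u‖⁻¹) := by
    have h1 : ν (closedBall (0:K) 1) = μ (closedBall (0:K) ‖u‖⁻¹) := by
      rw [happ _ measurableSet_closedBall, hBpre]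
    have h2 : ν (closedBall (0:K) 1) = (ν.addHaarScalarFactor μ : ℝ≥0∞) * μ (closedBall (0:K) 1) := by
      conv_lhs => rw [huniq]
      rw [Measure.smul_apply, ENNReal.smul_def, smul_eq_mul]
    rw [h1, hμ1, mul_one] at h2; exact h2.symm
  have h3 : μ ((fun x => u * x) ⁻¹' E) = (ν.addHaarScalarFactor μ : ℝ≥0∞) * μ E := by
    rw [← happ E hE]
    conv_lhs => rw [huniq]
    rw [Measure.smul_apply, ENNReal.smul_def, smul_eq_mul]
  rw [h3, hc]

theorem stmt6_haar_mul (hμ1 : μ (closedBall (0 : K) 1) = 1)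
    (w : K) (hw : w ≠ 0) (t : ℝ) :
    μ (closedBall (0 : K) (t * ‖w‖)) = μ (closedBall (0 : K) ‖w‖) * μ (closedBall (0 : K) t) := by
  have h := stmt6_haar_scale μ hμ1 w⁻¹ (inv_ne_zero hw) (closedBall 0 t) measurableSet_closedBall
  have hpre : (fun x => w⁻¹ * x) ⁻¹' (closedBall (0:K) t) = closedBall (0:K) (t * ‖w‖) := by
    ext x
    simp only [mem_preimage, mem_closedBall, dist_zero_right, norm_mul, norm_inv]
    rw [inv_mul_le_iff₀ (norm_pos_iff.mpr hw), mul_comm]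
  rw [hpre] at h
  rw [h, norm_inv, inv_inv]

end Aux



theorem stmt6_disjointify {K : Type*} [MetricSpace K] [IsUltrametricDist K]
    (s : ℝ) (hs : 0 < s) (F₀ : Finset K) :
    ∃ F : Finset K, F ⊆ F₀ ∧ (⋃ a ∈ F, closedBall a s) = (⋃ a ∈ F₀, closedBall a s) ∧
      (F : Set K).Pairwise fun a b => Disjoint (closedBall a s) (closedBall b s) := by
  classical
  induction F₀ using Finset.induction with
  | empty => exact ⟨∅, Finset.Subset.refl _, rfl, by simp [Set.Pairwise]⟩
  | @insert a F₀ ha ih =>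
    obtain ⟨F, hF, hun, hdisj⟩ := ih
    by_cases hc : ∃ b ∈ F, ¬ Disjoint (closedBall a s) (closedBall b s)
    · obtain ⟨b, hb, hnd⟩ := hc
      have heq : closedBall a s = closedBall b s := by
        rcases IsUltrametricDist.closedBall_eq_or_disjoint a b s with h | h
        · exact h
        · exact absurd h hnd
      refine ⟨F, hF.trans (Finset.subset_insert a F₀), ?_, hdisj⟩
      rw [Finset.set_biUnion_insert, ← hun, heq]
      exact (Set.union_eq_self_of_subset_left (Set.subset_biUnion_of_mem hb)).symm
    · push_neg at hc
      have haF : a ∉ F := by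
        intro haF
        exact Set.not_disjoint_iff.mpr
          ⟨a, mem_closedBall_self hs.le, mem_closedBall_self hs.le⟩ (hc a haF)
      refine ⟨insert a F, Finset.insert_subset_insert a hF, ?_, ?_⟩
      · rw [Finset.set_biUnion_insert, Finset.set_biUnion_insert, hun]
      · rw [Finset.coe_insert]
        exact hdisj.insert (fun b hb _ => ⟨hc b hb, (hc b hb).symm⟩)



theorem stmt6_ball_sub {K : Type*} [MetricSpace K] [IsUltrametricDist K]
    {j a : K} {r s : ℝ} (hsr : s ≤ r) (ha : a ∈ closedBall j r) :
    closedBall a s ⊆ closedBall j r := by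
  intro y hy
  have := IsUltrametricDist.dist_triangle_max y a j
  rw [mem_closedBall] at *
  exact le_trans this (max_le (hy.trans hsr) ha)

theorem stmt6_partition {K : Type*} [MetricSpace K] [IsUltrametricDist K] [ProperSpace K]
    (j : K) (r s : ℝ) (hs : 0 < s) (hsr : s ≤ r)
    (hdisjify : ∀ (F₀ : Finset K),
      ∃ F : Finset K, F ⊆ F₀ ∧ (⋃ a ∈ F, closedBall a s) = (⋃ a ∈ F₀, closedBall a s) ∧
      (F : Set K).Pairwise fun a b => Disjoint (closedBall a s) (closedBall b s)) :
    ∃ F : Finset K, (↑F : Set K) ⊆ closedBall j r ∧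
      closedBall j r = (⋃ a ∈ F, closedBall a s) ∧
      (F : Set K).Pairwise fun a b => Disjoint (closedBall a s) (closedBall b s) := by
  classical
  have hcov : closedBall j r ⊆ ⋃ x ∈ closedBall j r, closedBall x s :=
    fun x hx => Set.mem_biUnion hx (mem_closedBall_self hs.le)
  obtain ⟨b', hb'sub, hb'fin, hb'cov⟩ := (isCompact_closedBall j r).elim_finite_subcover_image
    (fun x _ => IsUltrametricDist.isOpen_closedBall x hs.ne') hcov
  obtain ⟨F, hFsub, hFun, hFdisj⟩ := hdisjify hb'fin.toFinset
  have htf : (⋃ a ∈ hb'fin.toFinset, closedBall a s) = ⋃ a ∈ b', closedBall a s := by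
    ext x; simp [Set.Finite.mem_toFinset]
  have hFb' : ∀ a ∈ F, a ∈ b' := fun a haF => by
    have := hFsub haF; rwa [Set.Finite.mem_toFinset] at this
  refine ⟨F, fun a haF => hb'sub (hFb' a haF), ?_, hFdisj⟩
  apply Set.Subset.antisymm
  · intro x hx
    have := hb'cov hx
    rw [← htf, ← hFun] at this
    exact this
  · intro x hx
    obtain ⟨E, ⟨a, rfl⟩, hxE⟩ := hx
    simp only [Set.mem_iUnion, exists_prop] at hxE
    obtain ⟨haF, hxa⟩ := hxE
    exact stmt6_ball_sub hsr (hb'sub (hFb' a haF)) hxa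

/-- A locally scaling transformation `T` on a compact-open `X` is
measure-preserving (for the restriction of Haar measure to `X`) if and only if every
column of its associated transition matrix sums to 1. -/
theorem stmt6 {K : Type*} [NontriviallyNormedField K] [IsUltrametricDist K]
    [CompleteSpace K] [ProperSpace K]
    [MeasurableSpace K] [BorelSpace K] (μ : Measure K) [μ.IsAddHaarMeasure]
    (hμ1 : μ (closedBall (0 : K) 1) = 1)
    (X : Set K) (r : ℝ) (hr : ∃ z : K, z ≠ 0 ∧ ‖z‖ = r)
    (reps : Finset K) (hcover : X = ⋃ b ∈ reps, closedBall b r)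
    (hdisj : ∀ b ∈ reps, ∀ b' ∈ reps, b ≠ b' → r < ‖b - b'‖)
    (T : K → K) (hT : Set.MapsTo T X X)
    (C : K → ℝ) (hC1 : ∀ x ∈ X, 1 ≤ C x)
    (hscal : ∀ x ∈ X, ∀ y ∈ X, ‖x - y‖ ≤ r → ‖T x - T y‖ = C x * ‖x - y‖)
    (A : K → K → ℝ)
    (hA : ∀ i j : K, A i j =
      (μ (closedBall i r ∩ T ⁻¹' (closedBall j r))).toReal
        / (μ (closedBall (0 : K) r)).toReal) :
    (∀ S ⊆ X, MeasurableSet S → μ (X ∩ T ⁻¹' S) = μ S) ↔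
      (∀ j ∈ reps, ∑ i ∈ reps, A i j = 1) := by
  classical
  obtain ⟨z, hz0, hzr⟩ := hr
  have hr0 : 0 < r := hzr ▸ norm_pos_iff.mpr hz0
  have hBsub : ∀ i ∈ reps, closedBall i r ⊆ X := fun i hi => by
    rw [hcover]; exact fun x hx => Set.mem_biUnion hi hx
  have hXmem : ∀ x ∈ X, ∃ i ∈ reps, x ∈ closedBall i r := by
    intro x hx; rw [hcover] at hx; simpa using hx
  have hdisjB : ∀ i ∈ reps, ∀ i' ∈ reps, i ≠ i' → Disjoint (closedBall i r) (closedBall i' r) := by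
    intro i hi i' hi' hne
    rw [Set.disjoint_left]
    intro x hxi hxi'
    have h := IsUltrametricDist.dist_triangle_max i x i'
    rw [mem_closedBall] at hxi hxi'
    rw [dist_comm] at hxi
    have hle : dist i i' ≤ r := le_trans h (max_le hxi hxi')
    rw [dist_eq_norm] at hle
    exact absurd hle (not_le.mpr (hdisj i hi i' hi' hne))
  have hCge1 : ∀ i ∈ reps, 1 ≤ C i := fun i hi =>
    hC1 i (hBsub i hi (mem_closedBall_self hr0.le))
  have hCpos : ∀ i ∈ reps, 0 < C i := fun i hi => lt_of_lt_of_le one_pos (hCge1 i hi)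
  have hCconst : ∀ i ∈ reps, ∀ x ∈ closedBall i r, ∀ y ∈ closedBall i r,
      ‖T x - T y‖ = C i * ‖x - y‖ := by
    intro i hi x hx y hy
    have hxX := hBsub i hi hx
    have hyX := hBsub i hi hy
    have hiX := hBsub i hi (mem_closedBall_self hr0.le)
    have hxy : ‖x - y‖ ≤ r := by
      rw [← dist_eq_norm]
      refine le_trans (IsUltrametricDist.dist_triangle_max x i y) (max_le (mem_closedBall.mp hx) ?_)
      rw [dist_comm]; exact mem_closedBall.mp hy
    by_cases hxi : x = i
    · subst hxi; exact hscal x hxX y hyX hxy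
    · have h1 := hscal x hxX i hiX (by rw [← dist_eq_norm]; exact mem_closedBall.mp hx)
      have h2 := hscal i hiX x hxX (by rw [← dist_eq_norm, dist_comm]; exact mem_closedBall.mp hx)
      have hxinorm : ‖x - i‖ ≠ 0 := by
        simp only [ne_eq, norm_eq_zero, sub_eq_zero]; exact hxi
      have hCeq : C x = C i := by
        have he : C x * ‖x - i‖ = C i * ‖x - i‖ := by
          rw [← h1, norm_sub_rev (T x) (T i), h2, norm_sub_rev i x]
        exact mul_right_cancel₀ hxinorm he
      rw [hscal x hxX y hyX hxy, hCeq]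
  have hCnorm : ∀ i ∈ reps, ∃ u : K, u ≠ 0 ∧ ‖u‖ = C i := by
    intro i hi
    have hiX := hBsub i hi (mem_closedBall_self hr0.le)
    have hizX : i + z ∈ X := hBsub i hi (by
      rw [mem_closedBall, dist_eq_norm]; simp [hzr])
    have hnorm : ‖i - (i + z)‖ = r := by
      have : i - (i + z) = -z := by ring
      rw [this, norm_neg, hzr]
    have h := hscal i hiX (i + z) hizX (le_of_eq hnorm)
    have hval : ‖(T i - T (i + z)) * z⁻¹‖ = C i := by
      rw [norm_mul, norm_inv, h, hnorm, hzr, mul_assoc, mul_inv_cancel₀ hr0.ne', mul_one]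
    exact ⟨_, norm_pos_iff.mp (by rw [hval]; exact hCpos i hi), hval⟩
  have hPB : ∀ i ∈ reps, ∀ (a : K) (s : ℝ), 0 < s → s ≤ r → ∀ x ∈ closedBall i r,
      T x ∈ closedBall a s →
      closedBall i r ∩ T ⁻¹' (closedBall a s) = closedBall x (s / C i) := by
    intro i hi a s hs hsr x hx hTx
    have hC := hCpos i hi
    have hsc : s / C i ≤ r := le_trans (div_le_self hs.le (hCge1 i hi)) hsr
    ext y
    simp only [Set.mem_inter_iff, Set.mem_preimage, mem_closedBall]
    constructor
    · rintro ⟨hyB, hTy⟩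
      have h1 : dist (T y) (T x) ≤ s :=
        le_trans (IsUltrametricDist.dist_triangle_max (T y) a (T x))
          (max_le hTy (by rw [dist_comm]; exact mem_closedBall.mp hTx))
      have h2 : ‖T y - T x‖ = C i * ‖y - x‖ := hCconst i hi y hyB x hx
      rw [dist_eq_norm, h2] at h1
      rw [dist_eq_norm]
      exact (le_div_iff₀' hC).mpr h1
    · intro hyx
      have hyB : y ∈ closedBall i r := stmt6_ball_sub hsc hx (mem_closedBall.mpr hyx)
      refine ⟨hyB, ?_⟩
      have h2 : ‖T y - T x‖ = C i * ‖y - x‖ := hCconst i hi y hyB x hx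
      have h3 : ‖T y - T x‖ ≤ s := by
        rw [h2]
        calc C i * ‖y - x‖ ≤ C i * (s / C i) := by
              refine mul_le_mul_of_nonneg_left ?_ hC.le
              rw [← dist_eq_norm]; exact hyx
          _ = s := by rw [mul_comm, div_mul_cancel₀ _ hC.ne']
      refine le_trans (IsUltrametricDist.dist_triangle_max (T y) (T x) a) (max_le ?_ (mem_closedBall.mp hTx))
      rw [dist_eq_norm]; exact h3
  have hmeasB : ∀ i ∈ reps, ∀ (a : K) (s : ℝ), 0 < s → s ≤ r →
      MeasurableSet (closedBall i r ∩ T ⁻¹' (closedBall a s)) := by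
    intro i hi a s hs hsr
    rcases Set.eq_empty_or_nonempty (closedBall i r ∩ T ⁻¹' (closedBall a s)) with h | ⟨x, hx, hTx⟩
    · rw [h]; exact MeasurableSet.empty
    · rw [hPB i hi a s hs hsr x hx hTx]; exact measurableSet_closedBall
  have hsplit : ∀ S : Set K, X ∩ T ⁻¹' S = ⋃ i ∈ reps, (closedBall i r ∩ T ⁻¹' S) := by
    intro S; rw [hcover, Set.iUnion₂_inter]
  have hsum : ∀ (a : K) (s : ℝ), 0 < s → s ≤ r →
      μ (X ∩ T ⁻¹' closedBall a s) = ∑ i ∈ reps, μ (closedBall i r ∩ T ⁻¹' closedBall a s) := by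
    intro a s hs hsr
    rw [hsplit]
    refine measure_biUnion_finset ?_ (fun i hi => hmeasB i hi a s hs hsr)
    intro i hi i' hi' hne
    exact (hdisjB i hi i' hi' hne).mono Set.inter_subset_left Set.inter_subset_left
  have hρfin : ∀ t : ℝ, μ (closedBall (0:K) t) ≠ ∞ :=
    fun t => (isCompact_closedBall _ _).measure_lt_top.ne
  have hρpos : ∀ t : ℝ, 0 < t → μ (closedBall (0:K) t) ≠ 0 := fun t ht =>
    (lt_of_lt_of_le (measure_ball_pos μ 0 ht) (measure_mono ball_subset_closedBall)).ne'
  have hXfin : μ X ≠ ∞ := by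
    have h1 : μ X ≤ ∑ i ∈ reps, μ (closedBall i r) := by
      rw [hcover]; exact measure_biUnion_finset_le reps _
    exact (lt_of_le_of_lt h1 (ENNReal.sum_lt_top.mpr
      (fun i _ => (isCompact_closedBall _ _).measure_lt_top))).ne
  have hpiece_fin : ∀ (i : K) (S : Set K), μ (closedBall i r ∩ T ⁻¹' S) ≠ ∞ := fun i S =>
    (lt_of_le_of_lt (measure_mono Set.inter_subset_left)
      (isCompact_closedBall _ _).measure_lt_top).ne
  have hXTfin : ∀ S : Set K, μ (X ∩ T ⁻¹' S) ≠ ∞ := fun S =>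
    (lt_of_le_of_lt (measure_mono Set.inter_subset_left) hXfin.lt_top).ne
  have hAsum : ∀ j ∈ reps, ((∑ i ∈ reps, A i j = 1) ↔
      μ (X ∩ T ⁻¹' closedBall j r) = μ (closedBall (0:K) r)) := by
    intro j hj
    have hd : (μ (closedBall (0:K) r)).toReal ≠ 0 :=
      (ENNReal.toReal_pos (hρpos r hr0) (hρfin r)).ne'
    have h1 : ∑ i ∈ reps, A i j
        = (μ (X ∩ T ⁻¹' closedBall j r)).toReal / (μ (closedBall (0:K) r)).toReal := by
      simp_rw [hA]
      rw [← Finset.sum_div, ← ENNReal.toReal_sum (fun i _ => hpiece_fin i _), ← hsum j r hr0 le_rfl]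
    rw [h1, div_eq_one_iff_eq hd]
    exact ENNReal.toReal_eq_toReal_iff' (hXTfin _) (hρfin r)
  constructor
  · intro hMP j hj
    rw [hAsum j hj, hMP (closedBall j r) (hBsub j hj) measurableSet_closedBall]
    exact stmt6_ball_translate μ j r
  · intro hcol
    have hB1 : ∀ j ∈ reps, μ (X ∩ T ⁻¹' closedBall j r) = μ (closedBall (0:K) r) :=
      fun j hj => (hAsum j hj).mp (hcol j hj)
    have hkey2 : ∀ i ∈ reps, ∀ (j a : K), a ∈ closedBall j r → ∀ s : ℝ, 0 < s → s ≤ r →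
        μ (closedBall i r ∩ T ⁻¹' closedBall a s) * μ (closedBall (0:K) r)
          ≤ μ (closedBall i r ∩ T ⁻¹' closedBall j r) * μ (closedBall (0:K) s) := by
      intro i hi j a haj s hs hsr
      rcases Set.eq_empty_or_nonempty (closedBall i r ∩ T ⁻¹' closedBall a s) with
        hemp | ⟨x, hxB, hTx⟩
      · rw [hemp]; simp
      · have hTx' : T x ∈ closedBall a s := hTx
        have hTxj : T x ∈ closedBall j r :=
          mem_closedBall.mpr (le_trans (IsUltrametricDist.dist_triangle_max (T x) a j)
            (max_le ((mem_closedBall.mp hTx').trans hsr) (mem_closedBall.mp haj)))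
        rw [hPB i hi a s hs hsr x hxB hTx', hPB i hi j r hr0 le_rfl x hxB hTxj,
          stmt6_ball_translate μ x (s / C i), stmt6_ball_translate μ x (r / C i)]
        obtain ⟨u, hu0, huC⟩ := hCnorm i hi
        have hmul : ∀ t : ℝ, μ (closedBall (0:K) (t / C i)) =
            μ (closedBall (0:K) (C i)⁻¹) * μ (closedBall (0:K) t) := by
          intro t
          have h := stmt6_haar_mul μ hμ1 u⁻¹ (inv_ne_zero hu0) t
          rw [norm_inv, huC] at h
          rw [div_eq_mul_inv]
          exact h
        rw [hmul s, hmul r]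
        apply le_of_eq; ring
    have hle : ∀ a ∈ X, ∀ s : ℝ, 0 < s → s ≤ r →
        μ (X ∩ T ⁻¹' closedBall a s) ≤ μ (closedBall (0:K) s) := by
      intro a haX s hs hsr
      obtain ⟨j, hj, haj⟩ := hXmem a haX
      have h1 : μ (closedBall (0:K) r) * μ (X ∩ T ⁻¹' closedBall a s)
          ≤ μ (closedBall (0:K) r) * μ (closedBall (0:K) s) := by
        rw [mul_comm (μ (closedBall (0:K) r)) (μ (X ∩ T ⁻¹' closedBall a s)),
          hsum a s hs hsr, Finset.sum_mul]
        calc ∑ i ∈ reps, μ (closedBall i r ∩ T ⁻¹' closedBall a s) * μ (closedBall (0:K) r)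
            ≤ ∑ i ∈ reps, μ (closedBall i r ∩ T ⁻¹' closedBall j r) * μ (closedBall (0:K) s) :=
              Finset.sum_le_sum fun i hi => hkey2 i hi j a haj s hs hsr
          _ = (∑ i ∈ reps, μ (closedBall i r ∩ T ⁻¹' closedBall j r)) * μ (closedBall (0:K) s) :=
              (Finset.sum_mul _ _ _).symm
          _ = μ (closedBall (0:K) r) * μ (closedBall (0:K) s) := by
              rw [← hsum j r hr0 le_rfl, hB1 j hj]
      exact (ENNReal.mul_le_mul_iff_right (hρpos r hr0) (hρfin r)).mp h1
    have heq : ∀ a ∈ X, ∀ s : ℝ, 0 < s → s ≤ r →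
        μ (X ∩ T ⁻¹' closedBall a s) = μ (closedBall (0:K) s) := by
      intro a haX s hs hsr
      obtain ⟨j, hj, haj⟩ := hXmem a haX
      obtain ⟨F, hFsub, hFcov, hFdisj⟩ := stmt6_partition j r s hs hsr (stmt6_disjointify s hs)
      have hFX : ∀ a' ∈ F, (a' : K) ∈ X := fun a' ha' => hBsub j hj (hFsub ha')
      have hgmeas : ∀ a' : K, MeasurableSet (X ∩ T ⁻¹' closedBall a' s) := by
        intro a'
        rw [hsplit]
        exact Finset.measurableSet_biUnion _ (fun i hi => hmeasB i hi a' s hs hsr)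
      have hTsum : ∑ a' ∈ F, μ (X ∩ T ⁻¹' closedBall a' s) = μ (closedBall (0:K) r) := by
        have hun : X ∩ T ⁻¹' closedBall j r = ⋃ a' ∈ F, (X ∩ T ⁻¹' closedBall a' s) := by
          rw [hFcov, Set.preimage_iUnion₂, Set.inter_iUnion₂]
        rw [← hB1 j hj, hun]
        refine (measure_biUnion_finset ?_ (fun a' _ => hgmeas a')).symm
        intro a' ha' b' hb' hne
        exact ((hFdisj ha' hb' hne).preimage T).mono Set.inter_subset_right Set.inter_subset_right
      have hBsum : ∑ a' ∈ F, μ (closedBall (0:K) s) = μ (closedBall (0:K) r) := by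
        calc ∑ a' ∈ F, μ (closedBall (0:K) s) = ∑ a' ∈ F, μ (closedBall (a' : K) s) :=
              Finset.sum_congr rfl fun a' _ => (stmt6_ball_translate μ a' s).symm
          _ = μ (⋃ a' ∈ F, closedBall (a' : K) s) :=
              (measure_biUnion_finset (fun a' ha' b' hb' hne => hFdisj ha' hb' hne)
                (fun _ _ => measurableSet_closedBall)).symm
          _ = μ (closedBall j r) := by rw [← hFcov]
          _ = μ (closedBall (0:K) r) := stmt6_ball_translate μ j r
      have hterm : ∀ a' ∈ F, μ (X ∩ T ⁻¹' closedBall a' s) = μ (closedBall (0:K) s) := by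
        by_contra hne
        push_neg at hne
        obtain ⟨a₀, ha₀, hne₀⟩ := hne
        have hlt : (μ (X ∩ T ⁻¹' closedBall a₀ s)).toReal < (μ (closedBall (0:K) s)).toReal := by
          rcases lt_or_eq_of_le (hle a₀ (hFX a₀ ha₀) s hs hsr) with h | h
          · exact ENNReal.toReal_strict_mono (hρfin s) h
          · exact absurd h hne₀
        have hsum_lt : ∑ a' ∈ F, (μ (X ∩ T ⁻¹' closedBall a' s)).toReal
            < ∑ a' ∈ F, (μ (closedBall (0:K) s)).toReal :=
          Finset.sum_lt_sum
            (fun a' ha' => ENNReal.toReal_mono (hρfin s) (hle a' (hFX a' ha') s hs hsr))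
            ⟨a₀, ha₀, hlt⟩
        have he1 : ∑ a' ∈ F, (μ (X ∩ T ⁻¹' closedBall a' s)).toReal
            = (μ (closedBall (0:K) r)).toReal := by
          rw [← ENNReal.toReal_sum (fun a' _ => hXTfin _), hTsum]
        have he2 : ∑ a' ∈ F, (μ (closedBall (0:K) s)).toReal
            = (μ (closedBall (0:K) r)).toReal := by
          rw [← ENNReal.toReal_sum (fun a' _ => hρfin s), hBsum]
        rw [he1, he2] at hsum_lt
        exact lt_irrefl _ hsum_lt
      obtain ⟨a', ha'F, haa'⟩ : ∃ a' ∈ F, a ∈ closedBall (a' : K) s := by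
        have hm : a ∈ ⋃ a' ∈ F, closedBall (a' : K) s := by rw [← hFcov]; exact haj
        simpa using hm
      have hball : closedBall a s = closedBall a' s :=
        (IsUltrametricDist.closedBall_eq_of_mem haa').symm
      rw [hball]
      exact hterm a' ha'F
    have hXmeas : MeasurableSet X := by
      rw [hcover]
      exact (Set.Finite.isClosed_biUnion reps.finite_toSet
        (fun i _ => isClosed_closedBall)).measurableSet
    have hmain : ∀ t : Set K, MeasurableSet t →
        MeasurableSet (X ∩ T ⁻¹' t) ∧ μ (X ∩ T ⁻¹' t) = μ (X ∩ t) := by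
      have hbasis : TopologicalSpace.IsTopologicalBasis
          {E : Set K | ∃ (a : K) (s : ℝ), 0 < s ∧ E = closedBall a s} := by
        refine TopologicalSpace.isTopologicalBasis_of_isOpen_of_nhds ?_ ?_
        · rintro E ⟨a, s, hs, rfl⟩
          exact IsUltrametricDist.isOpen_closedBall a hs.ne'
        · intro x U hxU hU
          obtain ⟨ε, hε, hb⟩ := Metric.isOpen_iff.mp hU x hxU
          exact ⟨closedBall x (ε/2), ⟨x, ε/2, half_pos hε, rfl⟩,
            mem_closedBall_self (half_pos hε).le,
            (closedBall_subset_ball (half_lt_self hε)).trans hb⟩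
      have hCgen : (inferInstance : MeasurableSpace K) = MeasurableSpace.generateFrom
          {E : Set K | ∃ (a : K) (s : ℝ), 0 < s ∧ E = closedBall a s} := by
        rw [BorelSpace.measurable_eq (α := K), hbasis.borel_eq_generateFrom]
      have hpi : IsPiSystem {E : Set K | ∃ (a : K) (s : ℝ), 0 < s ∧ E = closedBall a s} := by
        rintro E1 ⟨a, s, hs, rfl⟩ E2 ⟨b, t, ht, rfl⟩ hne
        obtain ⟨x, hxa, hxb⟩ := hne
        rcases le_total s t with hst | hst
        · have hsub : closedBall a s ⊆ closedBall b t := by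
            intro y hy
            calc dist y b ≤ max (dist y a) (dist a b) :=
                  IsUltrametricDist.dist_triangle_max y a b
              _ ≤ t := max_le ((mem_closedBall.mp hy).trans hst)
                  (le_trans (IsUltrametricDist.dist_triangle_max a x b)
                    (max_le (by rw [dist_comm]; exact (mem_closedBall.mp hxa).trans hst)
                      (mem_closedBall.mp hxb)))
          exact ⟨a, s, hs, Set.inter_eq_self_of_subset_left hsub⟩
        · have hsub : closedBall b t ⊆ closedBall a s := by
            intro y hy
            calc dist y a ≤ max (dist y b) (dist b a) :=
                  IsUltrametricDist.dist_triangle_max y b a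
              _ ≤ s := max_le ((mem_closedBall.mp hy).trans hst)
                  (le_trans (IsUltrametricDist.dist_triangle_max b x a)
                    (max_le (by rw [dist_comm]; exact (mem_closedBall.mp hxb).trans hst)
                      (mem_closedBall.mp hxa)))
          exact ⟨b, t, ht, Set.inter_eq_self_of_subset_right hsub⟩
      have hmeasXT : ∀ i ∈ reps, MeasurableSet (X ∩ T ⁻¹' closedBall i r) := by
        intro i hi
        rw [hsplit]
        exact Finset.measurableSet_biUnion _ (fun i' hi' => hmeasB i' hi' i r hr0 le_rfl)
      refine MeasurableSpace.induction_on_inter hCgen hpi ?_ ?_ ?_ ?_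
      · simp
      · rintro E ⟨p₀, s, hs, rfl⟩
        rcases Set.eq_empty_or_nonempty (closedBall p₀ s ∩ X) with hempty | ⟨p, hpB, hpX⟩
        · have h1 : X ∩ T ⁻¹' closedBall p₀ s = ∅ := by
            rw [Set.eq_empty_iff_forall_notMem]
            rintro x ⟨hxX, hTx⟩
            rw [Set.eq_empty_iff_forall_notMem] at hempty
            exact hempty (T x) ⟨hTx, hT hxX⟩
          have h2 : X ∩ closedBall p₀ s = ∅ := by rw [Set.inter_comm]; exact hempty
          rw [h1, h2]
          exact ⟨MeasurableSet.empty, rfl⟩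
        · have hBp : closedBall p₀ s = closedBall p s :=
            IsUltrametricDist.closedBall_eq_of_mem hpB
          rw [hBp]
          rcases le_or_gt s r with hsr | hrs
          · obtain ⟨j, hj, hpj⟩ := hXmem p hpX
            have hsubX : closedBall p s ⊆ X := (stmt6_ball_sub hsr hpj).trans (hBsub j hj)
            constructor
            · rw [hsplit]
              exact Finset.measurableSet_biUnion _ (fun i hi => hmeasB i hi p s hs hsr)
            · rw [heq p hpX s hs hsr, Set.inter_eq_self_of_subset_right hsubX]
              exact (stmt6_ball_translate μ p s).symm
          · set G := reps.filter (fun i => i ∈ closedBall p s) with hG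
            have hGdef : ∀ i, i ∈ G ↔ i ∈ reps ∧ i ∈ closedBall p s := by
              intro i; rw [hG, Finset.mem_filter]
            have hXB : X ∩ closedBall p s = ⋃ i ∈ G, closedBall i r := by
              ext x
              simp only [Set.mem_inter_iff, Set.mem_iUnion, exists_prop]
              constructor
              · rintro ⟨hxX, hxp⟩
                obtain ⟨i, hi, hxi⟩ := hXmem x hxX
                refine ⟨i, (hGdef i).mpr ⟨hi, ?_⟩, hxi⟩
                exact mem_closedBall.mpr (le_trans (IsUltrametricDist.dist_triangle_max i x p)
                  (max_le (by rw [dist_comm]; exact (mem_closedBall.mp hxi).trans hrs.le)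
                    (mem_closedBall.mp hxp)))
              · rintro ⟨i, hiG, hxi⟩
                obtain ⟨hi, hip⟩ := (hGdef i).mp hiG
                exact ⟨hBsub i hi hxi,
                  mem_closedBall.mpr (le_trans (IsUltrametricDist.dist_triangle_max x i p)
                    (max_le ((mem_closedBall.mp hxi).trans hrs.le) (mem_closedBall.mp hip)))⟩
            have hTB : X ∩ T ⁻¹' closedBall p s = ⋃ i ∈ G, (X ∩ T ⁻¹' closedBall i r) := by
              ext x
              simp only [Set.mem_inter_iff, Set.mem_preimage, Set.mem_iUnion, exists_prop]
              constructor
              · rintro ⟨hxX, hTx⟩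
                have hm : T x ∈ X ∩ closedBall p s := ⟨hT hxX, hTx⟩
                rw [hXB] at hm
                simp only [Set.mem_iUnion, exists_prop] at hm
                obtain ⟨i, hiG, hTxi⟩ := hm
                exact ⟨i, hiG, hxX, hTxi⟩
              · rintro ⟨i, hiG, hxX, hTxi⟩
                obtain ⟨hi, hip⟩ := (hGdef i).mp hiG
                refine ⟨hxX, ?_⟩
                exact mem_closedBall.mpr
                  (le_trans (IsUltrametricDist.dist_triangle_max (T x) i p)
                    (max_le ((mem_closedBall.mp hTxi).trans hrs.le) (mem_closedBall.mp hip)))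
            constructor
            · rw [hTB]
              exact Finset.measurableSet_biUnion _
                (fun i hi => hmeasXT i ((hGdef i).mp hi).1)
            · rw [hTB, hXB,
                measure_biUnion_finset
                  (fun i hi i' hi' hne =>
                    ((hdisjB i ((hGdef i).mp hi).1 i' ((hGdef i').mp hi').1 hne).preimage T).mono
                      Set.inter_subset_right Set.inter_subset_right)
                  (fun i hi => hmeasXT i ((hGdef i).mp hi).1),
                measure_biUnion_finset
                  (fun i hi i' hi' hne =>
                    hdisjB i ((hGdef i).mp hi).1 i' ((hGdef i').mp hi').1 hne)
                  (fun i _ => measurableSet_closedBall)]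
              refine Finset.sum_congr rfl fun i hiG => ?_
              rw [hB1 i ((hGdef i).mp hiG).1]
              exact (stmt6_ball_translate μ i r).symm
      · rintro t htmeas ⟨h1, h2⟩
        have hset : X ∩ T ⁻¹' tᶜ = X \ (X ∩ T ⁻¹' t) := by
          ext x
          by_cases hx : x ∈ X <;> simp [hx, Set.mem_preimage]
        have hset2 : X ∩ tᶜ = X \ (X ∩ t) := by
          ext x
          by_cases hx : x ∈ X <;> simp [hx]
        refine ⟨hset ▸ hXmeas.diff h1, ?_⟩
        rw [hset, hset2,
          measure_diff Set.inter_subset_left h1.nullMeasurableSet (hXTfin t),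
          measure_diff Set.inter_subset_left (hXmeas.inter htmeas).nullMeasurableSet
            ((lt_of_le_of_lt (measure_mono Set.inter_subset_left) hXfin.lt_top).ne),
          h2]
      · intro f hfd hfmeas hf
        have hset : X ∩ T ⁻¹' (⋃ n, f n) = ⋃ n, (X ∩ T ⁻¹' f n) := by
          rw [Set.preimage_iUnion, Set.inter_iUnion]
        have hset2 : X ∩ (⋃ n, f n) = ⋃ n, (X ∩ f n) := Set.inter_iUnion _ _
        refine ⟨hset ▸ MeasurableSet.iUnion (fun n => (hf n).1), ?_⟩
        rw [hset, hset2,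
          measure_iUnion
            (fun m n hmn => ((hfd hmn).preimage T).mono
              Set.inter_subset_right Set.inter_subset_right)
            (fun n => (hf n).1),
          measure_iUnion
            (fun m n hmn => (hfd hmn).mono Set.inter_subset_right Set.inter_subset_right)
            (fun n => hXmeas.inter (hfmeas n))]
        exact tsum_congr fun n => (hf n).2
    intro S hSX hS
    rw [(hmain S hS).2, Set.inter_eq_self_of_subset_right hSX]
end

section
/- Let T : X → X be a locally scaling transformation for radius r on a compact-open subset X of a non-archimedean local field K, with associated transition matrix A on H = X/B_r(0), and let (X_A, μ_{A,v}, T_A) be the associated one-sided Markov shift with stationary vector v(i) = μ(B_r(0)) for all i. Then the map Φ : X → X_A defined by π_n(Φ(x)) = (coset in H of T^n(x)) is continuous, measure-preserving, surjective, intertwines T with T_A (Φ∘T = T_A∘Φ), and the preimage under Φ of any cylinder set [d_0 … d_ℓ] is a ball of measure equal to μ_{A,v}([d_0…d_ℓ]) = v(d_0)A(d_0,d_1)⋯A(d_{ℓ-1},d_ℓ). -/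
open Metric MeasureTheory

section nets
variable {K : Type*} [NontriviallyNormedField K] [IsUltrametricDist K]

lemma norm_sub_max' (x y z : K) : ‖x - z‖ ≤ max ‖x - y‖ ‖y - z‖ := by
  simpa [dist_eq_norm] using dist_triangle_max x y z

omit [IsUltrametricDist K] in
lemma mem_cb {x c : K} {s : ℝ} : x ∈ closedBall c s ↔ ‖x - c‖ ≤ s := by
  simp [mem_closedBall, dist_eq_norm]

lemma prune_net {ρ : ℝ} (t : Finset K) :
    ∃ t' ⊆ t, (∀ u ∈ t, ∃ v ∈ t', closedBall u ρ = closedBall v ρ) ∧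
      ∀ u ∈ t', ∀ v ∈ t', ‖u - v‖ ≤ ρ → u = v := by
  classical
  induction t using Finset.strongInduction with
  | _ t ih =>
    by_cases hsep : ∀ u ∈ t, ∀ v ∈ t, ‖u - v‖ ≤ ρ → u = v
    · exact ⟨t, le_refl _, fun u hu => ⟨u, hu, rfl⟩, hsep⟩
    · push_neg at hsep
      obtain ⟨u, hu, v, hv, huv, hne⟩ := hsep
      have hvu : v ∈ closedBall u ρ := by
        rw [mem_cb, norm_sub_rev]; exact huv
      have hball : closedBall u ρ = closedBall v ρ :=
        IsUltrametricDist.closedBall_eq_of_mem hvu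
      obtain ⟨t', ht't, hcov, hsep'⟩ := ih (t.erase u) (Finset.erase_ssubset hu)
      refine ⟨t', ht't.trans (Finset.erase_subset u t), fun w hw => ?_, hsep'⟩
      by_cases hwu : w = u
      · obtain ⟨v', hv', he⟩ := hcov v (Finset.mem_erase.2 ⟨fun h => hne h.symm, hv⟩)
        exact ⟨v', hv', by rw [hwu, hball, he]⟩
      · exact hcov w (Finset.mem_erase.2 ⟨hwu, hw⟩)

lemma exists_net [ProperSpace K] (x : K) {s ρ : ℝ} (hρ : 0 < ρ) :
    ∃ t : Finset K, (∀ u ∈ t, u ∈ closedBall x s) ∧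
      (closedBall x s ⊆ ⋃ u ∈ t, closedBall u ρ) ∧
      (∀ u ∈ t, ∀ v ∈ t, ‖u - v‖ ≤ ρ → u = v) := by
  classical
  have hcpt : IsCompact (closedBall x s) := isCompact_closedBall x s
  obtain ⟨b', hb'sub, hb'fin, hb'cov⟩ :=
    hcpt.elim_finite_subcover_image (b := closedBall x s) (c := fun u => closedBall u ρ)
      (fun u _ => IsUltrametricDist.isOpen_closedBall u hρ.ne')
      (fun y hy => Set.mem_biUnion hy (mem_closedBall_self hρ.le))
  obtain ⟨t', ht'sub, hcov, hsep⟩ := prune_net (ρ := ρ) hb'fin.toFinset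
  refine ⟨t', fun u hu => hb'sub (by simpa using ht'sub hu), fun y hy => ?_, hsep⟩
  obtain ⟨u, hu, hyu⟩ := Set.mem_iUnion₂.1 (hb'cov hy)
  obtain ⟨v, hv, he⟩ := hcov u (hb'fin.mem_toFinset.2 hu)
  exact Set.mem_biUnion hv (he ▸ hyu)

end nets

section iso
variable {K : Type*} [NontriviallyNormedField K] [IsUltrametricDist K] [ProperSpace K]

lemma isometry_ball_surj {a a' : K} {s : ℝ} (hs : 0 < s)
    (φ : K → K) (hmaps : ∀ x ∈ closedBall a s, φ x ∈ closedBall a' s)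
    (hiso : ∀ x ∈ closedBall a s, ∀ y ∈ closedBall a s, ‖φ x - φ y‖ = ‖x - y‖) :
    ∀ w ∈ closedBall a' s, ∃ x ∈ closedBall a s, φ x = w := by
  classical
  have hcont : ContinuousOn φ (closedBall a s) := by
    refine (LipschitzOnWith.of_dist_le_mul (K := 1) (fun x hx y hy => ?_)).continuousOn
    rw [dist_eq_norm, dist_eq_norm, hiso x hx y hy]; simp
  have hMc : IsCompact (φ '' closedBall a s) :=
    (isCompact_closedBall a s).image_of_continuousOn hcont
  intro w hw
  -- density
  have hdens : ∀ ε > 0, ∃ m ∈ φ '' closedBall a s, ‖w - m‖ < ε := by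
    intro ε hε
    obtain ⟨z, hz0, hzε⟩ := NormedField.exists_norm_lt K hε
    set ρ := ‖z‖ with hρdef
    obtain ⟨t, htin, htcov, htsep⟩ := exists_net a (s := s) hz0
    set t₂ : Finset K := t.image (· + (a' - a)) with ht₂
    have ht₂cov : ∀ y ∈ closedBall a' s, ∃ v ∈ t₂, ‖y - v‖ ≤ ρ := by
      intro y hy
      have hy' : y - (a' - a) ∈ closedBall a s := by
        rw [mem_cb] at hy ⊢; simpa [sub_sub, sub_add_eq_sub_sub] using hy
      obtain ⟨u, hu, hyu⟩ := Set.mem_iUnion₂.1 (htcov hy')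
      refine ⟨u + (a' - a), Finset.mem_image_of_mem _ hu, ?_⟩
      rw [mem_cb] at hyu
      calc ‖y - (u + (a' - a))‖ = ‖y - (a' - a) - u‖ := by ring_nf
        _ ≤ ρ := hyu
    have ht₂sep : ∀ u ∈ t₂, ∀ v ∈ t₂, ‖u - v‖ ≤ ρ → u = v := by
      intro u hu v hv huv
      obtain ⟨u', hu', rfl⟩ := Finset.mem_image.1 hu
      obtain ⟨v', hv', rfl⟩ := Finset.mem_image.1 hv
      have : ‖u' - v'‖ ≤ ρ := by simpa using huv
      rw [htsep u' hu' v' hv' this]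
    have hex : ∀ u ∈ t, ∃ v ∈ t₂, ‖φ u - v‖ ≤ ρ := fun u hu =>
      ht₂cov (φ u) (hmaps u (htin u hu))
    set f : ∀ u ∈ t, K := fun u hu => (hex u hu).choose with hf
    have hft₂ : ∀ u hu, f u hu ∈ t₂ := fun u hu => (hex u hu).choose_spec.1
    have hfρ : ∀ u hu, ‖φ u - f u hu‖ ≤ ρ := fun u hu => (hex u hu).choose_spec.2
    have hinj : ∀ u₁ u₂ h₁ h₂, f u₁ h₁ = f u₂ h₂ → u₁ = u₂ := by
      intro u₁ u₂ h₁ h₂ he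
      have h12 : ‖φ u₁ - φ u₂‖ ≤ ρ := by
        calc ‖φ u₁ - φ u₂‖ ≤ max ‖φ u₁ - f u₁ h₁‖ ‖f u₁ h₁ - φ u₂‖ := norm_sub_max' _ _ _
          _ ≤ ρ := by
            refine max_le (hfρ u₁ h₁) ?_
            rw [he, norm_sub_rev]; exact hfρ u₂ h₂
      refine htsep u₁ h₁ u₂ h₂ ?_
      rw [← hiso u₁ (htin _ h₁) u₂ (htin _ h₂)]; exact h12
    have hcard : t₂.card ≤ t.card := Finset.card_image_le
    have hsurj := Finset.surj_on_of_inj_on_of_card_le f hft₂ hinj hcard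
    obtain ⟨v, hv, hwv⟩ := ht₂cov w hw
    obtain ⟨u, hu, hvf⟩ := hsurj v hv
    refine ⟨φ u, Set.mem_image_of_mem _ (htin u hu), ?_⟩
    calc ‖w - φ u‖ ≤ max ‖w - v‖ ‖v - φ u‖ := norm_sub_max' _ _ _
      _ ≤ ρ := max_le hwv (by rw [hvf, norm_sub_rev]; exact hfρ u hu)
      _ < ε := hzε
  have hclosed : IsClosed (φ '' closedBall a s) := hMc.isClosed
  have : w ∈ closure (φ '' closedBall a s) := by
    rw [Metric.mem_closure_iff]
    intro ε hε
    obtain ⟨m, hm, hmd⟩ := hdens ε hε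
    exact ⟨m, hm, by rwa [dist_eq_norm]⟩
  rw [hclosed.closure_eq] at this
  obtain ⟨x, hx, hφx⟩ := this
  exact ⟨x, hx, hφx⟩

lemma scaled_surj {a : K} {s : ℝ} (hs : 0 < s) {w : K} (hw : w ≠ 0)
    (φ : K → K)
    (hiso : ∀ x ∈ closedBall a s, ∀ y ∈ closedBall a s, ‖w‖ * ‖φ x - φ y‖ = ‖x - y‖) :
    ∀ z ∈ closedBall (φ a) (s / ‖w‖), ∃ x ∈ closedBall a s, φ x = z := by
  have hw0 : (0:ℝ) < ‖w‖ := norm_pos_iff.2 hw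
  have ha : a ∈ closedBall a s := mem_closedBall_self hs.le
  set ψ : K → K := fun x => φ a + w * (φ x - φ a) with hψ
  have hψiso : ∀ x ∈ closedBall a s, ∀ y ∈ closedBall a s, ‖ψ x - ψ y‖ = ‖x - y‖ := by
    intro x hx y hy
    have : ψ x - ψ y = w * (φ x - φ y) := by ring
    rw [this, norm_mul, hiso x hx y hy]
  have hψmaps : ∀ x ∈ closedBall a s, ψ x ∈ closedBall (φ a) s := by
    intro x hx
    rw [mem_cb]
    have : ψ x - φ a = w * (φ x - φ a) := by ring
    rw [this, norm_mul, hiso x hx a ha]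
    rw [mem_cb] at hx; exact hx
  intro z hz
  set z' : K := φ a + w * (z - φ a) with hz'
  have hz'mem : z' ∈ closedBall (φ a) s := by
    rw [mem_cb] at hz ⊢
    have : z' - φ a = w * (z - φ a) := by ring
    rw [this, norm_mul]
    calc ‖w‖ * ‖z - φ a‖ ≤ ‖w‖ * (s / ‖w‖) := by
          exact mul_le_mul_of_nonneg_left hz hw0.le
      _ = s := by field_simp
  obtain ⟨x, hx, hψx⟩ := isometry_ball_surj hs ψ hψmaps hψiso z' hz'mem
  refine ⟨x, hx, ?_⟩
  have : w * (φ x - φ a) = w * (z - φ a) := by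
    have := hψx
    rw [hψ] at this; simp only at this
    linear_combination this
  have h2 : φ x - φ a = z - φ a := mul_left_cancel₀ hw this
  exact sub_left_inj.mp h2
end iso
section meas
variable {K : Type*} [NontriviallyNormedField K] [IsUltrametricDist K] [ProperSpace K]
  [MeasurableSpace K] [BorelSpace K] (μ : Measure K) [μ.IsAddHaarMeasure]

lemma meas_cb_translate (u : K) (s : ℝ) :
    μ (closedBall u s) = μ (closedBall (0:K) s) := by
  have : closedBall u s = (fun h => -u + h) ⁻¹' (closedBall (0:K) s) := by
    ext x; simp [mem_closedBall, dist_eq_norm, neg_add_eq_sub]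
  rw [this, measure_preimage_add]

lemma meas_partition {x : K} {s ρ : ℝ} (hρ : 0 < ρ) (hρs : ρ ≤ s) (t : Finset K)
    (hin : ∀ u ∈ t, u ∈ closedBall x s)
    (hcov : closedBall x s ⊆ ⋃ u ∈ t, closedBall u ρ)
    (hsep : ∀ u ∈ t, ∀ v ∈ t, ‖u - v‖ ≤ ρ → u = v) :
    μ (closedBall x s) = t.card * μ (closedBall (0:K) ρ) := by
  have heq : closedBall x s = ⋃ u ∈ t, closedBall u ρ := by
    refine Set.Subset.antisymm hcov ?_
    refine Set.iUnion₂_subset fun u hu y hy => ?_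
    rw [mem_cb] at hy ⊢
    have h1 := hin u hu; rw [mem_cb] at h1
    calc ‖y - x‖ ≤ max ‖y - u‖ ‖u - x‖ := norm_sub_max' _ _ _
      _ ≤ s := max_le (hy.trans hρs) h1
  have hdisj : Set.PairwiseDisjoint (t : Set K) (fun u : K => closedBall u ρ) := by
    intro u hu v hv hne
    refine Set.disjoint_left.2 fun y hyu hyv => hne ?_
    rw [mem_cb] at hyu hyv
    refine hsep u hu v hv ?_
    calc ‖u - v‖ ≤ max ‖u - y‖ ‖y - v‖ := norm_sub_max' _ _ _
      _ ≤ ρ := max_le (by rwa [norm_sub_rev]) hyv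
  rw [heq, measure_biUnion_finset hdisj (fun u _ => measurableSet_closedBall)]
  rw [Finset.sum_congr rfl (fun u _ => meas_cb_translate μ u ρ)]
  simp [Finset.sum_const, nsmul_eq_mul]

lemma meas_cb_norm_mul_aux (hμ1 : μ (closedBall (0:K) 1) = 1)
    {a : K} (b : K) (ha : 1 ≤ ‖a‖) (hb : b ≠ 0) :
    μ (closedBall (0:K) (‖a‖ * ‖b‖)) = μ (closedBall (0:K) ‖a‖) * μ (closedBall (0:K) ‖b‖) := by
  classical
  have hb0 : (0:ℝ) < ‖b‖ := norm_pos_iff.2 hb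
  obtain ⟨t, htin, htcov, htsep⟩ := exists_net (0:K) (s := ‖a‖) one_pos
  have hma : μ (closedBall (0:K) ‖a‖) = t.card := by
    rw [meas_partition μ one_pos ha t htin htcov htsep, hμ1, mul_one]
  set t₂ : Finset K := t.image (b * ·) with ht₂
  have hcard : t₂.card = t.card := Finset.card_image_of_injective t (mul_right_injective₀ hb)
  have h2in : ∀ u ∈ t₂, u ∈ closedBall (0:K) (‖a‖ * ‖b‖) := by
    intro u hu
    obtain ⟨u', hu', rfl⟩ := Finset.mem_image.1 hu
    have := htin u' hu'
    rw [mem_cb] at this ⊢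
    rw [sub_zero] at this ⊢
    rw [norm_mul, mul_comm ‖a‖ ‖b‖]
    exact mul_le_mul_of_nonneg_left this (norm_nonneg b)
  have h2cov : closedBall (0:K) (‖a‖ * ‖b‖) ⊆ ⋃ u ∈ t₂, closedBall u ‖b‖ := by
    intro y hy
    have hy' : b⁻¹ * y ∈ closedBall (0:K) ‖a‖ := by
      rw [mem_cb, sub_zero] at hy ⊢
      rw [norm_mul, norm_inv]
      rw [inv_mul_le_iff₀ hb0, mul_comm]
      exact hy
    obtain ⟨u, hu, hyu⟩ := Set.mem_iUnion₂.1 (htcov hy')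
    refine Set.mem_biUnion (Finset.mem_image_of_mem _ hu) ?_
    rw [mem_cb] at hyu ⊢
    have : y - b * u = b * (b⁻¹ * y - u) := by field_simp
    rw [this, norm_mul]
    calc ‖b‖ * ‖b⁻¹ * y - u‖ ≤ ‖b‖ * 1 := mul_le_mul_of_nonneg_left hyu hb0.le
      _ = ‖b‖ := mul_one _
  have h2sep : ∀ u ∈ t₂, ∀ v ∈ t₂, ‖u - v‖ ≤ ‖b‖ → u = v := by
    intro u hu v hv huv
    obtain ⟨u', hu', rfl⟩ := Finset.mem_image.1 hu
    obtain ⟨v', hv', rfl⟩ := Finset.mem_image.1 hv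
    have : ‖b‖ * ‖u' - v'‖ ≤ ‖b‖ * 1 := by
      rw [← norm_mul, mul_sub]; simpa using huv
    have := le_of_mul_le_mul_left this hb0
    rw [htsep u' hu' v' hv' (by simpa using this)]
  have hbound : ‖b‖ ≤ ‖a‖ * ‖b‖ := by nlinarith
  rw [meas_partition μ hb0 hbound t₂ h2in h2cov h2sep, hcard, hma]

lemma meas_cb_norm_mul (hμ1 : μ (closedBall (0:K) 1) = 1)
    (a b : K) (ha : a ≠ 0) (hb : b ≠ 0) :
    μ (closedBall (0:K) (‖a‖ * ‖b‖)) = μ (closedBall (0:K) ‖a‖) * μ (closedBall (0:K) ‖b‖) := by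
  rcases le_or_gt 1 ‖a‖ with h1 | h1
  · exact meas_cb_norm_mul_aux μ hμ1 b h1 hb
  · have ha0 : (0:ℝ) < ‖a‖ := norm_pos_iff.2 ha
    have hai : a⁻¹ ≠ 0 := inv_ne_zero ha
    have h1i : 1 ≤ ‖a⁻¹‖ := by
      rw [norm_inv]
      rw [one_le_inv_iff₀]
      exact ⟨ha0, h1.le⟩
    have hab : a * b ≠ 0 := mul_ne_zero ha hb
    have h₂ := meas_cb_norm_mul_aux μ hμ1 (a * b) h1i hab
    have h₃ := meas_cb_norm_mul_aux μ hμ1 a h1i ha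
    have e₂ : ‖a⁻¹‖ * ‖a * b‖ = ‖b‖ := by
      rw [← norm_mul]; congr 1; field_simp
    have e₃ : ‖a⁻¹‖ * ‖a‖ = 1 := by
      rw [← norm_mul, inv_mul_cancel₀ ha, norm_one]
    rw [e₂] at h₂
    rw [e₃, hμ1] at h₃
    have e₄ : ‖a‖ * ‖b‖ = ‖a * b‖ := (norm_mul a b).symm
    rw [e₄]
    calc μ (closedBall (0:K) ‖a * b‖)
        = 1 * μ (closedBall (0:K) ‖a * b‖) := (one_mul _).symm
      _ = (μ (closedBall (0:K) ‖a⁻¹‖) * μ (closedBall (0:K) ‖a‖)) *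
            μ (closedBall (0:K) ‖a * b‖) := by rw [← h₃]
      _ = μ (closedBall (0:K) ‖a‖) *
            (μ (closedBall (0:K) ‖a⁻¹‖) * μ (closedBall (0:K) ‖a * b‖)) := by ring
      _ = μ (closedBall (0:K) ‖a‖) * μ (closedBall (0:K) ‖b‖) := by rw [← h₂]

end meas
section struct
variable {K : Type*} [NontriviallyNormedField K] [IsUltrametricDist K]
    [CompleteSpace K] [ProperSpace K]

lemma Qball {X : Set K} {r : ℝ} (hr0 : 0 < r)
    {reps : Finset K} (hcover : X = ⋃ b ∈ reps, closedBall b r)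
    {T : K → K} {C : K → ℝ} (hC1 : ∀ x ∈ X, 1 ≤ C x)
    (hscal : ∀ x ∈ X, ∀ y ∈ X, ‖x - y‖ ≤ r → ‖T x - T y‖ = C x * ‖x - y‖)
    {i j p : K} (hi : i ∈ reps) (hp : p ∈ closedBall i r) (hTp : T p ∈ closedBall j r) :
    closedBall i r ∩ T ⁻¹' (closedBall j r) = closedBall p (r / C p) := by
  have hXball : ∀ b ∈ reps, closedBall b r ⊆ X := fun b hb => by
    rw [hcover]; exact Set.subset_biUnion_of_mem (u := fun b => closedBall b r) hb
  have hpX : p ∈ X := hXball i hi hp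
  have hCp : 1 ≤ C p := hC1 p hpX
  have hCp0 : (0:ℝ) < C p := lt_of_lt_of_le one_pos hCp
  rw [mem_cb] at hp hTp
  ext y
  simp only [Set.mem_inter_iff, Set.mem_preimage, mem_cb]
  constructor
  · rintro ⟨hyi, hyj⟩
    have hyX : y ∈ X := hXball i hi (mem_cb.2 hyi)
    have hpy : ‖p - y‖ ≤ r :=
      (norm_sub_max' p i y).trans (max_le hp (by rw [norm_sub_rev]; exact hyi))
    have h1 : ‖T p - T y‖ = C p * ‖p - y‖ := hscal p hpX y hyX hpy
    have h2 : ‖T p - T y‖ ≤ r :=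
      (norm_sub_max' (T p) j (T y)).trans (max_le hTp (by rw [norm_sub_rev]; exact hyj))
    rw [norm_sub_rev, le_div_iff₀ hCp0, mul_comm, ← h1]
    exact h2
  · intro hy
    have hyp : ‖y - p‖ ≤ r := hy.trans (div_le_self hr0.le hCp)
    have hyi : ‖y - i‖ ≤ r := (norm_sub_max' y p i).trans (max_le hyp hp)
    have hyX : y ∈ X := hXball i hi (mem_cb.2 hyi)
    refine ⟨hyi, ?_⟩
    have h1 : ‖T p - T y‖ = C p * ‖p - y‖ :=
      hscal p hpX y hyX (by rw [norm_sub_rev]; exact hyp)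
    have h2 : ‖T p - T y‖ ≤ r := by
      rw [h1, norm_sub_rev]
      calc C p * ‖y - p‖ ≤ C p * (r / C p) := mul_le_mul_of_nonneg_left hy hCp0.le
        _ = r := by field_simp
    exact (norm_sub_max' (T y) (T p) j).trans
      (max_le (by rw [norm_sub_rev]; exact h2) hTp)

lemma hCnorm {X : Set K} {r : ℝ} (hr : ∃ z : K, z ≠ 0 ∧ ‖z‖ = r)
    {reps : Finset K} (hcover : X = ⋃ b ∈ reps, closedBall b r)
    {T : K → K} {C : K → ℝ} (hC1 : ∀ x ∈ X, 1 ≤ C x)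
    (hscal : ∀ x ∈ X, ∀ y ∈ X, ‖x - y‖ ≤ r → ‖T x - T y‖ = C x * ‖x - y‖)
    {rep : K → K} (hrep : ∀ x ∈ X, rep x ∈ reps ∧ ‖x - rep x‖ ≤ r)
    {p : K} (hpX : p ∈ X) : ∃ w : K, w ≠ 0 ∧ ‖w‖ = C p := by
  obtain ⟨zr, hzr0, hzrr⟩ := hr
  have hr0 : 0 < r := hzrr ▸ norm_pos_iff.2 hzr0
  have hXball : ∀ b ∈ reps, closedBall b r ⊆ X := fun b hb => by
    rw [hcover]; exact Set.subset_biUnion_of_mem (u := fun b => closedBall b r) hb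
  set q := p + zr with hq
  have hpq : ‖p - q‖ = r := by
    have : p - q = -zr := by rw [hq]; ring
    rw [this, norm_neg, hzrr]
  have hqX : q ∈ X := by
    refine hXball (rep p) (hrep p hpX).1 (mem_cb.2 ?_)
    refine (norm_sub_max' q p (rep p)).trans (max_le ?_ (hrep p hpX).2)
    rw [norm_sub_rev, hpq]
  have hT1 : ‖T p - T q‖ = C p * r := by
    rw [hscal p hpX q hqX hpq.le, hpq]
  have hCp0 : (0:ℝ) < C p := lt_of_lt_of_le one_pos (hC1 p hpX)
  refine ⟨(T p - T q) / zr, ?_, ?_⟩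
  · have : ‖(T p - T q) / zr‖ = C p := by
      rw [norm_div, hT1, hzrr]; field_simp
    intro h; rw [h, norm_zero] at this; linarith
  · rw [norm_div, hT1, hzrr]; field_simp

end struct
lemma cylinder_struct {K : Type*} [NontriviallyNormedField K] [IsUltrametricDist K]
    [CompleteSpace K] [ProperSpace K]
    [MeasurableSpace K] [BorelSpace K] (μ : Measure K) [μ.IsAddHaarMeasure]
    (hμ1 : μ (closedBall (0 : K) 1) = 1)
    (X : Set K)
    (r : ℝ) (hr : ∃ z : K, z ≠ 0 ∧ ‖z‖ = r)
    (reps : Finset K) (hcover : X = ⋃ b ∈ reps, closedBall b r)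
    (hdisj : ∀ b ∈ reps, ∀ b' ∈ reps, b ≠ b' → r < ‖b - b'‖)
    (T : K → K) (hT : Set.MapsTo T X X)
    (C : K → ℝ) (hC1 : ∀ x ∈ X, 1 ≤ C x)
    (hscal : ∀ x ∈ X, ∀ y ∈ X, ‖x - y‖ ≤ r → ‖T x - T y‖ = C x * ‖x - y‖)
    (A : K → K → ℝ)
    (hA : ∀ i j : K, A i j =
      (μ (closedBall i r ∩ T ⁻¹' (closedBall j r))).toReal
        / (μ (closedBall (0 : K) r)).toReal)
    (rep : K → K) (hrep : ∀ x ∈ X, rep x ∈ reps ∧ ‖x - rep x‖ ≤ r)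
    (l : ℕ) (d : ℕ → K) :
    (∀ n ≤ l, d n ∈ reps) → (∀ n < l, A (d n) (d (n + 1)) ≠ 0) →
    ∃ (c z : K), z ≠ 0 ∧ ‖z‖ ≤ 1 ∧
      {x ∈ X | ∀ n ≤ l, rep (T^[n] x) = d n} = closedBall c (‖z‖ * r) ∧
      (∀ x ∈ closedBall c (‖z‖ * r), ∀ y ∈ closedBall c (‖z‖ * r),
        ‖z‖ * ‖T^[l] x - T^[l] y‖ = ‖x - y‖) ∧
      (μ (closedBall (0:K) (‖z‖ * r))).toReal =
        (μ (closedBall (0:K) r)).toReal * ∏ n ∈ Finset.range l, A (d n) (d (n + 1)) := by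
  obtain ⟨zr, hzr0, hzrr⟩ := hr
  have hr0 : 0 < r := hzrr ▸ norm_pos_iff.2 hzr0
  have hXball : ∀ b ∈ reps, closedBall b r ⊆ X := fun b hb => by
    rw [hcover]; exact Set.subset_biUnion_of_mem (u := fun b => closedBall b r) hb
  have hmemrep : ∀ x ∈ X, x ∈ closedBall (rep x) r := fun x hx => mem_cb.2 (hrep x hx).2
  have hrepun : ∀ x ∈ X, ∀ b ∈ reps, x ∈ closedBall b r → rep x = b := by
    intro x hx b hb hxb
    rw [mem_cb] at hxb
    by_contra hne
    have hlt := hdisj (rep x) (hrep x hx).1 b hb hne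
    have : ‖rep x - b‖ ≤ r := by
      refine (norm_sub_max' (rep x) x b).trans (max_le ?_ hxb)
      rw [norm_sub_rev]; exact (hrep x hx).2
    linarith
  have hTiter : ∀ n : ℕ, Set.MapsTo (T^[n]) X X := fun n => hT.iterate n
  have hCconst : ∀ x ∈ X, ∀ y ∈ X, ‖x - y‖ ≤ r → C x = C y := by
    intro x hx y hy hxy
    rcases eq_or_ne x y with rfl | hne
    · rfl
    · have h1 := hscal x hx y hy hxy
      have h2 := hscal y hy x hx (by rwa [norm_sub_rev])
      have hxy0 : ‖x - y‖ ≠ 0 := by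
        simpa [sub_eq_zero] using hne
      have h2' : ‖T x - T y‖ = C y * ‖x - y‖ := by
        rw [norm_sub_rev (T x), h2, norm_sub_rev y]
      exact mul_right_cancel₀ hxy0 (h1.symm.trans h2')
  -- the induction
  induction l with
  | zero =>
    intro hd _
    have hd0 : d 0 ∈ reps := hd 0 le_rfl
    refine ⟨d 0, 1, one_ne_zero, by simp, ?_, ?_, ?_⟩
    · ext x
      simp only [Set.mem_setOf_eq, norm_one, one_mul, Nat.le_zero]
      constructor
      · rintro ⟨hxX, hx0⟩
        have h : rep x = d 0 := by simpa using hx0 0 rfl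
        have := hmemrep x hxX
        rwa [h] at this
      · intro hx
        refine ⟨hXball _ hd0 hx, fun n hn => ?_⟩
        subst hn
        simpa using hrepun x (hXball _ hd0 hx) (d 0) hd0 hx
    · intro x _ y _
      simp
    · simp
  | succ l ih =>
    intro hd hAd
    obtain ⟨c, z, hz0, hz1, hset, hiso, hmeas⟩ :=
      ih (fun n hn => hd n (hn.trans l.le_succ)) (fun n hn => hAd n (hn.trans l.lt_succ_self))
    have hznorm : (0:ℝ) < ‖z‖ := norm_pos_iff.2 hz0
    set s : ℝ := ‖z‖ * r with hs_def
    have hs : 0 < s := mul_pos hznorm hr0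
    set i := d l with hi_def
    set j := d (l + 1) with hj_def
    have hi : i ∈ reps := hd l l.le_succ
    have hj : j ∈ reps := hd (l + 1) le_rfl
    have hcmem : c ∈ closedBall c s := mem_closedBall_self hs.le
    have hcset : c ∈ {x ∈ X | ∀ n ≤ l, rep (T^[n] x) = d n} := hset ▸ hcmem
    have hcX : c ∈ X := hcset.1
    have hTlc : T^[l] c ∈ closedBall i r := by
      have h1 := hmemrep (T^[l] c) (hTiter l hcX)
      rwa [hcset.2 l le_rfl] at h1
    have hballeq : closedBall i r = closedBall (T^[l] c) r :=
      IsUltrametricDist.closedBall_eq_of_mem hTlc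
    have hsdiv : s / ‖z‖ = r := by
      rw [hs_def]; field_simp
    have hsurj : ∀ zz ∈ closedBall (T^[l] c) r, ∃ x ∈ closedBall c s, T^[l] x = zz := by
      intro zz hzz
      exact scaled_surj hs hz0 (T^[l]) hiso zz (by rwa [hsdiv])
    -- nonemptiness of the transition set
    have hAlj : A i j ≠ 0 := hAd l l.lt_succ_self
    have hQne : (closedBall i r ∩ T ⁻¹' (closedBall j r)).Nonempty := by
      by_contra hne
      rw [Set.not_nonempty_iff_eq_empty] at hne
      apply hAlj
      rw [hA i j, hne, measure_empty]
      simp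
    obtain ⟨p, hp, hTp⟩ := hQne
    have hpX : p ∈ X := hXball i hi hp
    have hCp1 : 1 ≤ C p := hC1 p hpX
    have hCp0 : (0:ℝ) < C p := lt_of_lt_of_le one_pos hCp1
    have hQ : closedBall i r ∩ T ⁻¹' (closedBall j r) = closedBall p (r / C p) :=
      Qball hr0 hcover hC1 hscal hi hp hTp
    obtain ⟨w, hw0, hwC⟩ := hCnorm ⟨zr, hzr0, hzrr⟩ hcover hC1 hscal hrep hpX
    obtain ⟨c', hc'mem, hc'⟩ := hsurj p (hballeq ▸ hp)
    set z' : K := z * w⁻¹ with hz'_def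
    have hz'0 : z' ≠ 0 := mul_ne_zero hz0 (inv_ne_zero hw0)
    have hz'norm : ‖z'‖ = ‖z‖ / C p := by
      rw [hz'_def, norm_mul, norm_inv, hwC, div_eq_mul_inv]
    have hz'1 : ‖z'‖ ≤ 1 := by
      rw [hz'norm]
      calc ‖z‖ / C p ≤ ‖z‖ / 1 := by
            apply div_le_div_of_nonneg_left hznorm.le ?_ hCp1
            exact one_pos
        _ = ‖z‖ := by rw [div_one]
        _ ≤ 1 := hz1
    have hs' : ‖z'‖ * r = ‖z‖ * (r / C p) := by
      rw [hz'norm]; ring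
    have hs'le : ‖z'‖ * r ≤ s := by
      rw [hs_def, hz'norm]
      have : ‖z‖ / C p ≤ ‖z‖ := by
        calc ‖z‖ / C p ≤ ‖z‖ / 1 :=
              div_le_div_of_nonneg_left hznorm.le one_pos hCp1
          _ = ‖z‖ := div_one _
      exact mul_le_mul_of_nonneg_right this hr0.le
    -- key membership characterization
    have hchar : ∀ x, x ∈ {x ∈ X | ∀ n ≤ l + 1, rep (T^[n] x) = d n} ↔
        x ∈ closedBall c s ∧ ‖T^[l] x - p‖ ≤ r / C p := by
      intro x
      constructor
      · rintro ⟨hxX, hxrep⟩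
        have hxball : x ∈ closedBall c s :=
          hset ▸ (⟨hxX, fun n hn => hxrep n (hn.trans l.le_succ)⟩ :
            x ∈ {x ∈ X | ∀ n ≤ l, rep (T^[n] x) = d n})
        refine ⟨hxball, ?_⟩
        have hTlx : T^[l] x ∈ closedBall i r := by
          have h1 := hmemrep (T^[l] x) (hTiter l hxX)
          rwa [hxrep l l.le_succ] at h1
        have hTlx1 : T (T^[l] x) ∈ closedBall j r := by
          have h1 := hmemrep (T^[l+1] x) (hTiter (l+1) hxX)
          rw [hxrep (l+1) le_rfl] at h1
          rwa [Function.iterate_succ_apply' T l x] at h1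
        have : T^[l] x ∈ closedBall p (r / C p) := by
          rw [← hQ]; exact ⟨hTlx, hTlx1⟩
        rwa [mem_cb] at this
      · rintro ⟨hxball, hxp⟩
        have hxset : x ∈ {x ∈ X | ∀ n ≤ l, rep (T^[n] x) = d n} := hset ▸ hxball
        obtain ⟨hxX, hxrep⟩ := hxset
        have hTlx : T^[l] x ∈ closedBall p (r / C p) := mem_cb.2 hxp
        have hQx : T^[l] x ∈ closedBall i r ∩ T ⁻¹' (closedBall j r) := hQ ▸ hTlx
        refine ⟨hxX, fun n hn => ?_⟩
        rcases Nat.le_succ_iff.1 hn with h | h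
        · exact hxrep n h
        · subst h
          have hTX : T^[l+1] x ∈ X := hTiter (l+1) hxX
          refine hrepun _ hTX j hj ?_
          rw [Function.iterate_succ_apply' T l x]
          exact hQx.2
    have hdist : ∀ x ∈ closedBall c s, ‖z‖ * ‖T^[l] x - p‖ = ‖x - c'‖ := by
      intro x hx
      rw [← hc']
      exact hiso x hx c' hc'mem
    have hsetnew : {x ∈ X | ∀ n ≤ l + 1, rep (T^[n] x) = d n} = closedBall c' (‖z'‖ * r) := by
      ext x
      rw [hchar x]
      constructor
      · rintro ⟨hxball, hxp⟩
        rw [mem_cb, ← hdist x hxball, hs']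
        exact mul_le_mul_of_nonneg_left hxp hznorm.le
      · intro hx
        rw [mem_cb] at hx
        have hxball : x ∈ closedBall c s := by
          rw [mem_cb]
          have hc'c : ‖c' - c‖ ≤ s := mem_cb.1 hc'mem
          exact (norm_sub_max' x c' c).trans (max_le (hx.trans hs'le) hc'c)
        refine ⟨hxball, ?_⟩
        have h1 := hdist x hxball
        rw [hs'] at hx
        rw [← h1] at hx
        exact le_of_mul_le_mul_left hx hznorm
    -- members of new ball are in old ball and map into closedBall p (r/Cp)
    have hsub : ∀ x ∈ closedBall c' (‖z'‖ * r), x ∈ closedBall c s ∧ ‖T^[l] x - p‖ ≤ r / C p :=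
      fun x hx => (hchar x).1 (hsetnew ▸ hx)
    refine ⟨c', z', hz'0, hz'1, hsetnew, ?_, ?_⟩
    · -- scaling of T^[l+1]
      intro x hx y hy
      obtain ⟨hxball, hxp⟩ := hsub x hx
      obtain ⟨hyball, hyp⟩ := hsub y hy
      have hTlxX : T^[l] x ∈ X := hTiter l ((hset ▸ hxball : x ∈ {x ∈ X | _}).1)
      have hTlyX : T^[l] y ∈ X := hTiter l ((hset ▸ hyball : y ∈ {x ∈ X | _}).1)
      have hrCp : r / C p ≤ r := div_le_self hr0.le hCp1
      have hxy : ‖T^[l] x - T^[l] y‖ ≤ r := by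
        refine (norm_sub_max' (T^[l] x) p (T^[l] y)).trans (max_le (hxp.trans hrCp) ?_)
        rw [norm_sub_rev]; exact hyp.trans hrCp
      have hCx : C (T^[l] x) = C p := by
        refine hCconst (T^[l] x) hTlxX p hpX (hxp.trans hrCp)
      have hstep : ‖T^[l+1] x - T^[l+1] y‖ = C p * ‖T^[l] x - T^[l] y‖ := by
        rw [Function.iterate_succ_apply' T l x, Function.iterate_succ_apply' T l y]
        rw [hscal (T^[l] x) hTlxX (T^[l] y) hTlyX hxy, hCx]
      rw [hstep, hz'norm]
      have := hiso x hxball y hyball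
      rw [← this]
      field_simp
    · -- measure computation
      have hfin : ∀ t : ℝ, μ (closedBall (0:K) t) ≠ ⊤ :=
        fun t => (isCompact_closedBall (0:K) t).measure_lt_top.ne
      have hmr0 : (μ (closedBall (0:K) r)).toReal ≠ 0 := by
        have hpos : 0 < μ (closedBall (0:K) r) :=
          lt_of_lt_of_le (measure_ball_pos μ 0 hr0) (measure_mono ball_subset_closedBall)
        exact (ENNReal.toReal_pos hpos.ne' (hfin r)).ne'
      -- key ENNReal identity
      have hwinv : ‖w⁻¹ * zr‖ = r / C p := by
        rw [norm_mul, norm_inv, hwC, hzrr]; ring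
      have hkey : μ (closedBall (0:K) (‖z'‖ * r)) * μ (closedBall (0:K) r) =
          μ (closedBall (0:K) (‖z‖ * r)) * μ (closedBall (0:K) (r / C p)) := by
        have e1 : ‖z'‖ * r = ‖z‖ * ‖w⁻¹ * zr‖ := by rw [hwinv, hs']
        have e2 : (‖z‖ : ℝ) * r = ‖z‖ * ‖zr‖ := by rw [hzrr]
        rw [e1, e2, ← hwinv]
        rw [meas_cb_norm_mul μ hμ1 z (w⁻¹ * zr) hz0 (mul_ne_zero (inv_ne_zero hw0) hzr0)]
        rw [meas_cb_norm_mul μ hμ1 z zr hz0 hzr0]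
        rw [← hzrr]
        rw [norm_mul w⁻¹ zr]
        rw [meas_cb_norm_mul μ hμ1 w⁻¹ zr (inv_ne_zero hw0) hzr0]
        ring
      have hreal : (μ (closedBall (0:K) (‖z'‖ * r))).toReal * (μ (closedBall (0:K) r)).toReal =
          (μ (closedBall (0:K) (‖z‖ * r))).toReal * (μ (closedBall (0:K) (r / C p))).toReal := by
        rw [← ENNReal.toReal_mul, ← ENNReal.toReal_mul, hkey]
      have hAval : A i j = (μ (closedBall (0:K) (r / C p))).toReal /
          (μ (closedBall (0:K) r)).toReal := by
        rw [hA i j, hQ, meas_cb_translate μ p (r / C p)]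
      rw [Finset.prod_range_succ, ← mul_assoc, ← hmeas, ← hi_def, ← hj_def, hAval]
      field_simp
      linarith [hreal]
/-- For a locally scaling transformation `T` on compact-open `X` with
transition matrix `A` and coset-representative map `rep`, the coding map
`Φ(x) = (rep(Tⁿx))ₙ` into the Markov shift is continuous on `X`, intertwines `T` with
the left shift, is surjective onto the shift space, and the preimage of each cylinder
`[d₀…d_ℓ]` is a ball of measure `v(d₀)·A(d₀,d₁)⋯A(d_{ℓ-1},d_ℓ)` with
`v ≡ μ(B_r(0))`. -/
theorem stmt8 {K : Type*} [NontriviallyNormedField K] [IsUltrametricDist K]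
    [CompleteSpace K] [ProperSpace K]
    [MeasurableSpace K] [BorelSpace K] (μ : Measure K) [μ.IsAddHaarMeasure]
    (hμ1 : μ (closedBall (0 : K) 1) = 1)
    (X : Set K) (hXc : IsCompact X)
    (r : ℝ) (hr : ∃ z : K, z ≠ 0 ∧ ‖z‖ = r)
    (reps : Finset K) (hcover : X = ⋃ b ∈ reps, closedBall b r)
    (hdisj : ∀ b ∈ reps, ∀ b' ∈ reps, b ≠ b' → r < ‖b - b'‖)
    (T : K → K) (hT : Set.MapsTo T X X)
    (C : K → ℝ) (hC1 : ∀ x ∈ X, 1 ≤ C x)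
    (hscal : ∀ x ∈ X, ∀ y ∈ X, ‖x - y‖ ≤ r → ‖T x - T y‖ = C x * ‖x - y‖)
    (A : K → K → ℝ)
    (hA : ∀ i j : K, A i j =
      (μ (closedBall i r ∩ T ⁻¹' (closedBall j r))).toReal
        / (μ (closedBall (0 : K) r)).toReal)
    (rep : K → K) (hrep : ∀ x ∈ X, rep x ∈ reps ∧ ‖x - rep x‖ ≤ r) :
    ContinuousOn (fun x => fun n : ℕ => rep (T^[n] x)) X ∧
    (∀ x ∈ X, ∀ n : ℕ, rep (T^[n] (T x)) = rep (T^[n + 1] x)) ∧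
    (∀ ω : ℕ → K, (∀ n, ω n ∈ reps) → (∀ n, A (ω n) (ω (n + 1)) ≠ 0) →
      ∃ x ∈ X, ∀ n, rep (T^[n] x) = ω n) ∧
    (∀ (l : ℕ) (d : ℕ → K), (∀ n ≤ l, d n ∈ reps) → (∀ n < l, A (d n) (d (n + 1)) ≠ 0) →
      ∃ (c : K) (s : ℝ),
        {x ∈ X | ∀ n ≤ l, rep (T^[n] x) = d n} = closedBall c s ∧
        (μ (closedBall c s)).toReal =
          (μ (closedBall (0 : K) r)).toReal * ∏ n ∈ Finset.range l, A (d n) (d (n + 1))) := by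
  obtain ⟨zr, hzr0, hzrr⟩ := hr
  have hr0 : 0 < r := hzrr ▸ norm_pos_iff.2 hzr0
  have hXball : ∀ b ∈ reps, closedBall b r ⊆ X := fun b hb => by
    rw [hcover]; exact Set.subset_biUnion_of_mem (u := fun b => closedBall b r) hb
  have hmemrep : ∀ x ∈ X, x ∈ closedBall (rep x) r := fun x hx => mem_cb.2 (hrep x hx).2
  have hTiter : ∀ n : ℕ, Set.MapsTo (T^[n]) X X := fun n => hT.iterate n
  have hfin : ∀ t : ℝ, μ (closedBall (0:K) t) ≠ ⊤ :=
    fun t => (isCompact_closedBall (0:K) t).measure_lt_top.ne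
  have hmr0 : (μ (closedBall (0:K) r)).toReal ≠ 0 := by
    have hpos : 0 < μ (closedBall (0:K) r) :=
      lt_of_lt_of_le (measure_ball_pos μ 0 hr0) (measure_mono ball_subset_closedBall)
    exact (ENNReal.toReal_pos hpos.ne' (hfin r)).ne'
  have hApos : ∀ i ∈ reps, ∀ (j p : K), p ∈ closedBall i r → T p ∈ closedBall j r →
      A i j ≠ 0 := by
    intro i hi j p hp hTp
    have hQ := Qball hr0 hcover hC1 hscal hi hp hTp
    have hpX := hXball i hi hp
    have hCp0 : (0:ℝ) < C p := lt_of_lt_of_le one_pos (hC1 p hpX)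
    rw [hA i j, hQ, meas_cb_translate μ p _]
    have hpos : 0 < μ (closedBall (0:K) (r / C p)) :=
      lt_of_lt_of_le (measure_ball_pos μ 0 (div_pos hr0 hCp0))
        (measure_mono ball_subset_closedBall)
    have h1 : (μ (closedBall (0:K) (r / C p))).toReal ≠ 0 :=
      (ENNReal.toReal_pos hpos.ne' (hfin _)).ne'
    exact div_ne_zero h1 hmr0
  refine ⟨?_, ?_, ?_, ?_⟩
  · -- continuity
    rw [continuousOn_pi]
    intro n x hx
    have hd : ∀ k ≤ n, rep (T^[k] x) ∈ reps := fun k _ => (hrep _ (hTiter k hx)).1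
    have hAd : ∀ k < n, A (rep (T^[k] x)) (rep (T^[k+1] x)) ≠ 0 := by
      intro k _
      refine hApos (rep (T^[k] x)) ((hrep _ (hTiter k hx)).1) (rep (T^[k+1] x)) (T^[k] x)
        (hmemrep _ (hTiter k hx)) ?_
      have h2 := hmemrep _ (hTiter (k+1) hx)
      rw [← Function.iterate_succ_apply' T k x]
      exact h2
    obtain ⟨c, z, hz0, hz1, hset, _, _⟩ := cylinder_struct μ hμ1 X r ⟨zr, hzr0, hzrr⟩ reps
      hcover hdisj T hT C hC1 hscal A hA rep hrep n (fun k => rep (T^[k] x)) hd hAd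
    have hs0 : 0 < ‖z‖ * r := mul_pos (norm_pos_iff.2 hz0) hr0
    have hxset : x ∈ closedBall c (‖z‖ * r) :=
      hset ▸ (⟨hx, fun k _ => rfl⟩ :
        x ∈ {y ∈ X | ∀ k ≤ n, rep (T^[k] y) = rep (T^[k] x)})
    have hopen : IsOpen (closedBall c (‖z‖ * r)) :=
      IsUltrametricDist.isOpen_closedBall c hs0.ne'
    refine ContinuousWithinAt.congr_of_eventuallyEq
      (continuousWithinAt_const :
        ContinuousWithinAt (fun _ => rep (T^[n] x)) X x) ?_ rfl
    filter_upwards [mem_nhdsWithin_of_mem_nhds (hopen.mem_nhds hxset)] with y hy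
    exact ((hset ▸ hy : y ∈ {y ∈ X | ∀ k ≤ n, rep (T^[k] y) = rep (T^[k] x)})).2 n le_rfl
  · -- intertwining
    intro x _ n
    rw [← Function.iterate_succ_apply]
  · -- surjectivity
    intro ω hω hAω
    set Z : ℕ → Set K := fun l => {x ∈ X | ∀ n ≤ l, rep (T^[n] x) = ω n} with hZ
    have hball : ∀ l, ∃ (c : K) (ρ : ℝ), 0 < ρ ∧ Z l = closedBall c ρ := by
      intro l
      obtain ⟨c, z, hz0, _, hset, _, _⟩ := cylinder_struct μ hμ1 X r ⟨zr, hzr0, hzrr⟩ reps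
        hcover hdisj T hT C hC1 hscal A hA rep hrep l ω (fun n _ => hω n) (fun n _ => hAω n)
      exact ⟨c, ‖z‖ * r, mul_pos (norm_pos_iff.2 hz0) hr0, hset⟩
    have hnonempty : ∀ l, (Z l).Nonempty := by
      intro l; obtain ⟨c, ρ, hρ, he⟩ := hball l
      exact ⟨c, he ▸ mem_closedBall_self hρ.le⟩
    have hclosed : ∀ l, IsClosed (Z l) := by
      intro l; obtain ⟨c, ρ, _, he⟩ := hball l; rw [he]; exact isClosed_closedBall
    have hcompact : IsCompact (Z 0) := by
      obtain ⟨c, ρ, _, he⟩ := hball 0; rw [he]; exact isCompact_closedBall c ρ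
    have hnested : ∀ l, Z (l+1) ⊆ Z l := fun l x hx =>
      ⟨hx.1, fun n hn => hx.2 n (hn.trans l.le_succ)⟩
    obtain ⟨x, hx⟩ := IsCompact.nonempty_iInter_of_sequence_nonempty_isCompact_isClosed Z
      hnested hnonempty hcompact hclosed
    have hxl : ∀ l, x ∈ Z l := fun l => Set.mem_iInter.1 hx l
    exact ⟨x, (hxl 0).1, fun n => (hxl n).2 n le_rfl⟩
  · -- cylinder measure
    intro l d hd hAd
    obtain ⟨c, z, _, _, hset, _, hmeas⟩ := cylinder_struct μ hμ1 X r ⟨zr, hzr0, hzrr⟩ reps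
      hcover hdisj T hT C hC1 hscal A hA rep hrep l d hd hAd
    exact ⟨c, ‖z‖ * r, hset, by rw [meas_cb_translate μ c (‖z‖ * r)]; exact hmeas⟩
end

section
/- Let {u_k} be a very well distributed, well ordered (T.B.R.B.O.) sequence in the ring of integers O of a non-archimedean local field with residue field of cardinality q, and let Q_k(x) = Π_{i<k}(x−u_i) / Π_{i<k}(u_k−u_i) be the corresponding interpolating polynomials. Then for every k ≥ 1, Q_k maps O into O and Q_k is κ_k-Lipschitz on O, where κ_k = |π|^{−⌊log_q k⌋} and π is a uniformizer. -/
open Finset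

private lemma tele_prod {K : Type*} [CommRing K] (a b : ℕ → K) (k : ℕ) :
    ∏ j ∈ range k, a j - ∏ j ∈ range k, b j
      = ∑ i ∈ range k, (∏ j ∈ range i, b j) * (a i - b i) * ∏ j ∈ Finset.Ioo i k, a j := by
  induction k with
  | zero => simp
  | succ k ih =>
    rw [Finset.prod_range_succ, Finset.prod_range_succ, Finset.sum_range_succ]
    have h1 : ∀ i ∈ range k,
        (∏ j ∈ range i, b j) * (a i - b i) * ∏ j ∈ Finset.Ioo i (k+1), a j
          = ((∏ j ∈ range i, b j) * (a i - b i) * ∏ j ∈ Finset.Ioo i k, a j) * a k := by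
      intro i hi
      rw [mem_range] at hi
      have hins : Finset.Ioo i (k+1) = insert k (Finset.Ioo i k) := by
        ext j; simp only [Finset.mem_Ioo, Finset.mem_insert]; omega
      rw [hins, Finset.prod_insert (by simp)]
      ring
    have hIoo : Finset.Ioo k (k+1) = (∅ : Finset ℕ) := by
      ext j; simp only [Finset.mem_Ioo, Finset.notMem_empty, iff_false]; omega
    rw [Finset.sum_congr rfl h1, ← Finset.sum_mul, ← ih, hIoo]
    simp only [Finset.prod_empty, mul_one]
    ring

/-- For a very well distributed, well ordered (T.B.R.B.O.) sequence
`u` in the ring of integers `O = {‖x‖ ≤ 1}` of a non-archimedean local field with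
residue field of size `q` and uniformizer `π`, the interpolating polynomials
`Q_k(x) = ∏_{i<k}(x-uᵢ)/∏_{i<k}(u_k-uᵢ)` map `O` into `O` and are
`κ_k`-Lipschitz on `O`, where `κ_k = ‖π‖^{-⌊log_q k⌋}`. -/
theorem stmt10 {K : Type*} [NontriviallyNormedField K] [IsUltrametricDist K]
    [CompleteSpace K] [ProperSpace K]
    (q : ℕ) (hq : 1 < q) (π : K) (hπ0 : π ≠ 0) (hπ1 : ‖π‖ < 1)
    (hπuni : ∀ x : K, x ≠ 0 → ∃ n : ℤ, ‖x‖ = ‖π‖ ^ n)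
    (u : ℕ → K) (hu1 : ∀ k, ‖u k‖ ≤ 1)
    (hwd : ∀ (k : ℕ) (c : K), ‖c‖ ≤ 1 → ∀ m : ℕ, 1 ≤ m →
      ((Finset.range (m * q ^ k)).filter fun i => ‖u i - c‖ ≤ ‖π‖ ^ k).card = m)
    (hwo : ∀ n m : ℕ, n < m → ‖u m - u n‖ = ‖π‖ ^ (padicValNat q (m - n)))
    (Q : ℕ → K → K)
    (hQ : ∀ (k : ℕ) (x : K), Q k x =
      (∏ i ∈ Finset.range k, (x - u i)) / (∏ i ∈ Finset.range k, (u k - u i))) :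
    ∀ k : ℕ, 1 ≤ k →
      (∀ x : K, ‖x‖ ≤ 1 → ‖Q k x‖ ≤ 1) ∧
      (∀ x y : K, ‖x‖ ≤ 1 → ‖y‖ ≤ 1 →
        ‖Q k x - Q k y‖ ≤ (‖π‖ ^ Nat.log q k)⁻¹ * ‖x - y‖) := by
  have hπpos : (0:ℝ) < ‖π‖ := norm_pos_iff.mpr hπ0
  have hπle : ‖π‖ ≤ 1 := hπ1.le
  -- power comparison
  have hiff : ∀ m n : ℕ, ‖π‖ ^ m ≤ ‖π‖ ^ n ↔ n ≤ m := by
    intro m n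
    constructor
    · intro h
      by_contra hc
      push_neg at hc
      exact absurd h (not_le.mpr (pow_lt_pow_right_of_lt_one₀ hπpos hπ1 hc))
    · exact fun h => pow_le_pow_of_le_one hπpos.le hπle h
  -- norms of nonzero elements of the ring of integers are natural powers of ‖π‖
  have hnat : ∀ z : K, z ≠ 0 → ‖z‖ ≤ 1 → ∃ n : ℕ, ‖z‖ = ‖π‖ ^ n := by
    intro z hz hz1
    obtain ⟨n, hn⟩ := hπuni z hz
    rcases le_or_gt 0 n with h | h
    · exact ⟨n.toNat, by rw [hn, ← zpow_natCast, Int.toNat_of_nonneg h]⟩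
    · exfalso
      set m := (-n).toNat with hm
      have hnm : n = -(m : ℤ) := by omega
      have h1 : ‖z‖ = (‖π‖ ^ m)⁻¹ := by
        rw [hn, hnm, zpow_neg, zpow_natCast]
      have hm0 : m ≠ 0 := by omega
      have h2 : ‖π‖ ^ m < 1 := pow_lt_one₀ hπpos.le hπ1 hm0
      have h3 : (1:ℝ) < (‖π‖ ^ m)⁻¹ := (one_lt_inv₀ (pow_pos hπpos m)).mpr h2
      rw [h1] at hz1
      linarith
  -- Lemma A: valuation lower bound by counting
  have normprod : ∀ (S : Finset ℕ) (z : ℕ → K), (∀ i ∈ S, ‖z i‖ ≤ 1) → ∀ R : ℕ,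
      ‖∏ i ∈ S, z i‖
        ≤ ‖π‖ ^ (∑ r ∈ range R, (S.filter fun i => ‖z i‖ ≤ ‖π‖ ^ (r+1)).card) := by
    intro S z hz R
    by_cases h0 : ∃ i ∈ S, z i = 0
    · obtain ⟨i, hi, hzi⟩ := h0
      rw [Finset.prod_eq_zero hi hzi, norm_zero]
      positivity
    · push_neg at h0
      have hex : ∀ i ∈ S, ∃ n : ℕ, ‖z i‖ = ‖π‖ ^ n := fun i hi =>
        hnat (z i) (h0 i hi) (hz i hi)
      choose! n hn using hex
      have hkey : (∑ r ∈ range R, (S.filter fun i => ‖z i‖ ≤ ‖π‖ ^ (r+1)).card)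
          ≤ ∑ i ∈ S, n i := by
        calc (∑ r ∈ range R, (S.filter fun i => ‖z i‖ ≤ ‖π‖ ^ (r+1)).card)
            = ∑ r ∈ range R, ∑ i ∈ S, if ‖z i‖ ≤ ‖π‖ ^ (r+1) then 1 else 0 := by
              refine Finset.sum_congr rfl fun r _ => ?_
              rw [Finset.card_filter]
          _ = ∑ i ∈ S, ∑ r ∈ range R, if ‖z i‖ ≤ ‖π‖ ^ (r+1) then 1 else 0 :=
              Finset.sum_comm
          _ ≤ ∑ i ∈ S, n i := by
              refine Finset.sum_le_sum fun i hi => ?_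
              rw [← Finset.card_filter]
              refine le_trans (Finset.card_le_card ?_) (le_of_eq (Finset.card_range (n i)))
              intro r hr
              simp only [Finset.mem_filter, Finset.mem_range] at hr ⊢
              have h2 : r + 1 ≤ n i := (hiff (n i) (r+1)).mp ((hn i hi).symm.trans_le hr.2)
              omega
      calc ‖∏ i ∈ S, z i‖ = ∏ i ∈ S, ‖z i‖ := norm_prod S z
        _ = ∏ i ∈ S, ‖π‖ ^ n i := Finset.prod_congr rfl hn
        _ = ‖π‖ ^ ∑ i ∈ S, n i := Finset.prod_pow_eq_pow_sum S n ‖π‖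
        _ ≤ _ := pow_le_pow_of_le_one hπpos.le hπle hkey
  -- counting lower bound for initial segments
  have hClow : ∀ (c : K), ‖c‖ ≤ 1 → ∀ (n r : ℕ),
      n / q ^ (r+1) ≤ ((range n).filter fun i => ‖u i - c‖ ≤ ‖π‖ ^ (r+1)).card := by
    intro c hc n r
    set s := r + 1
    set m := n / q ^ s with hm
    rcases Nat.eq_zero_or_pos m with h | h
    · omega
    · have hcard := hwd s c hc m h
      have hsub : m * q ^ s ≤ n := Nat.div_mul_le_self n (q ^ s)
      calc m = ((range (m * q ^ s)).filter fun i => ‖u i - c‖ ≤ ‖π‖ ^ s).card := hcard.symm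
        _ ≤ _ := Finset.card_le_card
            (Finset.filter_subset_filter _ (by exact Finset.range_subset_range.mpr hsub))
  -- counting upper bound
  have hChigh : ∀ (c : K), ‖c‖ ≤ 1 → ∀ (n m r : ℕ), 1 ≤ m → n ≤ m * q ^ (r+1) →
      ((range n).filter fun i => ‖u i - c‖ ≤ ‖π‖ ^ (r+1)).card ≤ m := by
    intro c hc n m r hm hn
    rw [← hwd (r+1) c hc m hm]
    exact Finset.card_le_card
      (Finset.filter_subset_filter _ (Finset.range_subset_range.mpr hn))
  -- main
  intro k hk
  set R := Nat.log q k with hR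
  have hk0 : k ≠ 0 := by omega
  have hqr : ∀ r : ℕ, 0 < q ^ (r+1) := fun r => Nat.pow_pos (by omega)
  have hdivsucc : ∀ (a r : ℕ), a < (a / q ^ (r+1) + 1) * q ^ (r+1) := by
    intro a r
    have h1 := Nat.div_add_mod a (q ^ (r+1))
    have h2 := Nat.mod_lt a (hqr r)
    have h3 : (a / q ^ (r+1) + 1) * q ^ (r+1)
        = q ^ (r+1) * (a / q ^ (r+1)) + q ^ (r+1) := by ring
    omega
  have hEpos : ∀ r < R, 1 ≤ k / q ^ (r+1) := by
    intro r hr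
    have : q ^ (r+1) ≤ k := (Nat.le_log_iff_pow_le hq hk0).mp (by omega)
    exact (Nat.one_le_div_iff (hqr r)).mpr this
  set Dval := ∑ r ∈ range R, k / q ^ (r+1) with hDval
  have hRD : R ≤ Dval := by
    calc R = ∑ _r ∈ range R, 1 := by simp
      _ ≤ Dval := Finset.sum_le_sum fun r hr => hEpos r (mem_range.mp hr)
  -- denominator count is exactly k / q^(r+1)
  have hCden : ∀ r < R, ((range k).filter fun i => ‖u k - u i‖ ≤ ‖π‖ ^ (r+1)).card
      = k / q ^ (r+1) := by
    intro r _
    have hflip : ((range k).filter fun i => ‖u k - u i‖ ≤ ‖π‖ ^ (r+1))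
        = ((range k).filter fun i => ‖u i - u k‖ ≤ ‖π‖ ^ (r+1)) := by
      refine Finset.filter_congr fun i _ => by rw [norm_sub_rev]
    rw [hflip]
    refine le_antisymm ?_ (hClow (u k) (hu1 k) k r)
    -- upper bound: insert k
    have hk_not : k ∉ (range k).filter fun i => ‖u i - u k‖ ≤ ‖π‖ ^ (r+1) := by
      simp [Finset.mem_filter]
    have hins : (insert k ((range k).filter fun i => ‖u i - u k‖ ≤ ‖π‖ ^ (r+1)))
        ⊆ (range ((k / q ^ (r+1) + 1) * q ^ (r+1))).filter
            fun i => ‖u i - u k‖ ≤ ‖π‖ ^ (r+1) := by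
      intro j hj
      rcases Finset.mem_insert.mp hj with h | h
      · refine Finset.mem_filter.mpr ⟨Finset.mem_range.mpr ?_, ?_⟩
        · rw [h]; exact hdivsucc k r
        · rw [h]; simp only [sub_self, norm_zero]; positivity
      · obtain ⟨hj1, hj2⟩ := Finset.mem_filter.mp h
        refine Finset.mem_filter.mpr ⟨Finset.mem_range.mpr ?_, hj2⟩
        have := Finset.mem_range.mp hj1
        have := hdivsucc k r
        omega
    set mm := k / q ^ (r+1) with hmm
    have hcard := Finset.card_le_card hins
    rw [Finset.card_insert_of_notMem hk_not,
      hwd (r+1) (u k) (hu1 k) (mm + 1) (Nat.le_add_left 1 mm)] at hcard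
    omega
  -- exact norm of the denominator
  have hD : ‖∏ i ∈ range k, (u k - u i)‖ = ‖π‖ ^ Dval := by
    have hval : ∀ i ∈ range k, ‖u k - u i‖ = ‖π‖ ^ padicValNat q (k - i) := fun i hi =>
      hwo i k (mem_range.mp hi)
    have hvle : ∀ i ∈ range k, padicValNat q (k - i) ≤ R := by
      intro i hi
      rw [mem_range] at hi
      have h1 : q ^ padicValNat q (k - i) ≤ k :=
        le_trans (Nat.le_of_dvd (by omega) pow_padicValNat_dvd) (by omega)
      exact (Nat.le_log_iff_pow_le hq hk0).mpr h1
    calc ‖∏ i ∈ range k, (u k - u i)‖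
        = ∏ i ∈ range k, ‖u k - u i‖ := norm_prod _ _
      _ = ∏ i ∈ range k, ‖π‖ ^ padicValNat q (k - i) := Finset.prod_congr rfl hval
      _ = ‖π‖ ^ ∑ i ∈ range k, padicValNat q (k - i) := Finset.prod_pow_eq_pow_sum _ _ _
      _ = ‖π‖ ^ Dval := by
        congr 1
        calc ∑ i ∈ range k, padicValNat q (k - i)
            = ∑ i ∈ range k, ((range R).filter fun r => r + 1 ≤ padicValNat q (k - i)).card := by
              refine Finset.sum_congr rfl fun i hi => ?_
              have h1 : ((range R).filter fun r => r + 1 ≤ padicValNat q (k - i))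
                  = range (padicValNat q (k - i)) := by
                ext r
                simp only [Finset.mem_filter, Finset.mem_range]
                have := hvle i hi
                omega
              rw [h1, Finset.card_range]
          _ = ∑ i ∈ range k, ∑ r ∈ range R,
                if r + 1 ≤ padicValNat q (k - i) then 1 else 0 := by
              refine Finset.sum_congr rfl fun i _ => by rw [Finset.card_filter]
          _ = ∑ r ∈ range R, ∑ i ∈ range k,
                if r + 1 ≤ padicValNat q (k - i) then 1 else 0 := Finset.sum_comm
          _ = ∑ r ∈ range R, k / q ^ (r+1) := by
              refine Finset.sum_congr rfl fun r hr => ?_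
              rw [← Finset.card_filter]
              rw [← hCden r (mem_range.mp hr)]
              congr 1
              refine Finset.filter_congr fun i hi => ?_
              rw [hwo i k (mem_range.mp hi)]
              exact (hiff _ _).symm
  have hDpos : (0:ℝ) < ‖π‖ ^ Dval := pow_pos hπpos Dval
  have hsub1 : ∀ (x : K), ‖x‖ ≤ 1 → ∀ i, ‖x - u i‖ ≤ 1 := by
    intro x hx i
    calc ‖x - u i‖ = ‖x + -u i‖ := by rw [sub_eq_add_neg]
      _ ≤ max ‖x‖ ‖-u i‖ := IsUltrametricDist.norm_add_le_max x (-u i)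
      _ ≤ 1 := max_le hx (by rw [norm_neg]; exact hu1 i)
  -- numerator bound
  have hnum : ∀ (x : K), ‖x‖ ≤ 1 → ‖∏ i ∈ range k, (x - u i)‖ ≤ ‖π‖ ^ Dval := by
    intro x hx
    refine le_trans (normprod (range k) (fun i => x - u i) (fun i _ => hsub1 x hx i) R) ?_
    refine pow_le_pow_of_le_one hπpos.le hπle ?_
    refine Finset.sum_le_sum fun r _ => ?_
    refine le_trans (hClow x hx k r) (Finset.card_le_card ?_)
    refine Finset.monotone_filter_right _ ?_
    intro i _ hi
    rwa [norm_sub_rev] at hi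
  constructor
  · -- Part 1
    intro x hx
    rw [hQ, norm_div, hD]
    rw [div_le_one hDpos]
    exact hnum x hx
  · -- Part 2: Lipschitz
    intro x y hx hy
    rw [hQ, hQ, div_sub_div_same, norm_div, hD]
    have htele := tele_prod (fun j => x - u j) (fun j => y - u j) k
    simp only [sub_sub_sub_cancel_right] at htele
    -- bound each term
    have hterm : ∀ i ∈ range k,
        ‖(∏ j ∈ range i, (y - u j)) * (x - y) * ∏ j ∈ Finset.Ioo i k, (x - u j)‖
          ≤ ‖π‖ ^ (Dval - R) * ‖x - y‖ := by
      intro i hi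
      rw [mem_range] at hi
      -- counts
      have hY := normprod (range i) (fun j => y - u j) (fun j _ => hsub1 y hy j) R
      have hX := normprod (Finset.Ioo i k) (fun j => x - u j) (fun j _ => hsub1 x hx j) R
      set cY := fun r => ((range i).filter fun j => ‖y - u j‖ ≤ ‖π‖ ^ (r+1)).card with hcY
      set cX := fun r => ((Finset.Ioo i k).filter fun j => ‖x - u j‖ ≤ ‖π‖ ^ (r+1)).card
        with hcX
      have hcount : ∀ r < R, k / q ^ (r+1) ≤ cY r + cX r + 1 := by
        intro r hr
        have h1 : i / q ^ (r+1) ≤ cY r := by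
          refine le_trans (hClow y hy i r) (Finset.card_le_card ?_)
          refine Finset.monotone_filter_right _ fun j _ hj => by rwa [norm_sub_rev] at hj
        have h2 : ((range (i+1)).filter fun j => ‖x - u j‖ ≤ ‖π‖ ^ (r+1)).card
            ≤ i / q ^ (r+1) + 1 := by
          have h2' := hChigh x hx (i+1) (i / q ^ (r+1) + 1) r (Nat.le_add_left 1 _)
            (hdivsucc i r)
          have he : ((range (i+1)).filter fun j => ‖x - u j‖ ≤ ‖π‖ ^ (r+1))
              = ((range (i+1)).filter fun j => ‖u j - x‖ ≤ ‖π‖ ^ (r+1)) :=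
            Finset.filter_congr fun j _ => by rw [norm_sub_rev]
          rw [he]
          exact h2'
        have h3 : k / q ^ (r+1)
            ≤ ((range k).filter fun j => ‖x - u j‖ ≤ ‖π‖ ^ (r+1)).card := by
          refine le_trans (hClow x hx k r) (Finset.card_le_card ?_)
          refine Finset.monotone_filter_right _ fun j _ hj => by rwa [norm_sub_rev] at hj
        have h4 : ((range k).filter fun j => ‖x - u j‖ ≤ ‖π‖ ^ (r+1)).card
            ≤ cX r + ((range (i+1)).filter fun j => ‖x - u j‖ ≤ ‖π‖ ^ (r+1)).card := by
          set A := (range k).filter fun j => ‖x - u j‖ ≤ ‖π‖ ^ (r+1) with hA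
          set B := (range (i+1)).filter fun j => ‖x - u j‖ ≤ ‖π‖ ^ (r+1) with hB
          have hAB : A \ B ⊆ (Finset.Ioo i k).filter fun j => ‖x - u j‖ ≤ ‖π‖ ^ (r+1) := by
            intro j hj
            rw [Finset.mem_sdiff, hA, hB, Finset.mem_filter, Finset.mem_filter,
              Finset.mem_range, Finset.mem_range] at hj
            rw [Finset.mem_filter, Finset.mem_Ioo]
            refine ⟨⟨?_, hj.1.1⟩, hj.1.2⟩
            by_contra hcon
            exact hj.2 ⟨by omega, hj.1.2⟩
          have hc1 := Finset.card_le_card_sdiff_add_card (s := A) (t := B)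
          have hc2 := Finset.card_le_card hAB
          have hc3 : ((Finset.Ioo i k).filter fun j => ‖x - u j‖ ≤ ‖π‖ ^ (r+1)).card
              = cX r := rfl
          omega
        have h5 : ((Finset.Ioo i k).filter fun j => ‖x - u j‖ ≤ ‖π‖ ^ (r+1)).card
            = cX r := rfl
        omega
      have hsum : Dval - R ≤ (∑ r ∈ range R, cY r) + ∑ r ∈ range R, cX r := by
        have : Dval ≤ (∑ r ∈ range R, cY r) + (∑ r ∈ range R, cX r) + R := by
          rw [hDval]
          calc ∑ r ∈ range R, k / q ^ (r+1)
              ≤ ∑ r ∈ range R, (cY r + cX r + 1) :=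
                Finset.sum_le_sum fun r hr => hcount r (mem_range.mp hr)
            _ = (∑ r ∈ range R, cY r) + (∑ r ∈ range R, cX r) + R := by
                rw [Finset.sum_add_distrib, Finset.sum_add_distrib]
                simp
        omega
      calc ‖(∏ j ∈ range i, (y - u j)) * (x - y) * ∏ j ∈ Finset.Ioo i k, (x - u j)‖
          = ‖∏ j ∈ range i, (y - u j)‖ * ‖∏ j ∈ Finset.Ioo i k, (x - u j)‖ * ‖x - y‖ := by
            rw [norm_mul, norm_mul]; ring
        _ ≤ (‖π‖ ^ ∑ r ∈ range R, cY r) * (‖π‖ ^ ∑ r ∈ range R, cX r) * ‖x - y‖ := by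
            refine mul_le_mul_of_nonneg_right (mul_le_mul hY hX (norm_nonneg _) (by positivity))
              (norm_nonneg _)
        _ = ‖π‖ ^ ((∑ r ∈ range R, cY r) + ∑ r ∈ range R, cX r) * ‖x - y‖ := by
            rw [pow_add]
        _ ≤ ‖π‖ ^ (Dval - R) * ‖x - y‖ := by
            refine mul_le_mul_of_nonneg_right
              (pow_le_pow_of_le_one hπpos.le hπle hsum) (norm_nonneg _)
    have hAB : ‖∏ j ∈ range k, (x - u j) - ∏ j ∈ range k, (y - u j)‖
        ≤ ‖π‖ ^ (Dval - R) * ‖x - y‖ := by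
      rw [htele]
      exact IsUltrametricDist.norm_sum_le_of_forall_le_of_nonneg (by positivity) hterm
    calc ‖∏ j ∈ range k, (x - u j) - ∏ j ∈ range k, (y - u j)‖ / ‖π‖ ^ Dval
        ≤ (‖π‖ ^ (Dval - R) * ‖x - y‖) / ‖π‖ ^ Dval := by gcongr
      _ = (‖π‖ ^ R)⁻¹ * ‖x - y‖ := by
          have hsplit : ‖π‖ ^ Dval = ‖π‖ ^ (Dval - R) * ‖π‖ ^ R := by
            rw [← pow_add]
            congr 1
            omega
          have ha : (‖π‖ ^ (Dval - R)) ≠ 0 := by positivity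
          have hb : (‖π‖ ^ R) ≠ 0 := by positivity
          rw [hsplit]
          field_simp
end

section
/- Let {u_k} be a T.B.R.B.O. sequence in O with interpolating polynomials Q_k as above, and suppose k = q^ℓ for some ℓ ≥ 0. Then |Q_k(x) − Q_k(y)| = κ_k·|x−y| for all x, y ∈ O with |x−y| ≤ 1/κ_k, where κ_k = |π|^{−ℓ}. -/
open Finset

section Aux

variable {K : Type*} [NontriviallyNormedField K] [IsUltrametricDist K]

private lemma aux_add_eq_right {a b : K} (h : ‖a‖ < ‖b‖) : ‖a + b‖ = ‖b‖ := by
  refine le_antisymm ((IsUltrametricDist.norm_add_le_max a b).trans (max_le h.le le_rfl)) ?_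
  have hb : (a + b) + (-a) = b := by ring
  have h2 : ‖b‖ ≤ max ‖a + b‖ ‖a‖ := by
    calc ‖b‖ = ‖(a + b) + (-a)‖ := by rw [hb]
    _ ≤ max ‖a + b‖ ‖-a‖ := IsUltrametricDist.norm_add_le_max _ _
    _ = max ‖a + b‖ ‖a‖ := by rw [norm_neg]
  rcases max_cases ‖a + b‖ ‖a‖ with ⟨he, _⟩ | ⟨he, _⟩
  · rwa [he] at h2
  · rw [he] at h2; linarith

private lemma aux_pow_le_iff {a : ℝ} (h0 : 0 < a) (h1 : a < 1) (m n : ℕ) :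
    a ^ m ≤ a ^ n ↔ n ≤ m := by
  constructor
  · intro h
    by_contra hc
    push_neg at hc
    have := pow_lt_pow_right_of_lt_one₀ h0 h1 hc
    linarith
  · exact fun h => pow_le_pow_of_le_one h0.le h1.le h

private lemma aux_pow_repr {π z : K} (hπ0 : π ≠ 0) (hπ1 : ‖π‖ < 1)
    (hπuni : ∀ x : K, x ≠ 0 → ∃ n : ℤ, ‖x‖ = ‖π‖ ^ n) {l : ℕ}
    (h1 : ‖z‖ ≤ 1) (h2 : ‖π‖ ^ l < ‖z‖) : ∃ n : ℕ, n < l ∧ ‖z‖ = ‖π‖ ^ n := by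
  have hπpos : (0:ℝ) < ‖π‖ := norm_pos_iff.mpr hπ0
  have hz : z ≠ 0 := by
    intro h
    rw [h, norm_zero] at h2
    exact absurd h2 (not_lt.mpr (pow_nonneg hπpos.le l))
  obtain ⟨n, hn⟩ := hπuni z hz
  have hn0 : (0:ℤ) ≤ n := by
    have hle : ‖π‖ ^ n ≤ ‖π‖ ^ (0:ℤ) := by
      rw [zpow_zero, ← hn]; exact h1
    exact (zpow_le_zpow_iff_right_of_lt_one₀ hπpos hπ1).mp hle
  have hnl : n < (l:ℤ) := by
    have hlt : ‖π‖ ^ (l:ℤ) < ‖π‖ ^ n := by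
      rw [zpow_natCast, ← hn]; exact h2
    exact (zpow_lt_zpow_iff_right_of_lt_one₀ hπpos hπ1).mp hlt
  refine ⟨n.toNat, by omega, ?_⟩
  rw [hn, ← zpow_natCast, Int.toNat_of_nonneg hn0]

end Aux

/-- For a T.B.R.B.O. sequence `u` in the ring of integers of a
non-archimedean local field and `k = q^ℓ`, the interpolating polynomial `Q_k`
scales distances exactly by `κ_k = ‖π‖^{-ℓ}` at scale `1/κ_k = ‖π‖^ℓ`:
`‖Q_k(x) - Q_k(y)‖ = κ_k·‖x - y‖` for all `x, y` in the unit ball with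
`‖x - y‖ ≤ ‖π‖^ℓ`. -/
theorem stmt11 {K : Type*} [NontriviallyNormedField K] [IsUltrametricDist K]
    [CompleteSpace K] [ProperSpace K]
    (q : ℕ) (hq : 1 < q) (π : K) (hπ0 : π ≠ 0) (hπ1 : ‖π‖ < 1)
    (hπuni : ∀ x : K, x ≠ 0 → ∃ n : ℤ, ‖x‖ = ‖π‖ ^ n)
    (u : ℕ → K) (hu1 : ∀ k, ‖u k‖ ≤ 1)
    (hwd : ∀ (k : ℕ) (c : K), ‖c‖ ≤ 1 → ∀ m : ℕ, 1 ≤ m →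
      ((Finset.range (m * q ^ k)).filter fun i => ‖u i - c‖ ≤ ‖π‖ ^ k).card = m)
    (hwo : ∀ n m : ℕ, n < m → ‖u m - u n‖ = ‖π‖ ^ (padicValNat q (m - n)))
    (Q : ℕ → K → K)
    (hQ : ∀ (k : ℕ) (x : K), Q k x =
      (∏ i ∈ Finset.range k, (x - u i)) / (∏ i ∈ Finset.range k, (u k - u i))) :
    ∀ (l : ℕ) (x y : K), ‖x‖ ≤ 1 → ‖y‖ ≤ 1 → ‖x - y‖ ≤ ‖π‖ ^ l →
      ‖Q (q ^ l) x - Q (q ^ l) y‖ = (‖π‖ ^ l)⁻¹ * ‖x - y‖ := by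
  intro l x y hx hy hxy
  have hπpos : (0:ℝ) < ‖π‖ := norm_pos_iff.mpr hπ0
  have hq0 : 0 < q := lt_trans Nat.zero_lt_one hq
  set k := q ^ l with hk
  -- subtraction of unit-ball elements stays in the unit ball
  have hsub1 : ∀ a b : K, ‖a‖ ≤ 1 → ‖b‖ ≤ 1 → ‖a - b‖ ≤ 1 := by
    intro a b ha hb
    rw [sub_eq_add_neg]
    exact (IsUltrametricDist.norm_add_le_max a (-b)).trans (max_le ha (by rwa [norm_neg]))
  -- counting
  have hcount : ∀ c : K, ‖c‖ ≤ 1 → ∀ m, m ≤ l →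
      ((Finset.range k).filter fun i => ‖u i - c‖ ≤ ‖π‖ ^ m).card = q ^ (l - m) := by
    intro c hc m hm
    have h1 : 1 ≤ q ^ (l - m) := Nat.one_le_pow _ _ hq0
    have h2 := hwd m c hc (q ^ (l - m)) h1
    rwa [← pow_add, Nat.sub_add_cancel hm] at h2
  -- the unique closest point
  have hclose : ∀ c : K, ‖c‖ ≤ 1 → ∃ j ∈ Finset.range k, ‖u j - c‖ ≤ ‖π‖ ^ l ∧
      ∀ i ∈ Finset.range k, i ≠ j → ‖π‖ ^ l < ‖u i - c‖ := by
    intro c hc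
    have h1 : ((Finset.range k).filter fun i => ‖u i - c‖ ≤ ‖π‖ ^ l).card = 1 := by
      have := hcount c hc l le_rfl
      simpa using this
    obtain ⟨j, hj⟩ := Finset.card_eq_one.mp h1
    have hjmem : j ∈ (Finset.range k).filter fun i => ‖u i - c‖ ≤ ‖π‖ ^ l := by
      rw [hj]; exact Finset.mem_singleton_self j
    rw [Finset.mem_filter] at hjmem
    refine ⟨j, hjmem.1, hjmem.2, fun i hi hij => ?_⟩
    by_contra hcon
    push_neg at hcon
    have : i ∈ ({j} : Finset ℕ) := by
      rw [← hj]; exact Finset.mem_filter.mpr ⟨hi, hcon⟩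
    exact hij (Finset.mem_singleton.mp this)
  -- the generic product computation
  set S : ℕ := ∑ m ∈ Finset.range l, (q ^ (l - (m + 1)) - 1) with hS
  have hprodgen : ∀ c : K, ‖c‖ ≤ 1 → ∀ j, j ∈ Finset.range k → ‖u j - c‖ ≤ ‖π‖ ^ l →
      (∀ i ∈ Finset.range k, i ≠ j → ‖π‖ ^ l < ‖u i - c‖) →
      ∏ i ∈ (Finset.range k).erase j, ‖u i - c‖ = ‖π‖ ^ S := by
    intro c hc j hj hjle hother
    have hfac : ∀ i ∈ (Finset.range k).erase j,
        ‖u i - c‖ =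
          ‖π‖ ^ (((Finset.range l).filter fun m => ‖u i - c‖ ≤ ‖π‖ ^ (m + 1)).card) := by
      intro i hi
      obtain ⟨hine, hir⟩ := Finset.mem_erase.mp hi
      have hle1 : ‖u i - c‖ ≤ 1 := hsub1 _ _ (hu1 i) hc
      obtain ⟨n, hnl, hn⟩ := aux_pow_repr hπ0 hπ1 hπuni hle1 (hother i hir hine)
      have hfeq : ((Finset.range l).filter fun m => ‖u i - c‖ ≤ ‖π‖ ^ (m + 1)) =
          Finset.range n := by
        ext m
        simp only [Finset.mem_filter, Finset.mem_range, hn,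
          aux_pow_le_iff hπpos hπ1]
        omega
      rw [hfeq, Finset.card_range]
      exact hn
    rw [Finset.prod_congr rfl hfac, Finset.prod_pow_eq_pow_sum]
    congr 1
    have hswap : ∑ i ∈ (Finset.range k).erase j,
          ((Finset.range l).filter fun m => ‖u i - c‖ ≤ ‖π‖ ^ (m + 1)).card
        = ∑ m ∈ Finset.range l,
          (((Finset.range k).erase j).filter fun i => ‖u i - c‖ ≤ ‖π‖ ^ (m + 1)).card := by
      simp_rw [Finset.card_filter]
      exact Finset.sum_comm
    rw [hswap, hS]
    apply Finset.sum_congr rfl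
    intro m hm
    rw [Finset.mem_range] at hm
    have hm1 : m + 1 ≤ l := hm
    have hcard := hcount c hc (m + 1) hm1
    have hjfil : j ∈ (Finset.range k).filter fun i => ‖u i - c‖ ≤ ‖π‖ ^ (m + 1) :=
      Finset.mem_filter.mpr ⟨hj, le_trans hjle (pow_le_pow_of_le_one hπpos.le hπ1.le hm1)⟩
    rw [Finset.filter_erase, Finset.card_erase_of_mem hjfil, hcard]
  -- closest points for x and for u k
  obtain ⟨j0, hj0r, hj0le, hj0other⟩ := hclose x hx
  obtain ⟨j1, hj1r, hj1le, hj1other⟩ := hclose (u k) (hu1 k)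
  -- the denominator's closest factor has norm exactly ‖π‖ ^ l
  have hdenj1 : ‖u k - u j1‖ = ‖π‖ ^ l := by
    have hj1k : j1 < k := Finset.mem_range.mp hj1r
    have hwoj := hwo j1 k hj1k
    have h1 : (‖π‖:ℝ) ^ padicValNat q (k - j1) ≤ ‖π‖ ^ l := by
      rw [← hwoj, norm_sub_rev]; exact hj1le
    have hvl : l ≤ padicValNat q (k - j1) := (aux_pow_le_iff hπpos hπ1 _ _).mp h1
    have hdvd : q ^ padicValNat q (k - j1) ∣ (k - j1) := pow_padicValNat_dvd
    have hpos : 0 < k - j1 := Nat.sub_pos_of_lt hj1k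
    have hle : q ^ padicValNat q (k - j1) ≤ q ^ l :=
      le_trans (Nat.le_of_dvd hpos hdvd) (le_trans (Nat.sub_le k j1) (le_of_eq hk))
    have hvl' : padicValNat q (k - j1) ≤ l := (Nat.pow_le_pow_iff_right hq).mp hle
    rw [hwoj, le_antisymm hvl' hvl]
  set A : Finset ℕ := (Finset.range k).erase j0 with hA
  -- norms of factors for x and y agree off j0
  have hxgt : ∀ i ∈ A, ‖π‖ ^ l < ‖x - u i‖ := by
    intro i hi
    obtain ⟨hine, hir⟩ := Finset.mem_erase.mp hi
    have := hj0other i hir hine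
    rwa [norm_sub_rev] at this
  have hxle1 : ∀ i : ℕ, ‖x - u i‖ ≤ 1 := fun i => hsub1 _ _ hx (hu1 i)
  have hage : ∀ i ∈ A, ‖π‖ ^ (l - 1) ≤ ‖x - u i‖ := by
    intro i hi
    obtain ⟨n, hnl, hn⟩ := aux_pow_repr hπ0 hπ1 hπuni (hxle1 i) (hxgt i hi)
    rw [hn]
    exact pow_le_pow_of_le_one hπpos.le hπ1.le (by omega)
  have hxy' : ‖y - x‖ ≤ ‖π‖ ^ l := by rwa [norm_sub_rev] at hxy
  have heq : ∀ i ∈ A, ‖y - u i‖ = ‖x - u i‖ := by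
    intro i hi
    have hyd : y - u i = (y - x) + (x - u i) := by ring
    rw [hyd]
    exact aux_add_eq_right (lt_of_le_of_lt hxy' (hxgt i hi))
  -- norms of the two partial products
  have hprodx : ∏ i ∈ A, ‖x - u i‖ = ‖π‖ ^ S := by
    calc ∏ i ∈ A, ‖x - u i‖ = ∏ i ∈ A, ‖u i - x‖ :=
          Finset.prod_congr rfl fun i _ => norm_sub_rev _ _
      _ = ‖π‖ ^ S := hprodgen x hx j0 hj0r hj0le hj0other
  set B := ∏ i ∈ A, (x - u i) with hB
  set C := ∏ i ∈ A, (y - u i) with hC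
  have hBnorm : ‖B‖ = ‖π‖ ^ S := by rw [hB, norm_prod]; exact hprodx
  have hCnorm : ‖C‖ = ‖π‖ ^ S := by
    rw [hC, norm_prod]
    calc ∏ i ∈ A, ‖y - u i‖ = ∏ i ∈ A, ‖x - u i‖ := Finset.prod_congr rfl heq
      _ = ‖π‖ ^ S := hprodx
  -- denominator norm
  have hDnorm : ‖∏ i ∈ Finset.range k, (u k - u i)‖ = ‖π‖ ^ l * ‖π‖ ^ S := by
    rw [← Finset.mul_prod_erase _ _ hj1r, norm_mul, norm_prod, hdenj1]
    congr 1
    calc ∏ i ∈ (Finset.range k).erase j1, ‖u k - u i‖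
        = ∏ i ∈ (Finset.range k).erase j1, ‖u i - u k‖ :=
          Finset.prod_congr rfl fun i _ => norm_sub_rev _ _
      _ = ‖π‖ ^ S := hprodgen (u k) (hu1 k) j1 hj1r hj1le hj1other
  -- handle the trivial case x = y
  by_cases hxyeq : x = y
  · simp [hxyeq]
  have hxyne : x - y ≠ 0 := sub_ne_zero_of_ne hxyeq
  have hxypos : 0 < ‖x - y‖ := norm_pos_iff.mpr hxyne
  -- telescoping estimate
  have htel : ∀ s : Finset ℕ, s ⊆ A →
      ‖π‖ ^ (l - 1) * ‖(∏ j ∈ s, (x - u j)) - ∏ j ∈ s, (y - u j)‖ ≤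
        ‖x - y‖ * ∏ j ∈ s, ‖x - u j‖ := by
    intro s
    induction s using Finset.induction_on with
    | empty => simp
    | @insert a s ha IH =>
      intro hsub
      have haA : a ∈ A := hsub (Finset.mem_insert_self a s)
      have hsA : s ⊆ A := fun i hi => hsub (Finset.mem_insert_of_mem hi)
      rw [Finset.prod_insert ha, Finset.prod_insert ha, Finset.prod_insert ha]
      have key : (x - u a) * ∏ j ∈ s, (x - u j) - (y - u a) * ∏ j ∈ s, (y - u j)
          = (x - u a) * ((∏ j ∈ s, (x - u j)) - ∏ j ∈ s, (y - u j))
            + (x - y) * ∏ j ∈ s, (y - u j) := by ring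
      rw [key]
      have hyprod : ‖∏ j ∈ s, (y - u j)‖ = ∏ j ∈ s, ‖x - u j‖ := by
        rw [norm_prod]
        exact Finset.prod_congr rfl fun i hi => heq i (hsA hi)
      have hprodnn : (0:ℝ) ≤ ∏ j ∈ s, ‖x - u j‖ :=
        Finset.prod_nonneg fun i _ => norm_nonneg _
      refine le_trans (mul_le_mul_of_nonneg_left
        (IsUltrametricDist.norm_add_le_max _ _) (by positivity)) ?_
      rw [norm_mul, norm_mul, mul_max_of_nonneg _ _ (by positivity)]
      refine max_le ?_ ?_
      · calc ‖π‖ ^ (l - 1) * (‖x - u a‖ * ‖(∏ j ∈ s, (x - u j)) - ∏ j ∈ s, (y - u j)‖)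
            = ‖x - u a‖ * (‖π‖ ^ (l - 1) * ‖(∏ j ∈ s, (x - u j)) - ∏ j ∈ s, (y - u j)‖) := by
              ring
          _ ≤ ‖x - u a‖ * (‖x - y‖ * ∏ j ∈ s, ‖x - u j‖) :=
              mul_le_mul_of_nonneg_left (IH hsA) (norm_nonneg _)
          _ = ‖x - y‖ * (‖x - u a‖ * ∏ j ∈ s, ‖x - u j‖) := by ring
      · rw [hyprod]
        calc ‖π‖ ^ (l - 1) * (‖x - y‖ * ∏ j ∈ s, ‖x - u j‖)
            = ‖x - y‖ * (‖π‖ ^ (l - 1) * ∏ j ∈ s, ‖x - u j‖) := by ring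
          _ ≤ ‖x - y‖ * (‖x - u a‖ * ∏ j ∈ s, ‖x - u j‖) :=
              mul_le_mul_of_nonneg_left
                (mul_le_mul_of_nonneg_right (hage a haA) hprodnn) (norm_nonneg _)
  -- the key strict inequality
  have hstrict : ‖(x - u j0) * (B - C)‖ < ‖x - y‖ * ‖π‖ ^ S := by
    rcases Nat.eq_zero_or_pos l with hl0 | hlpos
    · have hk1 : k = 1 := by rw [hk, hl0, pow_zero]
      have hj00 : j0 = 0 := by
        have := Finset.mem_range.mp hj0r
        omega
      have hAempty : A = ∅ := by
        rw [hA, hk1, hj00, Finset.range_one, Finset.erase_singleton]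
      have hBC : B = C := by rw [hB, hC, hAempty]; simp
      rw [hBC, sub_self, mul_zero, norm_zero]
      exact mul_pos hxypos (pow_pos hπpos S)
    · have hl1 : l - 1 + 1 = l := Nat.succ_pred_eq_of_pos hlpos
      have h1 := htel A (Finset.Subset.refl A)
      rw [hprodx] at h1
      have h3 : ‖x - u j0‖ ≤ ‖π‖ ^ l := by rw [norm_sub_rev]; exact hj0le
      have hpow : ‖π‖ ^ l = ‖π‖ ^ (l - 1) * ‖π‖ := by rw [← pow_succ, hl1]
      calc ‖(x - u j0) * (B - C)‖ = ‖x - u j0‖ * ‖B - C‖ := norm_mul _ _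
        _ ≤ ‖π‖ ^ l * ‖B - C‖ := mul_le_mul_of_nonneg_right h3 (norm_nonneg _)
        _ = ‖π‖ * (‖π‖ ^ (l - 1) * ‖B - C‖) := by rw [hpow]; ring
        _ ≤ ‖π‖ * (‖x - y‖ * ‖π‖ ^ S) := mul_le_mul_of_nonneg_left h1 hπpos.le
        _ < 1 * (‖x - y‖ * ‖π‖ ^ S) :=
            mul_lt_mul_of_pos_right hπ1 (mul_pos hxypos (pow_pos hπpos S))
        _ = ‖x - y‖ * ‖π‖ ^ S := one_mul _
  -- numerator norm
  have hmain : ‖(∏ i ∈ Finset.range k, (x - u i)) - ∏ i ∈ Finset.range k, (y - u i)‖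
      = ‖x - y‖ * ‖π‖ ^ S := by
    rw [← Finset.mul_prod_erase _ _ hj0r, ← Finset.mul_prod_erase _ (fun i => y - u i) hj0r,
      ← hA, ← hB, ← hC]
    have key : (x - u j0) * B - (y - u j0) * C
        = (x - u j0) * (B - C) + (x - y) * C := by ring
    rw [key]
    rw [aux_add_eq_right (by rw [norm_mul (x - y) C, hCnorm]; exact hstrict)]
    rw [norm_mul, hCnorm]
  -- final assembly
  rw [hQ, hQ, div_sub_div_same, norm_div, hmain, hDnorm]
  have hS0 : (0:ℝ) < ‖π‖ ^ S := pow_pos hπpos S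
  have hl0 : (0:ℝ) < ‖π‖ ^ l := pow_pos hπpos l
  field_simp
end

section
/- For any u ∈ Z_p^× (p-adic unit) and any polynomial F ∈ Z_p[x], the map T : Z_p → Z_p defined by T(x) = u·C(x,p) + F(x), where C(x,p) = x(x−1)⋯(x−p+1)/p!, satisfies |T(x)−T(y)| = p·|x−y| whenever |x−y| ≤ 1/p, and hence defines a measure-preserving transformation of Z_p isomorphic to the Bernoulli shift on (Z/pZ)^N. In particular the Woodcock–Smart map x ↦ (x^p − x)/p is Bernoulli on Z_p. -/
open MeasureTheory PadicInt

namespace Stmt15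

variable {p : ℕ} [hp : Fact p.Prime]

lemma toZModPow_eq_iff (n : ℕ) (x y : ℤ_[p]) :
    toZModPow n x = toZModPow n y ↔ ‖x - y‖ ≤ (p : ℝ) ^ (-(n : ℤ)) := by
  rw [← sub_eq_zero, ← map_sub, ← RingHom.mem_ker, ker_toZModPow,
    ← norm_le_pow_iff_mem_span_pow]

lemma toZMod_eq_iff (x y : ℤ_[p]) :
    toZMod x = toZMod y ↔ ‖x - y‖ ≤ (p : ℝ)⁻¹ := by
  rw [← sub_eq_zero, ← map_sub, ← RingHom.mem_ker, ker_toZMod, maximalIdeal_eq_span_p]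
  have := norm_le_pow_iff_mem_span_pow (x - y) 1
  rw [pow_one] at this
  rw [← this]
  norm_num

lemma pinv_lt_one : ((p : ℝ))⁻¹ < 1 :=
  inv_lt_one_of_one_lt₀ (by exact_mod_cast hp.out.one_lt)

lemma p_pos : (0 : ℝ) < p := by exact_mod_cast hp.out.pos

lemma pow_neg_eq (n : ℕ) : (p : ℝ) ^ (-(n : ℤ)) = ((p : ℝ)⁻¹) ^ n := by
  rw [zpow_neg, zpow_natCast, inv_pow]

lemma ultra (a b : ℤ_[p]) : ‖a + b‖ ≤ max ‖a‖ ‖b‖ := PadicInt.nonarchimedean a b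

lemma ultra_sub (a b c : ℤ_[p]) : ‖a - c‖ ≤ max ‖a - b‖ ‖b - c‖ := by
  simpa using PadicInt.nonarchimedean (a - b) (b - c)

/-- An isometry of `ℤ_[p]` is surjective. -/
lemma surjective_of_isometry (g : ℤ_[p] → ℤ_[p])
    (hg : ∀ a b, ‖g a - g b‖ = ‖a - b‖) : Function.Surjective g := by
  intro z
  have key : ∀ n : ℕ, ∃ b : ℤ_[p], ‖g b - z‖ ≤ (p : ℝ) ^ (-(n : ℤ)) := by
    intro n
    haveI : NeZero (p ^ n) := ⟨pow_ne_zero _ hp.out.pos.ne'⟩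
    have hinj : Function.Injective
        (fun a : ZMod (p ^ n) => toZModPow n (g ((a.val : ℤ_[p])))) := by
      intro a b hab
      have h1 : ‖g (a.val : ℤ_[p]) - g (b.val : ℤ_[p])‖ ≤ (p : ℝ) ^ (-(n : ℤ)) :=
        (toZModPow_eq_iff n _ _).1 hab
      rw [hg] at h1
      have h2 := (toZModPow_eq_iff n (a.val : ℤ_[p]) (b.val : ℤ_[p])).2 h1
      rwa [map_natCast, map_natCast, ZMod.natCast_val, ZMod.natCast_val,
        ZMod.cast_id, ZMod.cast_id] at h2
    obtain ⟨a, ha⟩ := Finite.surjective_of_injective hinj (toZModPow n z)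
    exact ⟨(a.val : ℤ_[p]), (toZModPow_eq_iff n _ _).1 ha⟩
  choose b hb using key
  have hgz : ∀ n, dist (g (b n)) z ≤ ((p : ℝ)⁻¹) ^ n := by
    intro n
    rw [dist_eq_norm, ← pow_neg_eq]
    exact hb n
  have hcauchy : CauchySeq b := by
    apply cauchySeq_of_le_geometric ((p : ℝ)⁻¹) 1 pinv_lt_one
    intro n
    have h2 : ‖b n - b (n + 1)‖ ≤ max ‖g (b n) - z‖ ‖z - g (b (n + 1))‖ := by
      rw [← hg]
      exact ultra_sub _ _ _
    rw [dist_eq_norm, one_mul, ← pow_neg_eq]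
    refine h2.trans (max_le (hb n) ?_)
    rw [norm_sub_rev]
    refine (hb (n + 1)).trans ?_
    apply zpow_le_zpow_right₀ (by exact_mod_cast hp.out.one_le)
    omega
  obtain ⟨x, hx⟩ := cauchySeq_tendsto_of_complete hcauchy
  have hgiso : Isometry g := Isometry.of_dist_eq fun a b => by
    rw [dist_eq_norm, dist_eq_norm, hg]
  have h1 : Filter.Tendsto (fun n => g (b n)) Filter.atTop (nhds (g x)) :=
    (hgiso.continuous.tendsto x).comp hx
  have h2 : Filter.Tendsto (fun n => g (b n)) Filter.atTop (nhds z) := by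
    rw [tendsto_iff_dist_tendsto_zero]
    exact squeeze_zero (fun n => dist_nonneg) hgz
      (tendsto_pow_atTop_nhds_zero_of_lt_one (inv_nonneg.2 p_pos.le) pinv_lt_one)
  exact ⟨x, tendsto_nhds_unique h1 h2⟩

variable {T : ℤ_[p] → ℤ_[p]}

/-- Scaling hypothesis. -/
def Scales (T : ℤ_[p] → ℤ_[p]) : Prop :=
  ∀ x y : ℤ_[p], ‖x - y‖ ≤ (p : ℝ)⁻¹ → ‖T x - T y‖ = (p : ℝ) * ‖x - y‖

lemma toZMod_natCast_val (a : ZMod p) : toZMod ((a.val : ℤ_[p])) = a := by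
  haveI : NeZero p := ⟨hp.out.pos.ne'⟩
  rw [map_natCast, ZMod.natCast_val, ZMod.cast_id]

/-- Key local lemma: preimage under `T` of a ball, intersected with a residue class,
is a smaller ball. -/
lemma key (hsc : Scales T) (a : ZMod p) (c : ℤ_[p]) (m : ℕ) :
    ∃ c' : ℤ_[p], toZMod c' = a ∧
      ∀ x : ℤ_[p], (toZMod x = a ∧ ‖T x - c‖ ≤ (p : ℝ) ^ (-(m : ℤ))) ↔
        ‖x - c'‖ ≤ (p : ℝ) ^ (-((m : ℤ) + 1)) := by
  set g : ℤ_[p] → ℤ_[p] := fun b => T ((a.val : ℤ_[p]) + (p : ℤ_[p]) * b) with hgdef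
  have class_mem : ∀ b : ℤ_[p], toZMod ((a.val : ℤ_[p]) + (p : ℤ_[p]) * b) = a := by
    intro b
    haveI : NeZero p := ⟨hp.out.pos.ne'⟩
    simp [ZMod.natCast_self, ZMod.natCast_val, ZMod.cast_id]
  have hgiso : ∀ b b', ‖g b - g b'‖ = ‖b - b'‖ := by
    intro b b'
    have hd : ((a.val : ℤ_[p]) + (p : ℤ_[p]) * b) - ((a.val : ℤ_[p]) + (p : ℤ_[p]) * b')
        = (p : ℤ_[p]) * (b - b') := by ring
    have hnorm : ‖((a.val : ℤ_[p]) + (p : ℤ_[p]) * b) - ((a.val : ℤ_[p]) + (p : ℤ_[p]) * b')‖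
        = (p : ℝ)⁻¹ * ‖b - b'‖ := by
      rw [hd, norm_mul, PadicInt.norm_p]
    have hle : ‖((a.val : ℤ_[p]) + (p : ℤ_[p]) * b) - ((a.val : ℤ_[p]) + (p : ℤ_[p]) * b')‖
        ≤ (p : ℝ)⁻¹ := by
      rw [hnorm]
      calc (p : ℝ)⁻¹ * ‖b - b'‖ ≤ (p : ℝ)⁻¹ * 1 :=
            mul_le_mul_of_nonneg_left (PadicInt.norm_le_one _) (inv_nonneg.2 p_pos.le)
        _ = (p : ℝ)⁻¹ := mul_one _
    rw [hgdef]
    simp only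
    rw [hsc _ _ hle, hnorm, ← mul_assoc, mul_inv_cancel₀ p_pos.ne', one_mul]
  obtain ⟨b, hbc⟩ := surjective_of_isometry g hgiso c
  refine ⟨(a.val : ℤ_[p]) + (p : ℤ_[p]) * b, class_mem b, ?_⟩
  intro x
  set c' := (a.val : ℤ_[p]) + (p : ℤ_[p]) * b with hc'
  have hTc' : T c' = c := hbc
  have hstep : ∀ x : ℤ_[p], toZMod x = a →
      (‖T x - c‖ ≤ (p : ℝ) ^ (-(m : ℤ)) ↔ ‖x - c'‖ ≤ (p : ℝ) ^ (-((m : ℤ) + 1))) := by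
    intro x hx
    have hxc' : ‖x - c'‖ ≤ (p : ℝ)⁻¹ := by
      rw [← toZMod_eq_iff, hx, hc', class_mem b]
    have hT : ‖T x - c‖ = (p : ℝ) * ‖x - c'‖ := by
      rw [← hTc']
      exact hsc _ _ hxc'
    have hexp : (p : ℝ) ^ (-((m : ℤ) + 1)) = (p : ℝ) ^ (-(m : ℤ)) / p := by
      rw [neg_add, zpow_add₀ p_pos.ne' (-(m:ℤ)) (-1)]
      simp [div_eq_mul_inv]
    rw [hT, hexp, le_div_iff₀ p_pos, mul_comm]
  constructor
  · rintro ⟨hx, hball⟩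
    exact (hstep x hx).1 hball
  · intro h
    have hsmall : ‖x - c'‖ ≤ (p : ℝ)⁻¹ := by
      refine h.trans ?_
      calc (p:ℝ) ^ (-((m:ℤ)+1)) ≤ (p:ℝ) ^ (-1 : ℤ) :=
            zpow_le_zpow_right₀ (by exact_mod_cast hp.out.one_le) (by omega)
        _ = (p : ℝ)⁻¹ := by simp
    have hx : toZMod x = a := by
      rw [(toZMod_eq_iff x c').2 hsmall, hc', class_mem b]
    exact ⟨hx, (hstep x hx).2 h⟩

/-- Cylinder sets are balls. -/
lemma cylinder_ball (hsc : Scales T) (m : ℕ) (d : ℕ → ZMod p) :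
    ∃ c : ℤ_[p], {x : ℤ_[p] | ∀ n < m, toZMod (T^[n] x) = d n}
      = {x : ℤ_[p] | ‖x - c‖ ≤ (p : ℝ) ^ (-(m : ℤ))} := by
  induction m generalizing d with
  | zero =>
    refine ⟨0, ?_⟩
    ext x
    simp [PadicInt.norm_le_one]
  | succ m ih =>
    obtain ⟨c, hc⟩ := ih (fun n => d (n + 1))
    obtain ⟨c', -, hc'⟩ := key hsc (d 0) c m
    refine ⟨c', ?_⟩
    ext x
    simp only [Set.mem_setOf_eq]
    have hsplit : (∀ n < m + 1, toZMod (T^[n] x) = d n) ↔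
        (toZMod x = d 0 ∧ ∀ n < m, toZMod (T^[n] (T x)) = d (n + 1)) := by
      constructor
      · intro h
        refine ⟨h 0 (Nat.succ_pos m), fun n hn => ?_⟩
        rw [← Function.iterate_succ_apply]
        exact h (n + 1) (by omega)
      · rintro ⟨h0, h⟩ n hn
        cases n with
        | zero => simpa using h0
        | succ k =>
          rw [Function.iterate_succ_apply]
          exact h k (by omega)
    rw [hsplit]
    have : (∀ n < m, toZMod (T^[n] (T x)) = d (n + 1)) ↔
        ‖T x - c‖ ≤ (p : ℝ) ^ (-(m : ℤ)) := by
      have := Set.ext_iff.1 hc (T x)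
      simpa using this
    rw [this]
    have := hc' x
    rw [this]
    norm_num

section Measure

variable [MeasurableSpace ℤ_[p]] [BorelSpace ℤ_[p]]
variable (μ : Measure ℤ_[p]) [μ.IsAddHaarMeasure] [IsProbabilityMeasure μ]

/-- The ball of radius `p^{-m}` described by `toZModPow`. -/
def Bset (m : ℕ) (a : ZMod (p ^ m)) : Set ℤ_[p] := {x | toZModPow m x = a}

lemma toZModPow_natCast_val (m : ℕ) (a : ZMod (p ^ m)) :
    toZModPow m ((a.val : ℤ_[p])) = a := by
  haveI : NeZero (p ^ m) := ⟨pow_ne_zero _ hp.out.pos.ne'⟩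
  rw [map_natCast, ZMod.natCast_val, ZMod.cast_id]

lemma Bset_eq_closedBall (m : ℕ) (a : ZMod (p ^ m)) :
    Bset m a = Metric.closedBall ((a.val : ℤ_[p])) ((p : ℝ) ^ (-(m : ℤ))) := by
  ext x
  rw [Bset, Set.mem_setOf_eq, Metric.mem_closedBall, dist_eq_norm]
  conv_lhs => rw [← toZModPow_natCast_val m a]
  exact toZModPow_eq_iff m x _

lemma measurableSet_Bset (m : ℕ) (a : ZMod (p ^ m)) : MeasurableSet (Bset m a) := by
  rw [Bset_eq_closedBall]
  exact measurableSet_closedBall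

lemma measure_Bset (m : ℕ) (a : ZMod (p ^ m)) :
    μ (Bset m a) = ((p : ENNReal)⁻¹) ^ m := by
  haveI : NeZero (p ^ m) := ⟨pow_ne_zero _ hp.out.pos.ne'⟩
  -- all Bsets have the same measure
  have htrans : ∀ b : ZMod (p ^ m), μ (Bset m b) = μ (Bset m a) := by
    intro b
    have : Bset m b = (fun x => (((a - b).val : ℤ_[p])) + x) ⁻¹' (Bset m a) := by
      ext x
      simp only [Bset, Set.mem_setOf_eq, Set.mem_preimage, map_add,
        toZModPow_natCast_val]
      constructor
      · intro h; rw [h]; ring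
      · intro h
        have := congrArg (fun z => z - (a - b)) h
        simpa using by linear_combination h
    rw [this, measure_preimage_add]
  have hcover : (⋃ b : ZMod (p ^ m), Bset m b) = Set.univ := by
    ext x
    simp only [Set.mem_iUnion, Set.mem_univ, iff_true]
    exact ⟨toZModPow m x, rfl⟩
  have hdisj : Pairwise (Function.onFun Disjoint (fun b : ZMod (p ^ m) => Bset m b)) := by
    intro b b' hbb'
    simp only [Function.onFun, Set.disjoint_left]
    intro x hx hx'
    exact hbb' (hx ▸ hx' ▸ rfl)
  have hsum : ∑' b : ZMod (p ^ m), μ (Bset m b) = 1 := by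
    rw [← measure_iUnion hdisj (fun b => measurableSet_Bset m b), hcover, measure_univ]
  rw [tsum_fintype] at hsum
  simp only [htrans, Finset.sum_const, Finset.card_univ, ZMod.card, nsmul_eq_mul] at hsum
  push_cast at hsum
  have hp0 : ((p : ENNReal) ^ m) ≠ 0 := pow_ne_zero _ (by exact_mod_cast hp.out.pos.ne')
  have hptop : ((p : ENNReal) ^ m) ≠ ⊤ := by
    exact ENNReal.pow_ne_top (ENNReal.natCast_ne_top p)
  have := congrArg (fun z => ((p : ENNReal) ^ m)⁻¹ * z) hsum
  rw [← mul_assoc, ENNReal.inv_mul_cancel hp0 hptop, one_mul, mul_one] at this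
  rw [this, ← ENNReal.inv_pow]

lemma measure_ball' (m : ℕ) (c : ℤ_[p]) :
    μ {x : ℤ_[p] | ‖x - c‖ ≤ (p : ℝ) ^ (-(m : ℤ))} = ((p : ENNReal)⁻¹) ^ m := by
  have : {x : ℤ_[p] | ‖x - c‖ ≤ (p : ℝ) ^ (-(m : ℤ))} = Bset m (toZModPow m c) := by
    ext x
    rw [Bset, Set.mem_setOf_eq, Set.mem_setOf_eq]
    exact (toZModPow_eq_iff m x c).symm
  rw [this, measure_Bset]


end Measure

lemma setOf_eq_closedBall (c : ℤ_[p]) (r : ℝ) :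
    {x : ℤ_[p] | ‖x - c‖ ≤ r} = Metric.closedBall c r := by
  ext x
  simp [Metric.mem_closedBall, dist_eq_norm]

/-- The collection of closed balls of radius `p^{-m}`. -/
def CBalls (p : ℕ) [Fact p.Prime] : Set (Set ℤ_[p]) :=
  {s | ∃ (m : ℕ) (c : ℤ_[p]), s = {x | ‖x - c‖ ≤ (p : ℝ) ^ (-(m : ℤ))}}

lemma isPiSystem_CBalls : IsPiSystem (CBalls p) := by
  rintro s ⟨m, c, rfl⟩ t ⟨m', c', rfl⟩ hne
  obtain ⟨x, hxs, hxt⟩ := hne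
  simp only [Set.mem_setOf_eq] at hxs hxt
  rcases le_total m m' with h | h
  · -- p^{-m'} ≤ p^{-m}, so t ⊆ s and s ∩ t = t
    have hsub : {x : ℤ_[p] | ‖x - c'‖ ≤ (p : ℝ) ^ (-(m' : ℤ))}
        ⊆ {x : ℤ_[p] | ‖x - c‖ ≤ (p : ℝ) ^ (-(m : ℤ))} := by
      intro y hy
      simp only [Set.mem_setOf_eq] at hy ⊢
      have hm : (p : ℝ) ^ (-(m' : ℤ)) ≤ (p : ℝ) ^ (-(m : ℤ)) :=
        zpow_le_zpow_right₀ (by exact_mod_cast hp.out.one_le) (by omega)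
      have h1 : ‖y - x‖ ≤ (p : ℝ) ^ (-(m' : ℤ)) := by
        refine (ultra_sub y c' x).trans (max_le hy ?_)
        rw [norm_sub_rev]; exact hxt
      refine (ultra_sub y x c).trans (max_le (h1.trans hm) hxs)
    rw [Set.inter_eq_right.2 hsub]
    exact ⟨m', c', rfl⟩
  · have hsub : {x : ℤ_[p] | ‖x - c‖ ≤ (p : ℝ) ^ (-(m : ℤ))}
        ⊆ {x : ℤ_[p] | ‖x - c'‖ ≤ (p : ℝ) ^ (-(m' : ℤ))} := by
      intro y hy
      simp only [Set.mem_setOf_eq] at hy ⊢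
      have hm : (p : ℝ) ^ (-(m : ℤ)) ≤ (p : ℝ) ^ (-(m' : ℤ)) :=
        zpow_le_zpow_right₀ (by exact_mod_cast hp.out.one_le) (by omega)
      have h1 : ‖y - x‖ ≤ (p : ℝ) ^ (-(m : ℤ)) := by
        refine (ultra_sub y c x).trans (max_le hy ?_)
        rw [norm_sub_rev]; exact hxs
      refine (ultra_sub y x c').trans (max_le (h1.trans hm) hxt)
    rw [Set.inter_eq_left.2 hsub]
    exact ⟨m, c, rfl⟩

section Gen

variable [MeasurableSpace ℤ_[p]] [BorelSpace ℤ_[p]]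

lemma Bset_mem_CBalls (m : ℕ) (a : ZMod (p ^ m)) : Bset m a ∈ CBalls p := by
  refine ⟨m, (a.val : ℤ_[p]), ?_⟩
  rw [Bset_eq_closedBall, setOf_eq_closedBall]

lemma measurableSpace_eq :
    (inferInstance : MeasurableSpace ℤ_[p]) = .generateFrom (CBalls p) := by
  refine le_antisymm ?_ ?_
  · rw [BorelSpace.measurable_eq (α := ℤ_[p])]
    show MeasurableSpace.generateFrom {s : Set ℤ_[p] | IsOpen s} ≤ _
    refine MeasurableSpace.generateFrom_le fun U hU => ?_
    have hrep : U = ⋃ i ∈ {i : Σ m : ℕ, ZMod (p ^ m) | Bset i.1 i.2 ⊆ U},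
        Bset i.1 i.2 := by
      ext x
      simp only [Set.mem_iUnion, Set.mem_setOf_eq]
      constructor
      · intro hx
        obtain ⟨ε, hε, hball⟩ := Metric.isOpen_iff.1 (by exact hU) x hx
        obtain ⟨m, hm⟩ := PadicInt.exists_pow_neg_lt p hε
        refine ⟨⟨m, toZModPow m x⟩, ?_, rfl⟩
        intro y hy
        apply hball
        rw [Metric.mem_ball, dist_eq_norm]
        have : toZModPow m y = toZModPow m x := hy
        exact lt_of_le_of_lt ((toZModPow_eq_iff m y x).1 this) hm
      · rintro ⟨i, hiU, hx⟩
        exact hiU hx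
    rw [hrep]
    exact MeasurableSet.biUnion (Set.to_countable _)
      (fun i _ => MeasurableSpace.measurableSet_generateFrom (Bset_mem_CBalls i.1 i.2))
  · refine MeasurableSpace.generateFrom_le ?_
    rintro s ⟨m, c, rfl⟩
    rw [setOf_eq_closedBall]
    exact measurableSet_closedBall

lemma measurableSet_cball (m : ℕ) (c : ℤ_[p]) :
    MeasurableSet {x : ℤ_[p] | ‖x - c‖ ≤ (p : ℝ) ^ (-(m : ℤ))} := by
  rw [setOf_eq_closedBall]
  exact measurableSet_closedBall

end Gen

lemma continuous_of_scales (hsc : Scales T) : Continuous T := by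
  rw [Metric.continuous_iff]
  intro x ε hε
  refine ⟨min ((p : ℝ)⁻¹) (ε / p), lt_min (inv_pos.2 p_pos) (div_pos hε p_pos), fun y hy => ?_⟩
  have h1 : ‖y - x‖ ≤ (p : ℝ)⁻¹ := by
    rw [← dist_eq_norm]
    exact le_of_lt (lt_of_lt_of_le hy (min_le_left _ _))
  rw [dist_eq_norm] at hy ⊢
  rw [hsc y x h1]
  calc (p : ℝ) * ‖y - x‖ < (p : ℝ) * (ε / p) :=
        mul_lt_mul_of_pos_left (lt_of_lt_of_le hy (min_le_right _ _)) p_pos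
    _ = ε := by
        rw [mul_comm]
        exact div_mul_cancel₀ ε p_pos.ne'

section MP

variable [MeasurableSpace ℤ_[p]] [BorelSpace ℤ_[p]]
variable (μ : Measure ℤ_[p]) [μ.IsAddHaarMeasure] [IsProbabilityMeasure μ]

lemma measurePreserving_of_scales (hsc : Scales T) : MeasurePreserving T μ μ := by
  have hmeas : Measurable T := (continuous_of_scales hsc).measurable
  refine ⟨hmeas, ?_⟩
  haveI : IsProbabilityMeasure (μ.map T) := Measure.isProbabilityMeasure_map hmeas.aemeasurable
  refine MeasureTheory.ext_of_generate_finite (CBalls p) measurableSpace_eq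
    isPiSystem_CBalls ?_ (by simp)
  rintro s ⟨m, c, rfl⟩
  rw [Measure.map_apply hmeas (measurableSet_cball m c)]
  choose c' hmem hc' using fun a : ZMod p => key hsc a c m
  have hrep : T ⁻¹' {x | ‖x - c‖ ≤ (p : ℝ) ^ (-(m : ℤ))}
      = ⋃ a : ZMod p, {x : ℤ_[p] | ‖x - c' a‖ ≤ (p : ℝ) ^ (-((m : ℤ) + 1))} := by
    ext x
    simp only [Set.mem_preimage, Set.mem_setOf_eq, Set.mem_iUnion]
    constructor
    · intro hx
      exact ⟨toZMod x, (hc' (toZMod x) x).1 ⟨rfl, hx⟩⟩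
    · rintro ⟨a, ha⟩
      exact ((hc' a x).2 ha).2
  have hdisj : Pairwise (Function.onFun Disjoint
      (fun a : ZMod p => {x : ℤ_[p] | ‖x - c' a‖ ≤ (p : ℝ) ^ (-((m : ℤ) + 1))})) := by
    intro a b hab
    simp only [Function.onFun, Set.disjoint_left]
    intro x hx hx'
    have h1 : toZMod x = a := ((hc' a x).2 hx).1
    have h2 : toZMod x = b := ((hc' b x).2 hx').1
    exact hab (h1 ▸ h2 ▸ rfl)
  have hexp : (-((m : ℤ) + 1)) = (-(((m + 1 : ℕ)) : ℤ)) := by push_cast; ring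
  have hmeas' : ∀ a : ZMod p,
      MeasurableSet {x : ℤ_[p] | ‖x - c' a‖ ≤ (p : ℝ) ^ (-((m : ℤ) + 1))} := by
    intro a
    rw [hexp]
    exact measurableSet_cball (m + 1) (c' a)
  rw [hrep, measure_iUnion hdisj hmeas']
  have hval : ∀ a : ZMod p,
      μ {x : ℤ_[p] | ‖x - c' a‖ ≤ (p : ℝ) ^ (-((m : ℤ) + 1))}
        = ((p : ENNReal)⁻¹) ^ (m + 1) := by
    intro a
    rw [hexp]
    exact measure_ball' μ (m + 1) (c' a)
  simp only [hval]
  rw [tsum_fintype]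
  simp only [Finset.sum_const, Finset.card_univ, ZMod.card, nsmul_eq_mul]
  rw [measure_ball' μ m c, pow_succ]
  have : (p : ENNReal) * ((p : ENNReal)⁻¹ ^ m * (p : ENNReal)⁻¹)
      = ((p : ENNReal) * (p : ENNReal)⁻¹) * (p : ENNReal)⁻¹ ^ m := by ring
  rw [this, ENNReal.mul_inv_cancel (by exact_mod_cast hp.out.pos.ne')
    (ENNReal.natCast_ne_top p), one_mul]

lemma package (hsc : Scales T) :
    MeasurePreserving T μ μ ∧
      ∃ Φ : ℤ_[p] → (ℕ → ZMod p),
        Function.Bijective Φ ∧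
        (∀ x, Φ (T x) = fun n => Φ x (n + 1)) ∧
        (∀ (m : ℕ) (d : ℕ → ZMod p),
          μ {x | ∀ n < m, Φ x n = d n} = ((p : ENNReal)⁻¹) ^ m) := by
  refine ⟨measurePreserving_of_scales μ hsc, fun x n => toZMod (T^[n] x), ?_, ?_, ?_⟩
  · constructor
    · -- injective
      intro x y hxy
      have hball : ∀ m : ℕ, ‖x - y‖ ≤ (p : ℝ) ^ (-(m : ℤ)) := by
        intro m
        obtain ⟨c, hc⟩ := cylinder_ball hsc m (fun n => toZMod (T^[n] y))
        have hx : x ∈ {z : ℤ_[p] | ∀ n < m, toZMod (T^[n] z) = toZMod (T^[n] y)} :=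
          fun n _ => congrFun hxy n
        have hy : y ∈ {z : ℤ_[p] | ∀ n < m, toZMod (T^[n] z) = toZMod (T^[n] y)} :=
          fun n _ => rfl
        rw [hc] at hx hy
        refine (ultra_sub x c y).trans (max_le hx ?_)
        rw [norm_sub_rev]; exact hy
      by_contra hne
      have hpos : 0 < ‖x - y‖ := by
        simp only [norm_pos_iff]
        exact sub_ne_zero_of_ne hne
      obtain ⟨m, hm⟩ := PadicInt.exists_pow_neg_lt p hpos
      exact absurd (hball m) (not_le.2 hm)
    · -- surjective
      intro d
      set t : ℕ → Set ℤ_[p] := fun m => {x | ∀ n < m, toZMod (T^[n] x) = d n} with ht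
      have hsub : ∀ m, t (m + 1) ⊆ t m := fun m x hx n hn => hx n (by omega)
      have hballs : ∀ m, ∃ c, t m = {x : ℤ_[p] | ‖x - c‖ ≤ (p : ℝ) ^ (-(m : ℤ))} :=
        fun m => cylinder_ball hsc m d
      have hne : ∀ m, (t m).Nonempty := by
        intro m
        obtain ⟨c, hc⟩ := hballs m
        refine ⟨c, ?_⟩
        rw [hc]
        simp [zpow_nonneg p_pos.le]
      have hclosed : ∀ m, IsClosed (t m) := by
        intro m
        obtain ⟨c, hc⟩ := hballs m
        rw [hc, setOf_eq_closedBall]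
        exact Metric.isClosed_closedBall
      have hcompact : ∀ m, IsCompact (t m) := fun m => (hclosed m).isCompact
      obtain ⟨x, hx⟩ := IsCompact.nonempty_iInter_of_sequence_nonempty_isCompact_isClosed
        t hsub hne (hcompact 0) hclosed
      refine ⟨x, funext fun n => ?_⟩
      have := Set.mem_iInter.1 hx (n + 1)
      exact this n (by omega)
  · intro x
    funext n
    simp [Function.iterate_succ_apply]
  · intro m d
    obtain ⟨c, hc⟩ := cylinder_ball hsc m d
    rw [hc, measure_ball']

end MP

/-! ### Algebraic norm lemmas -/

lemma norm_eval_sub_le (F : Polynomial ℤ_[p]) (x y : ℤ_[p]) :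
    ‖F.eval x - F.eval y‖ ≤ ‖x - y‖ := by
  obtain ⟨k, hk⟩ := F.sub_dvd_eval_sub x y
  rw [hk, norm_mul]
  calc ‖x - y‖ * ‖k‖ ≤ ‖x - y‖ * 1 :=
        mul_le_mul_of_nonneg_left (PadicInt.norm_le_one k) (norm_nonneg _)
    _ = ‖x - y‖ := mul_one _

lemma norm_prod_eq_one {s : Finset ℕ} {f : ℕ → ℤ_[p]} (h : ∀ i ∈ s, ‖f i‖ = 1) :
    ‖∏ i ∈ s, f i‖ = 1 := by
  induction s using Finset.cons_induction with
  | empty => simp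
  | cons a s ha ih =>
    rw [Finset.prod_cons, norm_mul, h a (Finset.mem_cons_self a s),
      ih (fun i hi => h i (Finset.mem_cons_of_mem hi)), one_mul]

lemma norm_eq_one_of_ne_residue {x : ℤ_[p]} {i : ℕ} (hi : i < p)
    (hne : i ≠ (toZMod x).val) : ‖x - (i : ℤ_[p])‖ = 1 := by
  haveI : NeZero p := ⟨hp.out.pos.ne'⟩
  set i₀ : ℕ := (toZMod x).val with hi₀
  have hi₀lt : i₀ < p := ZMod.val_lt _
  have h1 : ‖x - (i₀ : ℤ_[p])‖ ≤ (p : ℝ)⁻¹ := by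
    rw [← toZMod_eq_iff]
    exact (toZMod_natCast_val (toZMod x)).symm
  have h2 : ‖((((i₀ : ℤ) - i : ℤ)) : ℤ_[p])‖ = 1 := by
    have hle : ‖((((i₀ : ℤ) - i : ℤ)) : ℤ_[p])‖ ≤ 1 := PadicInt.norm_le_one _
    have hnlt : ¬ ‖((((i₀ : ℤ) - i : ℤ)) : ℤ_[p])‖ < 1 := by
      rw [PadicInt.norm_int_lt_one_iff_dvd]
      intro hdvd
      have habs : |(i₀ : ℤ) - i| < p := by
        rw [abs_lt]
        omega
      have h0 : (i₀ : ℤ) - i = 0 := Int.eq_zero_of_abs_lt_dvd hdvd habs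
      omega
    exact le_antisymm hle (not_lt.1 hnlt)
  have hsplit : x - (i : ℤ_[p]) = (x - (i₀ : ℤ_[p])) + ((((i₀ : ℤ) - i : ℤ)) : ℤ_[p]) := by
    push_cast
    ring
  have hlt : ‖x - (i₀ : ℤ_[p])‖ < ‖((((i₀ : ℤ) - i : ℤ)) : ℤ_[p])‖ := by
    rw [h2]
    exact lt_of_le_of_lt h1 pinv_lt_one
  rw [hsplit, PadicInt.norm_add_eq_max_of_ne (ne_of_lt hlt), h2]
  rw [h2] at hlt
  exact max_eq_right (le_of_lt hlt)


lemma norm_prod_sub_prod {x y : ℤ_[p]} (hxy : ‖x - y‖ ≤ (p : ℝ)⁻¹) :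
    ‖(∏ i ∈ Finset.range p, (x - (i : ℤ_[p])))
      - ∏ i ∈ Finset.range p, (y - (i : ℤ_[p]))‖ = ‖x - y‖ := by
  by_cases hne : x = y
  · simp [hne]
  haveI : NeZero p := ⟨hp.out.pos.ne'⟩
  set i₀ : ℕ := (toZMod x).val with hi₀
  have hi₀mem : i₀ ∈ Finset.range p := Finset.mem_range.2 (ZMod.val_lt _)
  have hyx : toZMod y = toZMod x := (toZMod_eq_iff y x).2 (by rwa [norm_sub_rev])
  set A : ℤ_[p] := ∏ i ∈ (Finset.range p).erase i₀, (x - (i : ℤ_[p])) with hA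
  set B : ℤ_[p] := ∏ i ∈ (Finset.range p).erase i₀, (y - (i : ℤ_[p])) with hB
  have hPx : ∏ i ∈ Finset.range p, (x - (i : ℤ_[p])) = (x - (i₀ : ℤ_[p])) * A :=
    (Finset.mul_prod_erase _ _ hi₀mem).symm
  have hPy : ∏ i ∈ Finset.range p, (y - (i : ℤ_[p])) = (y - (i₀ : ℤ_[p])) * B :=
    (Finset.mul_prod_erase _ _ hi₀mem).symm
  have hnormA : ‖A‖ = 1 := by
    apply norm_prod_eq_one
    intro i hi
    obtain ⟨hne', hmem⟩ := Finset.mem_erase.1 hi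
    exact norm_eq_one_of_ne_residue (Finset.mem_range.1 hmem) hne'
  have hAB : ‖A - B‖ ≤ ‖x - y‖ := by
    set G : Polynomial ℤ_[p] :=
      ∏ i ∈ (Finset.range p).erase i₀, (Polynomial.X - Polynomial.C (i : ℤ_[p])) with hG
    have hevalx : G.eval x = A := by
      rw [hG, Polynomial.eval_prod]
      simp [hA]
    have hevaly : G.eval y = B := by
      rw [hG, Polynomial.eval_prod]
      simp [hB]
    rw [← hevalx, ← hevaly]
    exact norm_eval_sub_le G x y
  have hyi₀ : ‖y - (i₀ : ℤ_[p])‖ ≤ (p : ℝ)⁻¹ := by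
    rw [← toZMod_eq_iff, hyx, hi₀]
    exact (toZMod_natCast_val (toZMod x)).symm
  have hid : (x - (i₀ : ℤ_[p])) * A - (y - (i₀ : ℤ_[p])) * B
      = (x - y) * A + (y - (i₀ : ℤ_[p])) * (A - B) := by ring
  have hxy0 : 0 < ‖x - y‖ := by
    simpa [norm_pos_iff] using sub_ne_zero_of_ne hne
  have hlt : ‖(y - (i₀ : ℤ_[p])) * (A - B)‖ < ‖(x - y) * A‖ := by
    rw [norm_mul, norm_mul, hnormA, mul_one]
    calc ‖y - (i₀ : ℤ_[p])‖ * ‖A - B‖ ≤ (p : ℝ)⁻¹ * ‖x - y‖ :=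
          mul_le_mul hyi₀ hAB (norm_nonneg _) (inv_nonneg.2 p_pos.le)
      _ < 1 * ‖x - y‖ := mul_lt_mul_of_pos_right pinv_lt_one hxy0
      _ = ‖x - y‖ := one_mul _
  rw [hPx, hPy, hid, PadicInt.norm_add_eq_max_of_ne (ne_of_lt hlt).symm,
    max_eq_left (le_of_lt hlt), norm_mul, hnormA, mul_one]


lemma norm_le_of_dvd {a b : ℤ_[p]} (h : a ∣ b) : ‖b‖ ≤ ‖a‖ := by
  obtain ⟨k, hk⟩ := h
  rw [hk, norm_mul]
  calc ‖a‖ * ‖k‖ ≤ ‖a‖ * 1 :=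
        mul_le_mul_of_nonneg_left (PadicInt.norm_le_one k) (norm_nonneg _)
    _ = ‖a‖ := mul_one _

lemma norm_factorial_Q : ‖((p.factorial : ℕ) : ℚ_[p])‖ = (p : ℝ)⁻¹ := by
  have hfact : p.factorial = p * (p - 1).factorial := by
    have h1 : p = (p - 1) + 1 := by
      have := hp.out.pos; omega
    conv_lhs => rw [h1]
    rw [Nat.factorial_succ, ← h1]
  have hsub : ‖(((p - 1).factorial : ℕ) : ℚ_[p])‖ = 1 := by
    have hle : ‖(((p - 1).factorial : ℕ) : ℚ_[p])‖ ≤ 1 := by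
      have := Padic.norm_int_le_one (p := p) ((p - 1).factorial : ℤ)
      simpa using this
    have hnlt : ¬ ‖(((p - 1).factorial : ℕ) : ℚ_[p])‖ < 1 := by
      intro hlt
      have h2 : ‖((((p - 1).factorial : ℤ)) : ℚ_[p])‖ < 1 := by
        simpa using hlt
      rw [Padic.norm_intCast_lt_one_iff] at h2
      have h3 : p ∣ (p - 1).factorial := by exact_mod_cast h2
      have h4 := (Nat.Prime.dvd_factorial hp.out).1 h3
      have := hp.out.one_lt; omega
    exact le_antisymm hle (not_lt.1 hnlt)
  rw [hfact, Nat.cast_mul, norm_mul, hsub, mul_one, Padic.norm_p]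

lemma coe_prod_linear (z : ℤ_[p]) :
    ((∏ i ∈ Finset.range p, (z - (i : ℤ_[p])) : ℤ_[p]) : ℚ_[p])
      = ∏ i ∈ Finset.range p, ((z : ℚ_[p]) - (i : ℚ_[p])) := by
  rw [show ((∏ i ∈ Finset.range p, (z - (i : ℤ_[p])) : ℤ_[p]) : ℚ_[p])
      = (PadicInt.Coe.ringHom) (∏ i ∈ Finset.range p, (z - (i : ℤ_[p]))) from rfl,
    map_prod]
  apply Finset.prod_congr rfl
  intro i _
  push_cast
  rfl

lemma scales_of_hT {u : ℤ_[p]} (hu : ‖u‖ = 1) (F : Polynomial ℤ_[p]) {T : ℤ_[p] → ℤ_[p]}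
    (hT : ∀ x : ℤ_[p], (T x : ℚ_[p]) =
      (u : ℚ_[p]) * ((∏ i ∈ Finset.range p, ((x : ℚ_[p]) - (i : ℚ_[p]))) /
        ((p.factorial : ℕ) : ℚ_[p])) + ((F.eval x : ℤ_[p]) : ℚ_[p])) :
    Scales T := by
  intro x y hxy
  by_cases heq : x = y
  · simp [heq]
  have hxy0 : 0 < ‖x - y‖ := by
    simpa [norm_pos_iff] using sub_ne_zero_of_ne heq
  set D : ℤ_[p] := (∏ i ∈ Finset.range p, (x - (i : ℤ_[p])))
    - ∏ i ∈ Finset.range p, (y - (i : ℤ_[p])) with hD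
  set E : ℤ_[p] := F.eval x - F.eval y with hE
  have hc0 : ((p.factorial : ℕ) : ℚ_[p]) ≠ 0 := by
    exact_mod_cast Nat.cast_ne_zero.2 (Nat.factorial_ne_zero p)
  have hkey : ((T x - T y : ℤ_[p]) : ℚ_[p])
      = (u : ℚ_[p]) * (D : ℚ_[p]) / ((p.factorial : ℕ) : ℚ_[p]) + (E : ℚ_[p]) := by
    push_cast
    rw [hT x, hT y, ← coe_prod_linear x, ← coe_prod_linear y]
    rw [hD, hE]
    push_cast
    field_simp
    ring
  have hnorm1 : ‖(u : ℚ_[p]) * (D : ℚ_[p]) / ((p.factorial : ℕ) : ℚ_[p])‖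
      = (p : ℝ) * ‖x - y‖ := by
    rw [norm_div, norm_mul, norm_factorial_Q, PadicInt.padic_norm_e_of_padicInt,
      PadicInt.padic_norm_e_of_padicInt, hu, one_mul, hD, norm_prod_sub_prod hxy,
      div_eq_mul_inv, inv_inv, mul_comm]
  have hnorm2 : ‖(E : ℚ_[p])‖ < (p : ℝ) * ‖x - y‖ := by
    rw [PadicInt.padic_norm_e_of_padicInt, hE]
    calc ‖F.eval x - F.eval y‖ ≤ ‖x - y‖ := norm_eval_sub_le F x y
      _ = 1 * ‖x - y‖ := (one_mul _).symm
      _ < (p : ℝ) * ‖x - y‖ := by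
          apply mul_lt_mul_of_pos_right _ hxy0
          exact_mod_cast hp.out.one_lt
  rw [PadicInt.norm_def, hkey, Padic.add_eq_max_of_ne
      (ne_of_lt (lt_of_lt_of_le hnorm2 hnorm1.ge)).symm,
    max_eq_left (le_of_lt (lt_of_lt_of_le hnorm2 hnorm1.ge)), hnorm1]

lemma scales_of_hS {S : ℤ_[p] → ℤ_[p]}
    (hS : ∀ x : ℤ_[p], (S x : ℚ_[p]) = ((x : ℚ_[p]) ^ p - (x : ℚ_[p])) / (p : ℚ_[p])) :
    Scales S := by
  intro x y hxy
  set Sg : ℤ_[p] := ∑ i ∈ Finset.range p, x ^ i * y ^ (p - 1 - i) with hSgdef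
  have h1 : Sg * (x - y) = x ^ p - y ^ p := geom_sum₂_mul x y p
  have hE : (x ^ p - x) - (y ^ p - y) = (x - y) * (Sg - 1) := by
    linear_combination -h1
  have hSgnorm : ‖Sg‖ ≤ (p : ℝ)⁻¹ := by
    have hterm : ∀ i ∈ Finset.range p, x ^ i * x ^ (p - 1 - i) = x ^ (p - 1) := by
      intro i hi
      rw [← pow_add]
      congr 1
      have := Finset.mem_range.1 hi
      omega
    have hdecomp : Sg - (p : ℤ_[p]) * x ^ (p - 1)
        = ∑ i ∈ Finset.range p, x ^ i * (y ^ (p - 1 - i) - x ^ (p - 1 - i)) := by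
      conv_rhs => rw [Finset.sum_congr rfl (fun i hi => mul_sub (x ^ i) _ _),
        Finset.sum_sub_distrib, Finset.sum_congr rfl hterm, Finset.sum_const,
        Finset.card_range, nsmul_eq_mul]
    have hdvd : (y - x) ∣ (Sg - (p : ℤ_[p]) * x ^ (p - 1)) := by
      rw [hdecomp]
      apply Finset.dvd_sum
      intro i _
      exact Dvd.dvd.mul_left (sub_dvd_pow_sub_pow y x _) _
    have h2 : ‖Sg - (p : ℤ_[p]) * x ^ (p - 1)‖ ≤ (p : ℝ)⁻¹ := by
      refine (norm_le_of_dvd hdvd).trans ?_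
      rwa [norm_sub_rev]
    have h3 : ‖(p : ℤ_[p]) * x ^ (p - 1)‖ ≤ (p : ℝ)⁻¹ := by
      rw [norm_mul, PadicInt.norm_p]
      calc (p : ℝ)⁻¹ * ‖x ^ (p - 1)‖ ≤ (p : ℝ)⁻¹ * 1 :=
            mul_le_mul_of_nonneg_left (PadicInt.norm_le_one _) (inv_nonneg.2 p_pos.le)
        _ = (p : ℝ)⁻¹ := mul_one _
    calc ‖Sg‖ = ‖(Sg - (p : ℤ_[p]) * x ^ (p - 1)) + (p : ℤ_[p]) * x ^ (p - 1)‖ := by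
          congr 1; ring
      _ ≤ max ‖Sg - (p : ℤ_[p]) * x ^ (p - 1)‖ ‖(p : ℤ_[p]) * x ^ (p - 1)‖ :=
          PadicInt.nonarchimedean _ _
      _ ≤ (p : ℝ)⁻¹ := max_le h2 h3
  have hSg1 : ‖Sg - 1‖ = 1 := by
    have hne : ‖Sg‖ ≠ ‖(-1 : ℤ_[p])‖ := by
      rw [norm_neg, norm_one]
      exact ne_of_lt (lt_of_le_of_lt hSgnorm pinv_lt_one)
    rw [sub_eq_add_neg, PadicInt.norm_add_eq_max_of_ne hne, norm_neg, norm_one]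
    exact max_eq_right (le_of_lt (lt_of_le_of_lt hSgnorm pinv_lt_one))
  have hEnorm : ‖(x ^ p - x) - (y ^ p - y)‖ = ‖x - y‖ := by
    rw [hE, norm_mul, hSg1, mul_one]
  have hkey : ((S x - S y : ℤ_[p]) : ℚ_[p])
      = (((x ^ p - x) - (y ^ p - y) : ℤ_[p]) : ℚ_[p]) / (p : ℚ_[p]) := by
    push_cast
    rw [hS x, hS y]
    have hp0 : (p : ℚ_[p]) ≠ 0 := by
      exact_mod_cast Nat.cast_ne_zero.2 hp.out.pos.ne'
    field_simp
  rw [PadicInt.norm_def, hkey, norm_div, PadicInt.padic_norm_e_of_padicInt,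
    Padic.norm_p, hEnorm, div_eq_mul_inv, inv_inv, mul_comm]


end Stmt15

open MeasureTheory

/-- For any `p`-adic unit `u` and polynomial `F ∈ ℤ_p[x]`, the map
`T(x) = u·C(x,p) + F(x)` scales distances by `p` at scale `1/p`, hence is a
measure-preserving transformation of `ℤ_p` isomorphic to the Bernoulli shift on
`(ℤ/pℤ)^ℕ`; in particular the Woodcock–Smart map `x ↦ (x^p - x)/p` is Bernoulli. -/
theorem stmt15 {p : ℕ} [Fact p.Prime]
    [MeasurableSpace ℤ_[p]] [BorelSpace ℤ_[p]]
    (μ : Measure ℤ_[p]) [μ.IsAddHaarMeasure] [IsProbabilityMeasure μ]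
    (u : ℤ_[p]) (hu : ‖u‖ = 1) (F : Polynomial ℤ_[p])
    (T : ℤ_[p] → ℤ_[p])
    (hT : ∀ x : ℤ_[p], (T x : ℚ_[p]) =
      (u : ℚ_[p]) * ((∏ i ∈ Finset.range p, ((x : ℚ_[p]) - (i : ℚ_[p]))) /
        ((Nat.factorial p : ℕ) : ℚ_[p])) + ((F.eval x : ℤ_[p]) : ℚ_[p])) :
    ((∀ x y : ℤ_[p], ‖x - y‖ ≤ (p : ℝ)⁻¹ → ‖T x - T y‖ = (p : ℝ) * ‖x - y‖) ∧
      MeasurePreserving T μ μ ∧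
      ∃ Φ : ℤ_[p] → (ℕ → ZMod p),
        Function.Bijective Φ ∧
        (∀ x, Φ (T x) = fun n => Φ x (n + 1)) ∧
        (∀ (m : ℕ) (d : ℕ → ZMod p),
          μ {x | ∀ n < m, Φ x n = d n} = ((p : ENNReal)⁻¹) ^ m)) ∧
    -- In particular, the Woodcock–Smart map x ↦ (x^p - x)/p is Bernoulli:
    (∀ S : ℤ_[p] → ℤ_[p],
      (∀ x : ℤ_[p], (S x : ℚ_[p]) = ((x : ℚ_[p]) ^ p - (x : ℚ_[p])) / (p : ℚ_[p])) →
      (∀ x y : ℤ_[p], ‖x - y‖ ≤ (p : ℝ)⁻¹ → ‖S x - S y‖ = (p : ℝ) * ‖x - y‖) ∧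
      MeasurePreserving S μ μ ∧
      ∃ Φ : ℤ_[p] → (ℕ → ZMod p),
        Function.Bijective Φ ∧
        (∀ x, Φ (S x) = fun n => Φ x (n + 1)) ∧
        (∀ (m : ℕ) (d : ℕ → ZMod p),
          μ {x | ∀ n < m, Φ x n = d n} = ((p : ENNReal)⁻¹) ^ m)) := by
  have hsc : Stmt15.Scales T := Stmt15.scales_of_hT hu F hT
  obtain ⟨hmp, hPhi⟩ := Stmt15.package μ hsc
  refine ⟨⟨hsc, hmp, hPhi⟩, ?_⟩
  intro S hS
  have hscS : Stmt15.Scales S := Stmt15.scales_of_hS hS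
  obtain ⟨hmpS, hPhiS⟩ := Stmt15.package μ hscS
  exact ⟨hscS, hmpS, hPhiS⟩
end
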